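/- arXiv:1602.07967 — 15 statements merged into one kernel-verified Lean document; each statement's English description precedes it below -/
import Mathlib

section
/- Let d ≥ 0 and t > 0 be integers. Let U ∈ M₂(ℝ) be the counterclockwise rotation matrix by angle π/(2t), i.e. U = [[cos(π/(2t)), −sin(π/(2t))], [sin(π/(2t)), cos(π/(2t))]], and let u₀ = (cos(dπ/(2t)), −sin(dπ/(2t))) ∈ ℝ². Then U^d u₀ = (1, 0) and U^{d+t} u₀ = (0, 1). Consequently, the 2-state MCQFA with initial state u₀, transition matrix U for the single symbol a, and accepting coordinate 1 accepts a^d with probability 1 and accepts a^{d+t} with probability 0, i.e. it separates the unary pair (a^d, a^{d+t}) exactly. -/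
open Real Matrix

lemma rot_pow (θ : ℝ) (n : ℕ) :
    (!![Real.cos θ, -Real.sin θ; Real.sin θ, Real.cos θ] : Matrix (Fin 2) (Fin 2) ℝ) ^ n =
      !![Real.cos (n * θ), -Real.sin (n * θ); Real.sin (n * θ), Real.cos (n * θ)] := by
  induction n with
  | zero => simp [Matrix.one_fin_two]
  | succ n ih =>
    rw [pow_succ, ih]
    have : ((n : ℝ) + 1) * θ = n * θ + θ := by ring
    push_cast
    rw [this, Real.cos_add, Real.sin_add]
    ext i j
    fin_cases i <;> fin_cases j <;>
      simp [Matrix.mul_apply, Fin.sum_univ_two] <;> ring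

/-- the 2-state MCQFA `R_{d,t}` (rotation by `π/(2t)`, initial state obtained
by a clockwise rotation by `dπ/(2t)` from `(1,0)`, accepting coordinate 1) separates the
unary pair `(a^d, a^{d+t})` exactly. -/
theorem stmt0 (d t : ℕ) (ht : 0 < t) :
    let θ : ℝ := π / (2 * t)
    let U : Matrix (Fin 2) (Fin 2) ℝ :=
      !![Real.cos θ, -Real.sin θ; Real.sin θ, Real.cos θ]
    let u₀ : Fin 2 → ℝ := ![Real.cos (d * θ), -Real.sin (d * θ)]
    (U ^ d).mulVec u₀ = ![1, 0] ∧
    (U ^ (d + t)).mulVec u₀ = ![0, 1] ∧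
    ((U ^ d).mulVec u₀ 0) ^ 2 = 1 ∧
    ((U ^ (d + t)).mulVec u₀ 0) ^ 2 = 0 := by
  intro θ U u₀
  have ht' : (t : ℝ) ≠ 0 := Nat.cast_ne_zero.mpr ht.ne'
  have htθ : (t : ℝ) * θ = π / 2 := by
    field_simp [θ]
    simp only [θ]
    field_simp
  have pyth := Real.sin_sq_add_cos_sq ((d : ℝ) * θ)
  have h1 : (U ^ d).mulVec u₀ = ![1, 0] := by
    rw [rot_pow]
    ext i
    fin_cases i <;>
      simp [Matrix.mulVec, dotProduct, u₀, Fin.sum_univ_two] <;>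
      nlinarith [pyth]
  have h2 : (U ^ (d + t)).mulVec u₀ = ![0, 1] := by
    rw [rot_pow]
    have hc : Real.cos ((d + t : ℕ) * θ) = -Real.sin (d * θ) := by
      push_cast
      rw [add_mul, htθ, Real.cos_add_pi_div_two]
    have hs : Real.sin ((d + t : ℕ) * θ) = Real.cos (d * θ) := by
      push_cast
      rw [add_mul, htθ, Real.sin_add_pi_div_two]
    rw [hc, hs]
    ext i
    fin_cases i <;>
      simp [Matrix.mulVec, dotProduct, u₀, Fin.sum_univ_two] <;>
      nlinarith [pyth]
  refine ⟨h1, h2, ?_, ?_⟩ <;> simp [h1, h2]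
end

section
/- Let x and y be distinct words over an alphabet Σ such that |x|_σ = |y|_σ for every σ ∈ Σ (a hard pair; in particular |x| = |y|). Then there exist two distinct symbols σ, σ' ∈ Σ such that the words x' and y' obtained from x and y by deleting all symbols other than σ and σ' (i.e. filtering to the sub-alphabet {σ, σ'}) are distinct; moreover |x'|_σ = |y'|_σ and |x'|_{σ'} = |y'|_{σ'}, so (x', y') is a hard pair over the binary alphabet {σ, σ'}. -/
lemma filter_ne_of_ne {Sig : Type*} [DecidableEq Sig] :
    ∀ (x y : List Sig), x ≠ y → x.length = y.length →
    ∃ σ σ' : Sig, σ ≠ σ' ∧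
      x.filter (fun c => decide (c = σ ∨ c = σ')) ≠
        y.filter (fun c => decide (c = σ ∨ c = σ'))
  | [], [], h, _ => absurd rfl h
  | a :: xs, b :: ys, h, hl => by
    simp only [List.length_cons, Nat.add_right_cancel_iff] at hl
    by_cases hab : a = b
    · subst hab
      have hxs : xs ≠ ys := fun he => h (by rw [he])
      obtain ⟨σ, σ', hne, hf⟩ := filter_ne_of_ne xs ys hxs hl
      refine ⟨σ, σ', hne, ?_⟩
      by_cases ha : a = σ ∨ a = σ'
      · simp only [List.filter_cons, decide_eq_true ha]
        intro he
        exact hf (List.cons.injEq .. ▸ he).2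
      · simpa [List.filter_cons, ha] using hf
    · refine ⟨a, b, hab, ?_⟩
      have ha : a = a ∨ a = b := Or.inl rfl
      have hb : b = a ∨ b = b := Or.inr rfl
      rw [List.filter_cons_of_pos (by simp), List.filter_cons_of_pos (by simp)]
      intro he
      exact hab (List.cons.injEq .. ▸ he).1

/-- any hard pair over an arbitrary alphabet can be reduced, by filtering
to a suitable two-letter sub-alphabet, to a hard pair over a binary alphabet. -/
theorem stmt2 {Sig : Type*} [DecidableEq Sig] (x y : List Sig) (hxy : x ≠ y)
    (hhard : ∀ σ : Sig, x.count σ = y.count σ) :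
    ∃ σ σ' : Sig, σ ≠ σ' ∧
      x.filter (fun c => decide (c = σ ∨ c = σ')) ≠
        y.filter (fun c => decide (c = σ ∨ c = σ')) ∧
      (x.filter (fun c => decide (c = σ ∨ c = σ'))).count σ =
        (y.filter (fun c => decide (c = σ ∨ c = σ'))).count σ ∧
      (x.filter (fun c => decide (c = σ ∨ c = σ'))).count σ' =
        (y.filter (fun c => decide (c = σ ∨ c = σ'))).count σ' := by
  have hlen : x.length = y.length :=
    (List.perm_iff_count.mpr hhard).length_eq
  obtain ⟨σ, σ', hne, hf⟩ := filter_ne_of_ne x y hxy hlen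
  refine ⟨σ, σ', hne, hf, ?_, ?_⟩ <;>
    rw [List.count_filter (by simp), List.count_filter (by simp)] <;>
    exact hhard _
end

section
/- Let U_a, U_b be real orthogonal 2×2 matrices and u₀ ∈ ℝ². Let x and y be words over {a, b} such that each of x and y is a concatenation of the two-letter blocks aa and bb, and such that |x|_a = |y|_a and |x|_b = |y|_b. Then the final states coincide: U_{x_n}⋯U_{x₁} u₀ = U_{y_m}⋯U_{y₁} u₀. Consequently, for every choice of accepting coordinates the acceptance probabilities of x and y are equal, so no 2-state nondeterministic MCQFA with real entries can separate x and y. -/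
open Matrix

private def Jmat : Matrix (Fin 2) (Fin 2) ℝ := !![0,-1;1,0]

private lemma sq_special (A : Matrix (Fin 2) (Fin 2) ℝ) (hA : Aᵀ * A = 1) :
    ∃ α β : ℝ, A * A = α • (1 : Matrix (Fin 2) (Fin 2) ℝ) + β • Jmat := by
  have hA' : A * Aᵀ = 1 := mul_eq_one_comm.mp hA
  have h00 : (Aᵀ * A) 0 0 = (1 : Matrix (Fin 2) (Fin 2) ℝ) 0 0 := by rw [hA]
  have h01 : (Aᵀ * A) 0 1 = (1 : Matrix (Fin 2) (Fin 2) ℝ) 0 1 := by rw [hA]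
  have g01 : (A * Aᵀ) 0 1 = (1 : Matrix (Fin 2) (Fin 2) ℝ) 0 1 := by rw [hA']
  have g11 : (A * Aᵀ) 1 1 = (1 : Matrix (Fin 2) (Fin 2) ℝ) 1 1 := by rw [hA']
  simp [Matrix.mul_apply, Fin.sum_univ_two, Matrix.one_apply, Matrix.transpose_apply] at h00 h01 g01 g11
  refine ⟨A 0 0 * A 0 0 + A 0 1 * A 1 0, A 1 0 * (A 0 0 + A 1 1), ?_⟩
  ext i j
  fin_cases i <;> fin_cases j <;>
    simp [Jmat, Matrix.mul_apply, Fin.sum_univ_two, Matrix.one_apply] <;>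
    nlinarith [h00, h01, g01, g11]

private lemma special_comm (α β γ δ : ℝ) :
    Commute (α • (1 : Matrix (Fin 2) (Fin 2) ℝ) + β • Jmat)
      (γ • (1 : Matrix (Fin 2) (Fin 2) ℝ) + δ • Jmat) := by
  unfold Commute SemiconjBy
  ext i j
  fin_cases i <;> fin_cases j <;>
    simp [Jmat, Matrix.mul_apply, Fin.sum_univ_two, Matrix.one_apply] <;> ring

private lemma key (Ua Ub : Matrix (Fin 2) (Fin 2) ℝ)
    (hc : Commute (Ua * Ua) (Ub * Ub))
    (l : List (List (Fin 2))) (hl : ∀ w ∈ l, w = [0, 0] ∨ w = [1, 1]) :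
    ∃ p q : ℕ,
      (∀ u : Fin 2 → ℝ,
        l.flatten.foldl (fun v c => ((![Ua, Ub]) c).mulVec v) u =
          ((Ua * Ua) ^ p * (Ub * Ub) ^ q).mulVec u) ∧
      l.flatten.count 0 = 2 * p ∧ l.flatten.count 1 = 2 * q := by
  induction l with
  | nil => exact ⟨0, 0, by simp, by simp, by simp⟩
  | cons w rest ih =>
    obtain ⟨p, q, hfold, h0, h1⟩ := ih fun w hw => hl w (List.mem_cons_of_mem _ hw)
    rcases hl w (List.mem_cons_self) with hw | hw <;> subst hw
    · refine ⟨p + 1, q, ?_, ?_, ?_⟩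
      · intro u
        have : ((0 : Fin 2) :: 0 :: rest.flatten).foldl
            (fun v c => ((![Ua, Ub]) c).mulVec v) u =
            rest.flatten.foldl (fun v c => ((![Ua, Ub]) c).mulVec v)
              (Ua.mulVec (Ua.mulVec u)) := by simp
        rw [List.flatten_cons, List.cons_append, List.cons_append, List.nil_append, this,
          hfold, Matrix.mulVec_mulVec, Matrix.mulVec_mulVec]
        have hmm : (Ua * Ua) ^ p * (Ub * Ub) ^ q * (Ua * Ua)
            = (Ua * Ua) ^ (p + 1) * (Ub * Ub) ^ q := by
          rw [mul_assoc, ((hc.pow_right q).symm).eq, ← mul_assoc, ← pow_succ]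
        rw [mul_assoc ((Ua * Ua) ^ p * (Ub * Ub) ^ q) Ua Ua, hmm]
      · simp [List.count_cons, h0]; ring
      · simpa using h1
    · refine ⟨p, q + 1, ?_, ?_, ?_⟩
      · intro u
        have : ((1 : Fin 2) :: 1 :: rest.flatten).foldl
            (fun v c => ((![Ua, Ub]) c).mulVec v) u =
            rest.flatten.foldl (fun v c => ((![Ua, Ub]) c).mulVec v)
              (Ub.mulVec (Ub.mulVec u)) := by simp
        rw [List.flatten_cons, List.cons_append, List.cons_append, List.nil_append, this,
          hfold, Matrix.mulVec_mulVec, Matrix.mulVec_mulVec]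
        have hmm : (Ua * Ua) ^ p * (Ub * Ub) ^ q * (Ub * Ub)
            = (Ua * Ua) ^ p * (Ub * Ub) ^ (q + 1) := by
          rw [mul_assoc, ← pow_succ]
        rw [mul_assoc ((Ua * Ua) ^ p * (Ub * Ub) ^ q) Ub Ub, hmm]
      · simpa using h0
      · simp [List.count_cons, h1]; ring

/-- no 2-state MCQFA with real (orthogonal) matrices can separate
(even nondeterministically) two words built from the blocks `aa` and `bb` that have
the same number of `a`s and the same number of `b`s.  Here the alphabet `{a, b}` is
`Fin 2` with `a = 0` and `b = 1`. -/
theorem stmt4 (Ua Ub : Matrix (Fin 2) (Fin 2) ℝ)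
    (hUa : Uaᵀ * Ua = 1) (hUb : Ubᵀ * Ub = 1)
    (u₀ : Fin 2 → ℝ) (x y : List (Fin 2))
    (hx : ∃ l : List (List (Fin 2)), (∀ w ∈ l, w = [0, 0] ∨ w = [1, 1]) ∧ x = l.flatten)
    (hy : ∃ l : List (List (Fin 2)), (∀ w ∈ l, w = [0, 0] ∨ w = [1, 1]) ∧ y = l.flatten)
    (ha : x.count 0 = y.count 0) (hb : x.count 1 = y.count 1) :
    x.foldl (fun v c => ((![Ua, Ub]) c).mulVec v) u₀ =
      y.foldl (fun v c => ((![Ua, Ub]) c).mulVec v) u₀ ∧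
    ∀ S : Finset (Fin 2),
      ∑ j ∈ S, ((x.foldl (fun v c => ((![Ua, Ub]) c).mulVec v) u₀) j) ^ 2 =
      ∑ j ∈ S, ((y.foldl (fun v c => ((![Ua, Ub]) c).mulVec v) u₀) j) ^ 2 := by
  obtain ⟨αa, βa, hsa⟩ := sq_special Ua hUa
  obtain ⟨αb, βb, hsb⟩ := sq_special Ub hUb
  have hc : Commute (Ua * Ua) (Ub * Ub) := by
    rw [hsa, hsb]; exact special_comm _ _ _ _
  obtain ⟨lx, hlx, hxl⟩ := hx
  obtain ⟨ly, hly, hyl⟩ := hy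
  obtain ⟨p, q, hfx, hx0, hx1⟩ := key Ua Ub hc lx hlx
  obtain ⟨p', q', hfy, hy0, hy1⟩ := key Ua Ub hc ly hly
  subst hxl hyl
  have hp : p = p' := by omega
  have hq : q = q' := by omega
  have heq : lx.flatten.foldl (fun v c => ((![Ua, Ub]) c).mulVec v) u₀ =
      ly.flatten.foldl (fun v c => ((![Ua, Ub]) c).mulVec v) u₀ := by
    rw [hfx u₀, hfy u₀, hp, hq]
  exact ⟨heq, fun S => by rw [heq]⟩
end

section
/- Let x and y be any two distinct words over the alphabet {a, b}. Then there exist unitary matrices U_a, U_b ∈ U(2, ℂ), a unit vector u₀ ∈ ℂ², and a set S ⊆ {1, 2} of accepting coordinates such that the acceptance probability of y is 0 and the acceptance probability of x is strictly positive; that is, any pair of distinct words can be separated by a 2-state nondeterministic MCQFA. -/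
open Matrix

noncomputable section
namespace Stmt6Aux
open GaussianInt

def gen : Fin 2 → Matrix (Fin 2) (Fin 2) GaussianInt :=
  ![!![⟨3,4⟩, 0; 0, ⟨3,-4⟩], !![⟨3,0⟩, ⟨0,4⟩; ⟨0,4⟩, ⟨3,0⟩]]

def P : List (Fin 2) → Matrix (Fin 2) (Fin 2) GaussianInt
  | [] => 1
  | c :: w => P w * gen c

def ψ : GaussianInt →+* ZMod 5 := Zsqrtd.lift ⟨2, by decide⟩

instance : Fact (Nat.Prime 5) := ⟨by norm_num⟩

def rv : Fin 2 → (Fin 2 → ZMod 5) := ![![1,0], ![1,1]]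

def tc : Fin 2 → ZMod 5 := ![1, 3]

lemma psi_apply (a b : ℤ) : ψ (⟨a, b⟩ : GaussianInt) = (a : ZMod 5) + (b : ZMod 5) * 2 := by
  simp [ψ, Zsqrtd.lift]

lemma psi_gen (c : Fin 2) :
    ψ.mapMatrix (gen c) = tc c • vecMulVec (rv c) (rv c) := by
  fin_cases c <;>
    · ext i j
      fin_cases i <;> fin_cases j <;>
        simp [gen, tc, rv, psi_apply, vecMulVec_apply] <;> decide

lemma vecMulVec_mul_vecMulVec {R : Type*} [CommRing R] (u v u' v' : Fin 2 → R) :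
    vecMulVec u v * vecMulVec u' v' = (v ⬝ᵥ u') • vecMulVec u v' := by
  ext i j
  simp [vecMulVec_apply, mul_apply, dotProduct, Fin.sum_univ_two]
  ring

lemma struct (w : List (Fin 2)) (c : Fin 2) :
    ∃ (s : ZMod 5) (e : Fin 2), s ≠ 0 ∧
      ψ.mapMatrix (P (c :: w)) = s • vecMulVec (rv e) (rv c) := by
  induction w generalizing c with
  | nil =>
    refine ⟨tc c, c, ?_, ?_⟩
    · fin_cases c <;> decide
    · show ψ.mapMatrix (1 * gen c) = _
      rw [one_mul, psi_gen]
  | cons d w ih =>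
    obtain ⟨s, e, hs, hP⟩ := ih d
    refine ⟨s * ((rv d ⬝ᵥ rv c) * tc c), e, ?_, ?_⟩
    · have h1 : (rv d ⬝ᵥ rv c) * tc c ≠ 0 := by fin_cases d <;> fin_cases c <;> decide
      exact mul_ne_zero hs h1
    · show ψ.mapMatrix (P (d :: w) * gen c) = _
      rw [_root_.map_mul, hP, psi_gen, smul_mul_assoc, mul_smul_comm, vecMulVec_mul_vecMulVec,
        smul_smul, smul_smul]
      ring_nf

lemma det_gen (c : Fin 2) : (gen c).det = 25 := by
  fin_cases c <;> · rw [show (25 : GaussianInt) = ⟨25, 0⟩ from rfl]; simp [gen, Matrix.det_fin_two_of]; decide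

lemma det_P (w : List (Fin 2)) : (P w).det = 25 ^ w.length := by
  induction w with
  | nil => simp [P]
  | cons c w ih => rw [P, det_mul, ih, det_gen, List.length_cons, pow_succ]


def U (c : Fin 2) : Matrix (Fin 2) (Fin 2) ℂ :=
  (5 : ℂ)⁻¹ • (toComplex.mapMatrix (gen c))

lemma U_unitary (c : Fin 2) : U c ∈ Matrix.unitaryGroup (Fin 2) ℂ := by
  rw [Matrix.mem_unitaryGroup_iff]
  ext i j
  fin_cases c <;> fin_cases i <;> fin_cases j <;>
    simp [U, gen, Matrix.mul_apply, Fin.sum_univ_two, Matrix.conjTranspose_apply,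
      toComplex_def', Complex.ext_iff] <;> norm_num

lemma foldU (w : List (Fin 2)) (u : Fin 2 → ℂ) :
    w.foldl (fun v c => (U c).mulVec v) u
      = ((5:ℂ) ^ w.length)⁻¹ • (toComplex.mapMatrix (P w)).mulVec u := by
  induction w generalizing u with
  | nil => simp [P]
  | cons c w ih =>
    rw [List.foldl_cons, ih]
    show ((5:ℂ) ^ w.length)⁻¹ • (toComplex.mapMatrix (P w)).mulVec ((U c).mulVec u) = _
    rw [U, smul_mulVec, Matrix.mulVec_smul, mulVec_mulVec]
    rw [show toComplex.mapMatrix (P w) * toComplex.mapMatrix (gen c)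
        = toComplex.mapMatrix (P (c :: w)) by rw [P]; exact (_root_.map_mul _ _ _).symm]
    rw [smul_smul, List.length_cons, pow_succ, mul_inv]


lemma dot_self (v : Fin 2 → ℂ) :
    ((∑ j, ‖v j‖ ^ 2 : ℝ) : ℂ) = star v ⬝ᵥ v := by
  simp only [dotProduct, Fin.sum_univ_two, Pi.star_apply, Complex.star_def]
  rw [Complex.ofReal_add, Complex.sq_norm,
    Complex.sq_norm, ← Complex.mul_conj, ← Complex.mul_conj]
  ring

lemma mulVec_norm {M : Matrix (Fin 2) (Fin 2) ℂ} (hM : M ∈ Matrix.unitaryGroup (Fin 2) ℂ)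
    (v : Fin 2 → ℂ) :
    ∑ j, ‖(M.mulVec v) j‖ ^ 2 = ∑ j, ‖v j‖ ^ 2 := by
  have h : ((∑ j, ‖(M.mulVec v) j‖ ^ 2 : ℝ) : ℂ)
      = ((∑ j, ‖v j‖ ^ 2 : ℝ) : ℂ) := by
    rw [dot_self, dot_self, Matrix.star_mulVec, ← Matrix.dotProduct_mulVec,
      mulVec_mulVec, ← Matrix.star_eq_conjTranspose,
      Matrix.mem_unitaryGroup_iff'.mp hM, Matrix.one_mulVec]
  exact_mod_cast h

lemma fold_norm {W : Fin 2 → Matrix (Fin 2) (Fin 2) ℂ}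
    (hW : ∀ c, W c ∈ Matrix.unitaryGroup (Fin 2) ℂ) (w : List (Fin 2)) (u : Fin 2 → ℂ) :
    ∑ j, ‖(w.foldl (fun v c => (W c).mulVec v) u) j‖ ^ 2
      = ∑ j, ‖u j‖ ^ 2 := by
  induction w generalizing u with
  | nil => rfl
  | cons c w ih => rw [List.foldl_cons, ih, mulVec_norm (hW c)]

lemma par {v w : Fin 2 → ℂ} (h : v 0 * w 1 - v 1 * w 0 = 0) (hw : w ≠ 0) :
    ∃ a : ℂ, v = a • w := by
  by_cases h0 : w 0 = 0
  · have h1 : w 1 ≠ 0 := by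
      intro h1; apply hw; funext i; fin_cases i <;> simp [h0, h1]
    have hv0 : v 0 = 0 := by
      have := h; rw [h0, mul_zero, sub_zero] at this
      exact (mul_eq_zero.mp this).resolve_right h1
    refine ⟨v 1 / w 1, ?_⟩
    funext i; fin_cases i
    · show v 0 = v 1 / w 1 * w 0
      rw [hv0, h0, mul_zero]
    · show v 1 = v 1 / w 1 * w 1
      field_simp
  · refine ⟨v 0 / w 0, ?_⟩
    funext i; fin_cases i
    · show v 0 = v 0 / w 0 * w 0
      field_simp
    · show v 1 = v 0 / w 0 * w 1
      rw [div_mul_eq_mul_div, eq_div_iff h0]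
      linear_combination -h

lemma cross_exists (Nx Ny : Matrix (Fin 2) (Fin 2) ℂ) (hdet : Ny.det ≠ 0)
    (h0 : Nx 0 0 * Ny 1 0 - Nx 1 0 * Ny 0 0 = 0)
    (h1 : Nx 0 1 * Ny 1 1 - Nx 1 1 * Ny 0 1 = 0)
    (h2 : (Nx 0 0 + Nx 0 1) * (Ny 1 0 + Ny 1 1) - (Nx 1 0 + Nx 1 1) * (Ny 0 0 + Ny 0 1) = 0) :
    ∃ c : ℂ, Nx = c • Ny := by
  rw [Matrix.det_fin_two] at hdet
  have hc0 : (![Ny 0 0, Ny 1 0] : Fin 2 → ℂ) ≠ 0 := by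
    intro hz
    have e0 : Ny 0 0 = 0 := congrFun hz 0
    have e1 : Ny 1 0 = 0 := congrFun hz 1
    apply hdet; rw [e0, e1]; ring
  have hc1 : (![Ny 0 1, Ny 1 1] : Fin 2 → ℂ) ≠ 0 := by
    intro hz
    have e0 : Ny 0 1 = 0 := congrFun hz 0
    have e1 : Ny 1 1 = 0 := congrFun hz 1
    apply hdet; rw [e0, e1]; ring
  obtain ⟨a, ha⟩ := par (v := ![Nx 0 0, Nx 1 0]) (w := ![Ny 0 0, Ny 1 0]) (by simpa using h0) hc0
  obtain ⟨b, hb⟩ := par (v := ![Nx 0 1, Nx 1 1]) (w := ![Ny 0 1, Ny 1 1]) (by simpa using h1) hc1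
  have ha0 : Nx 0 0 = a * Ny 0 0 := congrFun ha 0
  have ha1 : Nx 1 0 = a * Ny 1 0 := congrFun ha 1
  have hb0 : Nx 0 1 = b * Ny 0 1 := congrFun hb 0
  have hb1 : Nx 1 1 = b * Ny 1 1 := congrFun hb 1
  have hab : a = b := by
    have h3 : (a - b) * (Ny 0 0 * Ny 1 1 - Ny 0 1 * Ny 1 0) = 0 := by
      linear_combination h2 - Ny 1 0 * ha0 - Ny 1 1 * ha0 + Ny 0 0 * ha1 + Ny 0 1 * ha1
        - Ny 1 0 * hb0 - Ny 1 1 * hb0 + Ny 0 0 * hb1 + Ny 0 1 * hb1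
    exact sub_eq_zero.mp ((mul_eq_zero.mp h3).resolve_right hdet)
  refine ⟨a, ?_⟩
  ext i j
  fin_cases i <;> fin_cases j <;> simp [ha0, ha1, hb0, hb1, hab]


lemma struct_entry (w : List (Fin 2)) (c : Fin 2) :
    ∃ (s : ZMod 5) (e : Fin 2), s ≠ 0 ∧
      ∀ i j, ψ (P (c :: w) i j) = s * (rv e i * rv c j) := by
  obtain ⟨s, e, hs, hP⟩ := struct w c
  refine ⟨s, e, hs, fun i j => ?_⟩
  have := congrFun (congrFun hP i) j
  simpa [RingHom.mapMatrix_apply, Matrix.map_apply, vecMulVec_apply, mul_assoc] using this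

lemma rv_zero (e : Fin 2) : rv e 0 = 1 := by fin_cases e <;> rfl

def headsOk (x y : List (Fin 2)) : Prop :=
  (x = [] ∧ y ≠ []) ∨ (y = [] ∧ x ≠ []) ∨ (∃ c d x' y', x = c :: x' ∧ y = d :: y' ∧ c ≠ d)

lemma not_scalar {x y : List (Fin 2)} (h : headsOk x y) (c : ℂ) :
    toComplex.mapMatrix (P x) ≠ c • toComplex.mapMatrix (P y) := by
  intro heq
  have hent : ∀ i j, toComplex (P x i j) = c * toComplex (P y i j) := by
    intro i j
    have := congrFun (congrFun heq i) j
    simpa [RingHom.mapMatrix_apply, Matrix.map_apply] using this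
  have key : ∀ i j k l, ψ (P x i j) * ψ (P y k l) = ψ (P x k l) * ψ (P y i j) := by
    intro i j k l
    have hC : toComplex (P x i j * P y k l) = toComplex (P x k l * P y i j) := by
      rw [toComplex_mul, toComplex_mul, hent i j, hent k l]; ring
    have hZ := toComplex_injective hC
    rw [← _root_.map_mul, ← _root_.map_mul, hZ]
  rcases h with ⟨hx, hy⟩ | ⟨hy, hx⟩ | ⟨a, d, x', y', hx, hy, had⟩
  · obtain ⟨d, y', rfl⟩ := List.exists_cons_of_ne_nil hy
    subst hx
    obtain ⟨s, e, hs, hent'⟩ := struct_entry y' d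
    have e1 := key 0 1 0 0
    have e2 := key 1 1 0 0
    rw [hent' 0 0, hent' 0 1] at e1
    rw [hent' 0 0, hent' 1 1] at e2
    simp only [P, Matrix.one_apply, rv_zero] at e1 e2
    norm_num at e1 e2
    have hd1 : rv d 1 = 0 := e1.resolve_left hs
    rw [hd1, mul_zero, mul_zero] at e2
    exact hs e2
  · obtain ⟨a, x', rfl⟩ := List.exists_cons_of_ne_nil hx
    subst hy
    obtain ⟨s, e, hs, hent'⟩ := struct_entry x' a
    have e1 := key 0 1 0 0
    have e2 := key 1 1 0 0
    rw [hent' 0 1, hent' 0 0] at e1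
    rw [hent' 1 1, hent' 0 0] at e2
    simp only [P, Matrix.one_apply, rv_zero] at e1 e2
    norm_num at e1 e2
    have ha1 : rv a 1 = 0 := e1.resolve_left hs
    rw [ha1, mul_zero, mul_zero] at e2
    exact hs e2.symm
  · subst hx; subst hy
    obtain ⟨s, e, hs, hex⟩ := struct_entry x' a
    obtain ⟨s', e', hs', hey⟩ := struct_entry y' d
    have e1 := key 0 1 0 0
    rw [hex 0 1, hex 0 0, hey 0 0, hey 0 1, rv_zero, rv_zero, rv_zero, rv_zero] at e1
    fin_cases a <;> fin_cases d <;>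
      first
        | (exact had rfl)
        | (simp only [rv] at e1; norm_num at e1; tauto)


def Concl (x y : List (Fin 2)) : Prop :=
  ∃ (U : Fin 2 → Matrix (Fin 2) (Fin 2) ℂ) (u₀ : Fin 2 → ℂ) (S : Finset (Fin 2)),
      (∀ τ, U τ ∈ Matrix.unitaryGroup (Fin 2) ℂ) ∧
      (∑ j, ‖u₀ j‖ ^ 2 = 1) ∧
      (∑ j ∈ S, ‖(y.foldl (fun v c => (U c).mulVec v) u₀) j‖ ^ 2 = 0) ∧
      (0 < ∑ j ∈ S, ‖(x.foldl (fun v c => (U c).mulVec v) u₀) j‖ ^ 2)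

lemma exists_good {x y : List (Fin 2)} (h : headsOk x y) :
    ∃ u : Fin 2 → ℂ, (∑ j, ‖u j‖ ^ 2 = 1) ∧
      ((toComplex.mapMatrix (P x)).mulVec u 0 * (toComplex.mapMatrix (P y)).mulVec u 1
        - (toComplex.mapMatrix (P x)).mulVec u 1 * (toComplex.mapMatrix (P y)).mulVec u 0) ≠ 0 := by
  set Nx := toComplex.mapMatrix (P x) with hNx
  set Ny := toComplex.mapMatrix (P y) with hNy
  have hdet : Ny.det ≠ 0 := by
    rw [hNy, ← RingHom.map_det, det_P]
    simp only [map_pow]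
    apply pow_ne_zero
    rw [show ((25 : GaussianInt) : ℂ) = (25 : ℂ) by rw [map_ofNat]]
    norm_num
  have hQ : (Nx.mulVec ![1,0] 0 * Ny.mulVec ![1,0] 1 - Nx.mulVec ![1,0] 1 * Ny.mulVec ![1,0] 0 ≠ 0)
      ∨ (Nx.mulVec ![0,1] 0 * Ny.mulVec ![0,1] 1 - Nx.mulVec ![0,1] 1 * Ny.mulVec ![0,1] 0 ≠ 0)
      ∨ (Nx.mulVec ![1,1] 0 * Ny.mulVec ![1,1] 1 - Nx.mulVec ![1,1] 1 * Ny.mulVec ![1,1] 0 ≠ 0) := by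
    by_contra hc
    push_neg at hc
    obtain ⟨h0, h1, h2⟩ := hc
    simp only [Matrix.mulVec, dotProduct, Fin.sum_univ_two, Matrix.cons_val_zero,
      Matrix.cons_val_one, Matrix.head_cons, mul_one, mul_zero, zero_add, add_zero,
      one_mul, zero_mul] at h0 h1 h2
    obtain ⟨cc, hcc⟩ := cross_exists Nx Ny hdet (by linear_combination h0)
      (by linear_combination h1) (by linear_combination h2)
    exact not_scalar h cc hcc
  rcases hQ with hg | hg | hg
  · refine ⟨![1, 0], by simp [Fin.sum_univ_two], hg⟩
  · refine ⟨![0, 1], by simp [Fin.sum_univ_two], hg⟩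
  · set r : ℂ := (((Real.sqrt 2)⁻¹ : ℝ) : ℂ) with hr
    have hr0 : (Real.sqrt 2)⁻¹ ≠ 0 := by positivity
    have hrne : r ≠ 0 := by
      simpa [r, Complex.ofReal_eq_zero] using hr0
    refine ⟨r • ![1, 1], ?_, ?_⟩
    · have habs : ‖r‖ = (Real.sqrt 2)⁻¹ := by
        rw [hr, Complex.norm_real, Real.norm_of_nonneg (by positivity : (0:ℝ) ≤ (Real.sqrt 2)⁻¹)]
      simp only [Pi.smul_apply, smul_eq_mul, Fin.sum_univ_two, Matrix.cons_val_zero,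
        Matrix.cons_val_one, Matrix.head_cons, mul_one, norm_mul, habs, norm_one]
      rw [← two_mul, inv_pow, Real.sq_sqrt (by norm_num : (0:ℝ) ≤ 2)]
      norm_num
    · rw [Matrix.mulVec_smul, Matrix.mulVec_smul]
      simp only [Pi.smul_apply, smul_eq_mul]
      intro hzero
      apply hg
      have : r ^ 2 * (Nx.mulVec ![1,1] 0 * Ny.mulVec ![1,1] 1
          - Nx.mulVec ![1,1] 1 * Ny.mulVec ![1,1] 0) = 0 := by linear_combination hzero
      rcases mul_eq_zero.mp this with h' | h'
      · exact absurd h' (pow_ne_zero 2 hrne)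
      · exact h'


lemma fold_conj (V : Matrix (Fin 2) (Fin 2) ℂ) (hVV : star V * V = 1) (w : List (Fin 2))
    (u : Fin 2 → ℂ) :
    w.foldl (fun v c => (V * U c * star V).mulVec v) (V.mulVec u)
      = V.mulVec (w.foldl (fun v c => (U c).mulVec v) u) := by
  induction w generalizing u with
  | nil => rfl
  | cons c w ih =>
    rw [List.foldl_cons, List.foldl_cons,
      show (V * U c * star V).mulVec (V.mulVec u) = V.mulVec ((U c).mulVec u) by
        rw [mulVec_mulVec, mul_assoc (V * U c), hVV, mul_one, ← mulVec_mulVec],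
      ih]

lemma assemble {x y : List (Fin 2)} (h : headsOk x y) : Concl x y := by
  obtain ⟨u₀, hu, hQ⟩ := exists_good h
  set vx := x.foldl (fun v c => (U c).mulVec v) u₀ with hvx
  set vy := y.foldl (fun v c => (U c).mulVec v) u₀ with hvy
  have hvyn : ∑ j, ‖vy j‖ ^ 2 = 1 := by
    rw [hvy, fold_norm U_unitary, hu]
  have hcross : vy 1 * vx 0 - vy 0 * vx 1 ≠ 0 := by
    rw [hvx, hvy, foldU, foldU]
    simp only [Pi.smul_apply, smul_eq_mul]
    intro hz
    apply hQ
    have h5 : (((5:ℂ) ^ y.length)⁻¹ * ((5:ℂ) ^ x.length)⁻¹) ≠ 0 := by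
      apply mul_ne_zero <;> exact inv_ne_zero (pow_ne_zero _ (by norm_num))
    have hfac : (((5:ℂ) ^ y.length)⁻¹ * ((5:ℂ) ^ x.length)⁻¹)
        * ((toComplex.mapMatrix (P x)).mulVec u₀ 0 * (toComplex.mapMatrix (P y)).mulVec u₀ 1
          - (toComplex.mapMatrix (P x)).mulVec u₀ 1 * (toComplex.mapMatrix (P y)).mulVec u₀ 0)
        = 0 := by linear_combination hz
    exact (mul_eq_zero.mp hfac).resolve_left h5
  have hC : (starRingEnd ℂ) (vy 0) * vy 0 + (starRingEnd ℂ) (vy 1) * vy 1 = 1 := by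
    have := dot_self vy
    rw [hvyn] at this
    simpa [dotProduct, Fin.sum_univ_two, Complex.star_def] using this.symm
  set V : Matrix (Fin 2) (Fin 2) ℂ :=
    !![vy 1, -(vy 0); star (vy 0), star (vy 1)] with hV
  have hVu : V ∈ Matrix.unitaryGroup (Fin 2) ℂ := by
    rw [Matrix.mem_unitaryGroup_iff]
    ext i j
    fin_cases i <;> fin_cases j <;>
      simp only [hV, Matrix.mul_apply, Fin.sum_univ_two, Matrix.star_apply,
        Complex.star_def, Matrix.one_apply, Matrix.cons_val', Matrix.cons_val_zero,
        Matrix.cons_val_one, Matrix.head_cons, Matrix.head_fin_const, Matrix.empty_val',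
        Matrix.cons_val_fin_one, map_neg, Complex.conj_conj] <;>
      · first
        | (norm_num; linear_combination hC)
        | (norm_num; ring_nf)
        | ring_nf
  refine ⟨fun c => V * U c * star V, V.mulVec u₀, {0}, ?_, ?_, ?_, ?_⟩
  · intro τ
    exact mul_mem (mul_mem hVu (U_unitary τ)) (Unitary.star_mem hVu)
  · rw [mulVec_norm hVu, hu]
  · rw [fold_conj V (Matrix.mem_unitaryGroup_iff'.mp hVu), ← hvy, Finset.sum_singleton]
    have : V.mulVec vy 0 = 0 := by
      simp [hV, Matrix.mulVec, dotProduct, Fin.sum_univ_two]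
      ring
    rw [this]
    simp
  · rw [fold_conj V (Matrix.mem_unitaryGroup_iff'.mp hVu), ← hvx, Finset.sum_singleton]
    have : V.mulVec vx 0 = vy 1 * vx 0 - vy 0 * vx 1 := by
      simp [hV, Matrix.mulVec, dotProduct, Fin.sum_univ_two]
      ring
    rw [this]
    exact pow_pos (norm_pos_iff.mpr hcross) 2

lemma main : ∀ (x y : List (Fin 2)), x ≠ y → Concl x y := by
  intro x
  induction x with
  | nil =>
    intro y hxy
    exact assemble (Or.inl ⟨rfl, Ne.symm hxy⟩)
  | cons c x' ih =>
    intro y hxy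
    cases y with
    | nil => exact assemble (Or.inr (Or.inl ⟨rfl, List.cons_ne_nil c x'⟩))
    | cons d y' =>
      by_cases hcd : c = d
      · subst hcd
        have hne : x' ≠ y' := fun hh => hxy (by rw [hh])
        obtain ⟨W, u₀, S, hW, hnorm, hy0, hxpos⟩ := ih y' hne
        refine ⟨W, (star (W c)).mulVec u₀, S, hW, ?_, ?_, ?_⟩
        · rw [mulVec_norm (Unitary.star_mem (hW c)), hnorm]
        · rw [List.foldl_cons, mulVec_mulVec, Matrix.mem_unitaryGroup_iff.mp (hW c),
            Matrix.one_mulVec]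
          exact hy0
        · rw [List.foldl_cons, mulVec_mulVec, Matrix.mem_unitaryGroup_iff.mp (hW c),
            Matrix.one_mulVec]
          exact hxpos
      · exact assemble (Or.inr (Or.inr ⟨c, d, x', y', rfl, rfl, hcd⟩))

end Stmt6Aux


/-- any pair of distinct words over `{a, b}` (here `Fin 2`) can be
separated by a 2-state nondeterministic MCQFA: `y` is accepted with probability `0`
and `x` with strictly positive probability. -/
theorem stmt6 (x y : List (Fin 2)) (hxy : x ≠ y) :
    ∃ (U : Fin 2 → Matrix (Fin 2) (Fin 2) ℂ) (u₀ : Fin 2 → ℂ) (S : Finset (Fin 2)),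
      (∀ τ, U τ ∈ Matrix.unitaryGroup (Fin 2) ℂ) ∧
      (∑ j, ‖u₀ j‖ ^ 2 = 1) ∧
      (∑ j ∈ S, ‖(y.foldl (fun v c => (U c).mulVec v) u₀) j‖ ^ 2 = 0) ∧
      (0 < ∑ j ∈ S, ‖(x.foldl (fun v c => (U c).mulVec v) u₀) j‖ ^ 2) :=
  Stmt6Aux.main x y hxy
end
end

section
/- For any two distinct words x, y over {a, b}, the element g_x · g_y⁻¹ of the free group F₂ lies outside the second derived subgroup F₂^{(2)} = [[F₂, F₂], [F₂, F₂]]. -/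
open LaurentPolynomial SemidirectProduct

abbrev R8 := LaurentPolynomial ℤ

noncomputable def shiftAddAut (k : ℤ) : R8 ≃+ R8 where
  toFun p := T k * p
  invFun p := T (-k) * p
  left_inv p := by show T (-k) * (T k * p) = p; rw [← mul_assoc, ← T_add]; simp
  right_inv p := by show T k * (T (-k) * p) = p; rw [← mul_assoc, ← T_add]; simp
  map_add' p q := mul_add _ p q

@[simp] lemma shiftAddAut_apply (k : ℤ) (p : R8) : shiftAddAut k p = T k * p := rfl

noncomputable def φ8 : Multiplicative ℤ →* MulAut (Multiplicative R8) where
  toFun k := AddEquiv.toMultiplicative (shiftAddAut k.toAdd)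
  map_one' := by
    ext p : 1
    show Multiplicative.ofAdd (T ((1 : Multiplicative ℤ).toAdd) * p.toAdd) = p
    simp
  map_mul' k l := by
    ext p : 1
    show Multiplicative.ofAdd (T (k.toAdd + l.toAdd) * p.toAdd)
      = Multiplicative.ofAdd (T k.toAdd * (T l.toAdd * p.toAdd))
    rw [T_add, mul_assoc]

instance : CoeFun R8 (fun _ => ℤ → ℤ) := ⟨fun p => ⇑p.coeff⟩

abbrev G8 := Multiplicative R8 ⋊[φ8] Multiplicative ℤ

lemma meta8 : derivedSeries G8 2 = ⊥ := by
  have h1 : derivedSeries G8 1 ≤ (rightHom : G8 →* Multiplicative ℤ).ker := by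
    rw [derivedSeries_one]
    exact Abelianization.commutator_subset_ker rightHom
  rw [show (2:ℕ) = 1 + 1 from rfl, derivedSeries_succ, eq_bot_iff]
  rw [Subgroup.commutator_le]
  intro g hg h hh
  obtain ⟨a, rfl⟩ : ∃ a, inl a = g := by
    rw [← MonoidHom.mem_range, range_inl_eq_ker_rightHom]; exact h1 hg
  obtain ⟨b, rfl⟩ : ∃ b, inl b = h := by
    rw [← MonoidHom.mem_range, range_inl_eq_ker_rightHom]; exact h1 hh
  rw [Subgroup.mem_bot, commutatorElement_def, ← map_inv, ← map_inv, ← map_mul, ← map_mul,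
    ← map_mul]
  rw [show a * b * a⁻¹ * b⁻¹ = 1 from by rw [mul_comm a b]; group, map_one]

noncomputable def gen8 : Fin 2 → G8 := fun i =>
  if i = 0 then inr (Multiplicative.ofAdd (1:ℤ)) else inl (Multiplicative.ofAdd (1:R8))

noncomputable def P8 (w : List (Fin 2)) : G8 := (w.map gen8).prod

noncomputable def L8 (w : List (Fin 2)) : R8 := (P8 w).left.toAdd
noncomputable def K8 (w : List (Fin 2)) : ℤ := (P8 w).right.toAdd

@[simp] lemma P8_nil : P8 [] = 1 := rfl
@[simp] lemma P8_cons (i : Fin 2) (w : List (Fin 2)) : P8 (i :: w) = gen8 i * P8 w := by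
  simp [P8]

lemma L8_nil : L8 [] = 0 := rfl
lemma K8_nil : K8 [] = 0 := rfl

lemma L8_cons0 (w : List (Fin 2)) : L8 (0 :: w) = T 1 * L8 w := by
  rw [L8, P8_cons, SemidirectProduct.mul_left]
  simp [L8, gen8, SemidirectProduct.mul_left, φ8, SemidirectProduct.left_inr, SemidirectProduct.right_inr,
    SemidirectProduct.left_inl, SemidirectProduct.right_inl]
  change (0:R8) + L8 w * T 1 = L8 w * T 1
  simp

lemma K8_cons0 (w : List (Fin 2)) : K8 (0 :: w) = 1 + K8 w := by
  simp [K8, gen8, mul_right]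

lemma L8_cons1 (w : List (Fin 2)) : L8 (1 :: w) = 1 + L8 w := by
  rw [L8, P8_cons, SemidirectProduct.mul_left]
  simp [L8, gen8, SemidirectProduct.mul_left, φ8, SemidirectProduct.left_inr, SemidirectProduct.right_inr,
    SemidirectProduct.left_inl, SemidirectProduct.right_inl]
  change (1:R8) + L8 w * T 0 = 1 + L8 w
  simp

lemma K8_cons1 (w : List (Fin 2)) : K8 (1 :: w) = K8 w := by
  simp [K8, gen8, mul_right]

lemma T1_mul_apply (p : R8) (n : ℤ) : ((T 1 : R8) * p) n = p (n - 1) := by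
  have h := AddMonoidAlgebra.coeff_single_mul_apply (R := ℤ) (G := ℤ) p 1 1 n
  rw [show ((AddMonoidAlgebra.single 1 1 : AddMonoidAlgebra ℤ ℤ) : R8) = T 1 from rfl] at h
  rw [h, one_mul, show -1 + n = n - 1 by ring]

lemma one_apply8 (n : ℤ) : (1 : R8) n = if n = 0 then 1 else 0 := by
  simpa using LaurentPolynomial.C_apply (1:ℤ) n

lemma add_apply8 (p q : R8) (n : ℤ) : (p + q) n = p n + q n := rfl
lemma zero_apply8 (n : ℤ) : (0 : R8) n = 0 := rfl

lemma fin_two8 (i : Fin 2) : i = 0 ∨ i = 1 := by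
  fin_cases i
  · exact Or.inl rfl
  · exact Or.inr rfl

lemma inv8 (w : List (Fin 2)) :
    (∀ n : ℤ, 0 ≤ L8 w n) ∧ (∀ n : ℤ, n < 0 → L8 w n = 0) ∧ 0 ≤ K8 w := by
  induction w with
  | nil =>
    refine ⟨fun n => ?_, fun n _ => ?_, ?_⟩ <;> simp [L8_nil, K8_nil, zero_apply8]
  | cons i w ih =>
    obtain ⟨h1, h2, h3⟩ := ih
    rcases fin_two8 i with rfl | rfl
    · refine ⟨fun n => ?_, fun n hn => ?_, ?_⟩
      · rw [L8_cons0, T1_mul_apply]; exact h1 _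
      · rw [L8_cons0, T1_mul_apply]; exact h2 _ (by omega)
      · rw [K8_cons0]; omega
    · refine ⟨fun n => ?_, fun n hn => ?_, ?_⟩
      · rw [L8_cons1, add_apply8, one_apply8]
        have := h1 n; split <;> omega
      · rw [L8_cons1, add_apply8, one_apply8, h2 n hn, if_neg (by omega)]; ring
      · rwa [K8_cons1]

lemma L8_coeff0_cons0 (w : List (Fin 2)) : L8 (0 :: w) 0 = 0 := by
  rw [L8_cons0, T1_mul_apply]
  exact (inv8 w).2.1 _ (by norm_num)

lemma L8_coeff0_cons1 (w : List (Fin 2)) : 1 ≤ L8 (1 :: w) 0 := by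
  rw [L8_cons1, add_apply8, one_apply8, if_pos rfl]
  have := (inv8 w).1 0; omega

lemma K8_cons0_pos (w : List (Fin 2)) : 1 ≤ K8 (0 :: w) := by
  rw [K8_cons0]; have := (inv8 w).2.2; omega

lemma hL8 {x y : List (Fin 2)} (h : P8 x = P8 y) (n : ℤ) : L8 x n = L8 y n := by
  have : L8 x = L8 y := congrArg (fun g : G8 => g.left.toAdd) h
  rw [this]

lemma hK8 {x y : List (Fin 2)} (h : P8 x = P8 y) : K8 x = K8 y :=
  congrArg (fun g : G8 => g.right.toAdd) h

lemma P8_inj (x : List (Fin 2)) : ∀ y, P8 x = P8 y → x = y := by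
  induction x with
  | nil =>
    intro y h
    cases y with
    | nil => rfl
    | cons j y =>
      exfalso
      rcases fin_two8 j with rfl | rfl
      · have := hK8 h; rw [K8_nil] at this
        have := K8_cons0_pos y; omega
      · have := hL8 h 0
        rw [L8_nil, zero_apply8] at this
        have := L8_coeff0_cons1 y; omega
  | cons i x ih =>
    intro y h
    cases y with
    | nil =>
      exfalso
      rcases fin_two8 i with rfl | rfl
      · have := hK8 h; rw [K8_nil] at this
        have := K8_cons0_pos x; omega
      · have := hL8 h 0
        rw [L8_nil, zero_apply8] at this
        have := L8_coeff0_cons1 x; omega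
    | cons j y =>
      rcases fin_two8 i with rfl | rfl <;> rcases fin_two8 j with rfl | rfl
      · rw [P8_cons, P8_cons] at h
        rw [ih y (mul_left_cancel h)]
      · exfalso
        have h0 := hL8 h 0
        rw [L8_coeff0_cons0 x] at h0
        have := L8_coeff0_cons1 y; omega
      · exfalso
        have h0 := hL8 h 0
        rw [L8_coeff0_cons0 y] at h0
        have := L8_coeff0_cons1 x; omega
      · rw [P8_cons, P8_cons] at h
        rw [ih y (mul_left_cancel h)]

/-- for distinct words `x, y` over `{a, b}` (here `Fin 2`), the element
`g_x g_y⁻¹` of the free group `F₂` lies outside the second derived subgroup `F₂⁽²⁾`. -/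
theorem stmt8 (x y : List (Fin 2)) (hxy : x ≠ y) :
    (x.map FreeGroup.of).prod * ((y.map FreeGroup.of).prod)⁻¹ ∉
      derivedSeries (FreeGroup (Fin 2)) 2 := by
  intro hmem
  set ψ : FreeGroup (Fin 2) →* G8 := FreeGroup.lift gen8 with hψ
  have h2 : ψ ((x.map FreeGroup.of).prod * ((y.map FreeGroup.of).prod)⁻¹) ∈
      derivedSeries G8 2 :=
    map_derivedSeries_le_derivedSeries ψ 2 ⟨_, hmem, rfl⟩
  rw [meta8, Subgroup.mem_bot, map_mul, map_inv, mul_inv_eq_one] at h2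
  have key : ∀ w : List (Fin 2), ψ ((w.map FreeGroup.of).prod) = P8 w := by
    intro w
    rw [map_list_prod, List.map_map, P8]
    rw [show ⇑ψ ∘ FreeGroup.of = gen8 from funext fun i => FreeGroup.lift_apply_of]
  rw [key x, key y] at h2
  exact hxy (P8_inj x y h2)
end

section
/- Let U_a = (1/5)·[[4, 3, 0], [−3, 4, 0], [0, 0, 5]] and U_b = (1/5)·[[4, 0, 3], [0, 5, 0], [−3, 0, 4]], two rotation matrices in SO(3). The group homomorphism φ : F₂ → GL₃(ℝ) determined by a ↦ U_a and b ↦ U_b is injective; equivalently, for every nonidentity element ω of the free group F₂, the matrix φ(ω) is not the identity matrix, so U_a and U_b generate a free subgroup of SO(3) of rank 2. -/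
open Matrix

namespace Stmt9Aux

instance : Fact (Nat.Prime 5) := ⟨by norm_num⟩

/-- Integer matrices: `5` times the image of each letter. -/
def N : Fin 2 × Bool → Matrix (Fin 3) (Fin 3) ℤ
  | (0, true) => !![4, 3, 0; -3, 4, 0; 0, 0, 5]
  | (0, false) => !![4, -3, 0; 3, 4, 0; 0, 0, 5]
  | (1, true) => !![4, 0, 3; 0, 5, 0; -3, 0, 4]
  | (1, false) => !![4, 0, -3; 0, 5, 0; 3, 0, 4]

def uvec : Fin 2 × Bool → Fin 3 → ZMod 5
  | (0, true) => ![4, 2, 0]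
  | (0, false) => ![4, 3, 0]
  | (1, true) => ![4, 0, 2]
  | (1, false) => ![4, 0, 3]

def rvec : Fin 2 × Bool → Fin 3 → ZMod 5
  | (0, true) => ![1, 2, 0]
  | (0, false) => ![1, 3, 0]
  | (1, true) => ![1, 0, 2]
  | (1, false) => ![1, 0, 3]

def M (l : Fin 2 × Bool) : Matrix (Fin 3) (Fin 3) (ZMod 5) := vecMulVec (uvec l) (rvec l)

lemma N_map_eq (l : Fin 2 × Bool) : (N l).map (Int.cast : ℤ → ZMod 5) = M l := by
  obtain ⟨i, b⟩ := l
  fin_cases i <;> cases b <;> · ext i j; fin_cases i <;> fin_cases j <;> decide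

/-- compatibility: letters that may be adjacent in a reduced word. -/
def R (l l' : Fin 2 × Bool) : Prop := ¬(l.1 = l'.1 ∧ l'.2 = !l.2)

lemma key {l l' : Fin 2 × Bool} (h : R l l') : rvec l ⬝ᵥ uvec l' ≠ 0 := by
  revert h
  obtain ⟨i, b⟩ := l; obtain ⟨i', b'⟩ := l'
  fin_cases i <;> fin_cases i' <;> cases b <;> cases b' <;> (unfold R; decide)

lemma M_mulVec (l : Fin 2 × Bool) (v : Fin 3 → ZMod 5) :
    M l *ᵥ v = (rvec l ⬝ᵥ v) • uvec l := by
  ext i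
  simp [M, vecMulVec, mulVec, dotProduct, Matrix.of_apply, Finset.mul_sum, mul_comm,
    mul_left_comm, mul_assoc]

lemma prod_mulVec : ∀ (L : List (Fin 2 × Bool)) (l : Fin 2 × Bool),
    List.Chain' R (l :: L) →
    ∃ c : ZMod 5, c ≠ 0 ∧
      ((l :: L).map M).prod *ᵥ uvec ((l :: L).getLast (by simp)) = c • uvec l
  | [], l, _ => by
      refine ⟨rvec l ⬝ᵥ uvec l, ?_, ?_⟩
      · obtain ⟨i, b⟩ := l; fin_cases i <;> cases b <;> decide
      · simp [M_mulVec]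
  | l' :: L, l, h => by
      obtain ⟨c, hc, hv⟩ := prod_mulVec L l' h.tail
      refine ⟨c * (rvec l ⬝ᵥ uvec l'), mul_ne_zero hc (key (h.rel_head)), ?_⟩
      have : ((l :: l' :: L).map M).prod = M l * ((l' :: L).map M).prod := by simp
      rw [this]
      have hlast : ((l :: l' :: L).getLast (by simp)) = ((l' :: L).getLast (by simp)) := by
        simp [List.getLast]
      rw [← Matrix.mulVec_mulVec, hlast, hv]
      rw [mulVec_smul, M_mulVec]
      rw [smul_smul, mul_comm]

lemma uvec_ne_zero (l : Fin 2 × Bool) : uvec l ≠ 0 := by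
  obtain ⟨i, b⟩ := l; fin_cases i <;> cases b <;> decide

lemma prod_ne_zero (L : List (Fin 2 × Bool)) (hL : L ≠ []) (h : List.Chain' R L) :
    (L.map M).prod ≠ 0 := by
  obtain ⟨l, L, rfl⟩ := List.exists_cons_of_ne_nil hL
  obtain ⟨c, hc, hv⟩ := prod_mulVec L l h
  intro h0
  rw [h0] at hv
  simp only [Matrix.zero_mulVec] at hv
  refine uvec_ne_zero l ?_
  calc uvec l = c⁻¹ • (c • uvec l) := by rw [smul_smul, inv_mul_cancel₀ hc, one_smul]
  _ = 0 := by rw [← hv, smul_zero]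

/-- chain condition for reduced words -/
lemma chain_toWord (w : FreeGroup (Fin 2)) : List.Chain' R w.toWord := by
  have hred : FreeGroup.reduce w.toWord = w.toWord := FreeGroup.reduce_toWord w
  generalize hW : w.toWord = L at hred
  clear hW
  have : ∀ (L : List (Fin 2 × Bool)), FreeGroup.reduce L = L → List.Chain' R L := by
    intro L
    induction L with
    | nil => intro _; exact List.isChain_nil
    | cons l L ih =>
      intro hL
      match L, hL with
      | [], _ => exact List.isChain_singleton l
      | l' :: L, hL => ?_
      constructor
      · rintro ⟨h1, h2⟩
        obtain ⟨x, b⟩ := l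
        obtain ⟨x', b'⟩ := l'
        dsimp at h1 h2; subst h1; subst h2
        exact FreeGroup.reduce.not (L₂ := []) hL
      · apply ih
        have hr : FreeGroup.Red (l' :: L) (FreeGroup.reduce (l' :: L)) :=
          FreeGroup.reduce.red
        have hlen := FreeGroup.Red.length_le hr
        rw [FreeGroup.reduce.cons] at hL
        cases hrd : FreeGroup.reduce (l' :: L) with
        | nil =>
          rw [hrd] at hL
          have := congr_arg List.length hL
          simp at this
        | cons hd tl =>
          rw [hrd] at hL hlen
          simp only [] at hL
          by_cases hcond : l.1 = hd.1 ∧ l.2 = !hd.2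
          · rw [if_pos hcond] at hL
            have := congr_arg List.length hL
            simp at this hlen
            omega
          · rw [if_neg hcond] at hL
            injection hL
  exact this L hred

lemma smul_prod {α : Type*} [CommRing α] (g : Fin 2 × Bool → Matrix (Fin 3) (Fin 3) α)
    (c : α) : ∀ L : List (Fin 2 × Bool),
    (L.map fun l => c • g l).prod = c ^ L.length • (L.map g).prod
  | [] => by simp
  | l :: L => by
      simp only [List.map_cons, List.prod_cons, smul_prod g c L, List.length_cons]
      rw [smul_mul_smul_comm, pow_succ, mul_comm]

lemma mapProdInt {β : Type*} [CommRing β] :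
    ∀ L : List (Matrix (Fin 3) (Fin 3) ℤ),
      (L.prod).map (Int.cast : ℤ → β) = (L.map fun A => A.map (Int.cast : ℤ → β)).prod
  | [] => by simp [Matrix.map_one (Int.cast : ℤ → β) Int.cast_zero Int.cast_one]
  | A :: L => by
      simp only [List.prod_cons, List.map_cons]
      rw [show ((A * L.prod).map (Int.cast : ℤ → β))
          = A.map (Int.cast : ℤ → β) * (L.prod).map (Int.cast : ℤ → β) from
        Matrix.map_mul (f := Int.castRingHom β), mapProdInt L]

lemma cast_smul_one {β : Type*} [CommRing β] (n : ℕ) :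
    ((5:ℤ) ^ n • (1 : Matrix (Fin 3) (Fin 3) ℤ)).map (Int.cast : ℤ → β)
      = (5:β) ^ n • 1 := by
  ext i j
  rw [Matrix.map_apply, Matrix.smul_apply, Matrix.smul_apply, Matrix.one_apply,
    Matrix.one_apply]
  by_cases h : i = j <;> simp [h]

end Stmt9Aux

open Stmt9Aux in
/-- the rotations `U_a = (1/5)[[4,3,0],[-3,4,0],[0,0,5]]` and
`U_b = (1/5)[[4,0,3],[0,5,0],[-3,0,4]]` generate a free subgroup of `SO(3)` of rank 2:
the homomorphism from `F₂` sending the generators to `U_a` and `U_b` is injective. -/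
theorem stmt9 (f : Fin 2 → GL (Fin 3) ℝ)
    (hfa : (f 0 : Matrix (Fin 3) (Fin 3) ℝ) = (5 : ℝ)⁻¹ • !![4, 3, 0; -3, 4, 0; 0, 0, 5])
    (hfb : (f 1 : Matrix (Fin 3) (Fin 3) ℝ) = (5 : ℝ)⁻¹ • !![4, 0, 3; 0, 5, 0; -3, 0, 4]) :
    Function.Injective (FreeGroup.lift f) ∧
      ∀ ω : FreeGroup (Fin 2), ω ≠ 1 →
        ((FreeGroup.lift f) ω : Matrix (Fin 3) (Fin 3) ℝ) ≠ 1 := by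
  -- inverse matrices
  have hfa' : (((f 0)⁻¹ : GL (Fin 3) ℝ) : Matrix (Fin 3) (Fin 3) ℝ)
      = (5 : ℝ)⁻¹ • !![4, -3, 0; 3, 4, 0; 0, 0, 5] := by
    rw [Matrix.coe_units_inv]
    apply Matrix.inv_eq_right_inv
    rw [hfa, Matrix.smul_mul, Matrix.mul_smul, smul_smul]
    norm_num [Matrix.mul_fin_three]
    ext i j
    fin_cases i <;> fin_cases j <;> norm_num [Matrix.one_apply, Fin.ext_iff]
  have hfb' : (((f 1)⁻¹ : GL (Fin 3) ℝ) : Matrix (Fin 3) (Fin 3) ℝ)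
      = (5 : ℝ)⁻¹ • !![4, 0, -3; 0, 5, 0; 3, 0, 4] := by
    rw [Matrix.coe_units_inv]
    apply Matrix.inv_eq_right_inv
    rw [hfb, Matrix.smul_mul, Matrix.mul_smul, smul_smul]
    norm_num [Matrix.mul_fin_three]
    ext i j
    fin_cases i <;> fin_cases j <;> norm_num [Matrix.one_apply, Fin.ext_iff]
  -- each letter's matrix
  have hcast : ∀ l : Fin 2 × Bool, ∀ A : Matrix (Fin 3) (Fin 3) ℝ,
      (∀ i j, ((N l i j : ℤ) : ℝ) = A i j) → (N l).map (Int.cast : ℤ → ℝ) = A := by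
    intro l A h
    ext i j
    exact h i j
  have hlet : ∀ l : Fin 2 × Bool,
      ((cond l.2 (f l.1) (f l.1)⁻¹ : GL (Fin 3) ℝ) : Matrix (Fin 3) (Fin 3) ℝ)
        = (5 : ℝ)⁻¹ • (N l).map (Int.cast : ℤ → ℝ) := by
    rintro ⟨i, b⟩
    fin_cases i <;> cases b
    · show (((f 0)⁻¹ : GL (Fin 3) ℝ) : Matrix (Fin 3) (Fin 3) ℝ) = _
      rw [hfa']
      congr 1
      refine (hcast _ _ ?_).symm
      intro i j; fin_cases i <;> fin_cases j <;> norm_num [N]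
    · show ((f 0 : GL (Fin 3) ℝ) : Matrix (Fin 3) (Fin 3) ℝ) = _
      rw [hfa]
      congr 1
      refine (hcast _ _ ?_).symm
      intro i j; fin_cases i <;> fin_cases j <;> norm_num [N]
    · show (((f 1)⁻¹ : GL (Fin 3) ℝ) : Matrix (Fin 3) (Fin 3) ℝ) = _
      rw [hfb']
      congr 1
      refine (hcast _ _ ?_).symm
      intro i j; fin_cases i <;> fin_cases j <;> norm_num [N]
    · show ((f 1 : GL (Fin 3) ℝ) : Matrix (Fin 3) (Fin 3) ℝ) = _
      rw [hfb]
      congr 1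
      refine (hcast _ _ ?_).symm
      intro i j; fin_cases i <;> fin_cases j <;> norm_num [N]
  have main : ∀ ω : FreeGroup (Fin 2), ω ≠ 1 →
      ((FreeGroup.lift f) ω : Matrix (Fin 3) (Fin 3) ℝ) ≠ 1 := by
    intro ω hω hmat
    have hLne : ω.toWord ≠ [] := fun h => hω (FreeGroup.toWord_eq_nil_iff.mp h)
    have hn0 : ω.toWord.length ≠ 0 := fun h => hLne (List.length_eq_zero_iff.mp h)
    have h1 : ((FreeGroup.lift f) ω : Matrix (Fin 3) (Fin 3) ℝ)
        = ((5 : ℝ)⁻¹) ^ ω.toWord.length •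
          ((ω.toWord.map N).prod).map (Int.cast : ℤ → ℝ) := by
      conv_lhs => rw [← FreeGroup.mk_toWord (x := ω)]
      rw [FreeGroup.lift_mk]
      have hcoe := map_list_prod (Units.coeHom (Matrix (Fin 3) (Fin 3) ℝ))
        (List.map (fun x => bif x.2 then f x.1 else (f x.1)⁻¹) ω.toWord)
      simp only [Units.coeHom_apply] at hcoe
      rw [hcoe, List.map_map]
      have : (⇑(Units.coeHom (Matrix (Fin 3) (Fin 3) ℝ)) ∘
            fun x : Fin 2 × Bool => bif x.2 then f x.1 else (f x.1)⁻¹)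
          = fun l => (5 : ℝ)⁻¹ • (N l).map (Int.cast : ℤ → ℝ) := by
        funext l; exact hlet l
      rw [this, smul_prod, mapProdInt, List.map_map]
      rfl
    rw [h1] at hmat
    have h2 : ((ω.toWord.map N).prod).map (Int.cast : ℤ → ℝ)
        = (5:ℝ) ^ ω.toWord.length • 1 := by
      have h := congr_arg (fun X : Matrix (Fin 3) (Fin 3) ℝ =>
        ((5:ℝ) ^ ω.toWord.length) • X) hmat
      simp only [smul_smul, ← mul_pow, mul_inv_cancel₀ (by norm_num : (5:ℝ) ≠ 0),
        one_pow, one_smul, smul_eq_mul, mul_one] at h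
      simpa using h
    have h2' : ((ω.toWord.map N).prod).map (Int.cast : ℤ → ℝ)
        = ((5:ℤ) ^ ω.toWord.length • (1 : Matrix (Fin 3) (Fin 3) ℤ)).map
            (Int.cast : ℤ → ℝ) := by
      rw [h2, cast_smul_one]
    have h3 : (ω.toWord.map N).prod
        = (5:ℤ) ^ ω.toWord.length • (1 : Matrix (Fin 3) (Fin 3) ℤ) :=
      Matrix.map_injective (Int.cast_injective (α := ℝ)) h2'
    have h4 : ((ω.toWord.map N).prod).map (Int.cast : ℤ → ZMod 5)
        = (ω.toWord.map M).prod := by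
      rw [mapProdInt, List.map_map]
      have : ((fun A : Matrix (Fin 3) (Fin 3) ℤ => A.map (Int.cast : ℤ → ZMod 5)) ∘ N)
          = M := funext N_map_eq
      rw [this]
    rw [h3, cast_smul_one] at h4
    have h5 : ((5:ZMod 5) ^ ω.toWord.length • (1 : Matrix (Fin 3) (Fin 3) (ZMod 5))) = 0 := by
      have : (5:ZMod 5) = 0 := rfl
      rw [this, zero_pow hn0, zero_smul]
    rw [h5] at h4
    exact prod_ne_zero ω.toWord hLne (chain_toWord ω) h4.symm
  refine ⟨?_, main⟩
  rw [injective_iff_map_eq_one]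
  intro a ha
  by_contra hne
  exact main a hne (by rw [ha]; rfl)
end

section
/- For every word x over {a, b}, there exist unitary matrices U_a, U_b ∈ U(2, ℂ), a unit vector u₀ ∈ ℂ², and a set S ⊆ {1, 2} of accepting coordinates such that for every word z over {a, b}: the acceptance probability of z is 0 if and only if z = x. In particular, the complement of the singleton language {x} is recognized by a 2-state nondeterministic MCQFA. -/
open Matrix

namespace Stmt10Aux

abbrev G := GaussianInt
def gi : G := ⟨0, 1⟩
def Bg : Fin 2 → Matrix (Fin 2) (Fin 2) G :=
  ![!![1, 2; -2, 1], !![1, 2 * gi; 2 * gi, 1]]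
def Btg : Fin 2 → Matrix (Fin 2) (Fin 2) G :=
  ![!![1, -2; 2, 1], !![1, -(2 * gi); -(2 * gi), 1]]
instance : Fact (Nat.Prime 5) := ⟨by norm_num⟩
def ψ : G →+* ZMod 5 := Zsqrtd.lift ⟨3, by decide⟩
def sB : Fin 2 → Matrix (Fin 2) (Fin 2) (ZMod 5) := ![!![1,2;3,1], !![1,1;1,1]]
def sBt : Fin 2 → Matrix (Fin 2) (Fin 2) (ZMod 5) := ![!![1,3;2,1], !![1,4;4,1]]
lemma psi_Bg : ∀ σ, (Bg σ).map ψ = sB σ := by decide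
lemma psi_Btg : ∀ σ, (Btg σ).map ψ = sBt σ := by decide

def ψv (v : Fin 2 → G) : Fin 2 → ZMod 5 := fun j => ψ (v j)

lemma psi_mulVec (M : Matrix (Fin 2) (Fin 2) G) (v : Fin 2 → G) :
    ψv (M.mulVec v) = (M.map ψ).mulVec (ψv v) := by
  funext j
  simp [ψv, Matrix.mulVec, dotProduct, Fin.sum_univ_two, Matrix.map_apply]

def sfwd (z : List (Fin 2)) (u : Fin 2 → ZMod 5) : Fin 2 → ZMod 5 :=
  z.foldl (fun v σ => (sB σ).mulVec v) u

lemma sfwd_nil (u) : sfwd [] u = u := rfl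
lemma sfwd_cons (σ z u) : sfwd (σ :: z) u = sfwd z ((sB σ).mulVec u) := rfl

lemma sfwd_smul (z : List (Fin 2)) (c : ZMod 5) (u : Fin 2 → ZMod 5) :
    sfwd z (c • u) = c • sfwd z u := by
  induction z generalizing u with
  | nil => rfl
  | cons σ z ih => rw [sfwd_cons, sfwd_cons, Matrix.mulVec_smul, ih]

lemma chain : ∀ (v : List (Fin 2)) (d : Fin 2 → ZMod 5),
    (d = ![1,3] ∨ d = ![1,1] ∨ d = ![0,1] ∨ d = ![1,2] ∨ d = ![1,4]) →
    (v.head? = some 0 → d ≠ ![1,2]) → (v.head? = some 1 → d ≠ ![1,4]) →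
    (v = [] → d ≠ ![0,1]) → sfwd v d 0 ≠ 0 := by
  intro v
  induction v with
  | nil =>
    intro d hd _ _ hne
    rcases hd with h|h|h|h|h <;> subst h <;> first
      | (exact absurd rfl (hne rfl)) | decide
  | cons σ v ih =>
    intro d hd h0 h1 _
    rw [sfwd_cons]
    have key : ∃ c : ZMod 5, c ≠ 0 ∧ (sB σ).mulVec d = c • ![1,3] ∨
        c ≠ 0 ∧ (sB σ).mulVec d = c • ![1,1] := by
      fin_cases σ <;> rcases hd with h|h|h|h|h <;> subst h <;>
        first
          | (exact absurd rfl (h0 rfl))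
          | (exact absurd rfl (h1 rfl))
          | (exact ⟨2, Or.inl ⟨by decide, by decide⟩⟩)
          | (exact ⟨3, Or.inl ⟨by decide, by decide⟩⟩)
          | (exact ⟨4, Or.inl ⟨by decide, by decide⟩⟩)
          | (exact ⟨1, Or.inr ⟨by decide, by decide⟩⟩)
          | (exact ⟨2, Or.inr ⟨by decide, by decide⟩⟩)
          | (exact ⟨3, Or.inr ⟨by decide, by decide⟩⟩)
          | (exact ⟨4, Or.inr ⟨by decide, by decide⟩⟩)
    rcases key with ⟨c, (⟨hc, he⟩|⟨hc, he⟩)⟩ <;> rw [he, sfwd_smul] <;>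
      simp only [Pi.smul_apply, smul_eq_mul] <;>
      refine mul_ne_zero hc (ih _ ?_ (fun _ => by decide) (fun _ => by decide) (fun _ => by decide))
    · exact Or.inl rfl
    · exact Or.inr (Or.inl rfl)

def wv (x : List (Fin 2)) : Fin 2 → G :=
  x.foldr (fun σ v => (Btg σ).mulVec v) ![0, 1]

lemma wv_nil : wv [] = ![0, 1] := rfl
lemma wv_cons (σ x) : wv (σ :: x) = (Btg σ).mulVec (wv x) := rfl

def dY (x : List (Fin 2)) : Fin 2 → ZMod 5 :=
  match x with
  | [] => ![0, 1]
  | σ :: _ => if σ = 0 then ![1, 2] else ![1, 4]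

lemma wv_shadow : ∀ x : List (Fin 2), ∃ c : ZMod 5, c ≠ 0 ∧ ψv (wv x) = c • dY x := by
  intro x
  induction x with
  | nil => exact ⟨1, by decide, by funext j; fin_cases j <;> simp [ψv, wv_nil, dY]⟩
  | cons σ x ih =>
    rcases ih with ⟨c, hc, hx⟩
    have key : ψv (wv (σ :: x)) = c • ((sBt σ).mulVec (dY x)) := by
      rw [wv_cons, psi_mulVec, psi_Btg, hx, Matrix.mulVec_smul]
    have hσ01 : σ = 0 ∨ σ = 1 := by omega
    have hdx : dY x = ![0,1] ∨ dY x = ![1,2] ∨ dY x = ![1,4] := by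
      rcases x with _ | ⟨τ, y⟩
      · exact Or.inl rfl
      · rcases eq_or_ne τ 0 with h | h
        · exact Or.inr (Or.inl (by simp [dY, h]))
        · exact Or.inr (Or.inr (by simp [dY, h]))
    have hd2 : ∃ k : ZMod 5, k ≠ 0 ∧ (sBt σ).mulVec (dY x) = k • dY (σ :: x) := by
      have hcons : dY (σ :: x) = if σ = 0 then ![1,2] else ![1,4] := rfl
      rcases hσ01 with h | h <;> subst h <;> rcases hdx with h2 | h2 | h2 <;> rw [h2, hcons] <;>
        first
          | exact ⟨2, by decide, by decide⟩
          | exact ⟨3, by decide, by decide⟩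
          | exact ⟨4, by decide, by decide⟩
    rcases hd2 with ⟨k, hk, hkey⟩
    exact ⟨c * k, mul_ne_zero hc hk, by rw [key, hkey, smul_smul]⟩

def fwd (z : List (Fin 2)) (u : Fin 2 → G) : Fin 2 → G :=
  z.foldl (fun v σ => (Bg σ).mulVec v) u

lemma fwd_nil (u) : fwd [] u = u := rfl
lemma fwd_cons (σ z u) : fwd (σ :: z) u = fwd z ((Bg σ).mulVec u) := rfl

lemma fwd_smul (z : List (Fin 2)) (c : G) (u) : fwd z (c • u) = c • fwd z u := by
  induction z generalizing u with
  | nil => rfl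
  | cons σ z ih => rw [fwd_cons, fwd_cons, Matrix.mulVec_smul, ih]

lemma psi_fwd : ∀ (z : List (Fin 2)) u, ψv (fwd z u) = sfwd z (ψv u) := by
  intro z
  induction z with
  | nil => intro u; rfl
  | cons σ z ih => intro u; rw [fwd_cons, sfwd_cons, ih, psi_mulVec, psi_Bg]

lemma BgBtg : ∀ σ, Bg σ * Btg σ = (5 : G) • 1 := by decide

lemma BBt (σ : Fin 2) (u : Fin 2 → G) :
    (Bg σ).mulVec ((Btg σ).mulVec u) = (5 : G) • u := by
  rw [Matrix.mulVec_mulVec, BgBtg, Matrix.smul_mulVec, Matrix.one_mulVec]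

lemma mismatch (z x : List (Fin 2))
    (h : ∀ σ z' x', z = σ :: z' → x = σ :: x' → False)
    (hne : ¬(z = [] ∧ x = [])) : fwd z (wv x) 0 ≠ 0 := by
  obtain ⟨c, hc, hx⟩ := wv_shadow x
  have hψ : ψ (fwd z (wv x) 0) = c * sfwd z (dY x) 0 := by
    have : ψv (fwd z (wv x)) = c • sfwd z (dY x) := by
      rw [psi_fwd, hx, sfwd_smul]
    exact congrFun this 0
  have hch : sfwd z (dY x) 0 ≠ 0 := by
    apply chain
    · rcases x with _ | ⟨τ, y⟩
      · exact Or.inr (Or.inr (Or.inl rfl))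
      · rcases eq_or_ne τ 0 with hτ | hτ
        · exact Or.inr (Or.inr (Or.inr (Or.inl (by simp [dY, hτ]))))
        · have : τ = 1 := by omega
          exact Or.inr (Or.inr (Or.inr (Or.inr (by simp [dY, this]))))
    · intro hz0
      rcases z with _ | ⟨σ, z'⟩
      · simp at hz0
      · simp at hz0
        subst hz0
        rcases x with _ | ⟨τ, y⟩
        · decide
        · rcases eq_or_ne τ 0 with hτ | hτ
          · exact absurd (h 0 z' y rfl (by rw [hτ])) (by simp)
          · have : τ = 1 := by omega
            simp [dY, this]; decide
    · intro hz1
      rcases z with _ | ⟨σ, z'⟩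
      · simp at hz1
      · simp at hz1
        subst hz1
        rcases x with _ | ⟨τ, y⟩
        · decide
        · rcases eq_or_ne τ 1 with hτ | hτ
          · exact absurd (h 1 z' y rfl (by rw [hτ])) (by simp)
          · have : τ = 0 := by omega
            simp [dY, this]; decide
    · intro hznil
      subst hznil
      rcases x with _ | ⟨τ, y⟩
      · exact absurd ⟨rfl, rfl⟩ hne
      · rcases eq_or_ne τ 0 with hτ | hτ <;> simp [dY, hτ] <;> decide
  intro h0
  rw [h0, map_zero] at hψ
  exact (mul_ne_zero hc hch) hψ.symm

lemma mainG : ∀ (z x : List (Fin 2)), fwd z (wv x) 0 = 0 ↔ z = x := by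
  intro z
  induction z with
  | nil =>
    intro x
    rcases x with _ | ⟨τ, y⟩
    · simp [fwd_nil, wv_nil]
    · simp only [fwd_nil]
      constructor
      · intro h
        exact absurd h (mismatch [] (τ :: y) (fun σ z' x' hz => by simp at hz) (by simp))
      · intro h; simp at h
  | cons σ z ih =>
    intro x
    rcases x with _ | ⟨τ, y⟩
    · constructor
      · intro h
        exact absurd h (mismatch (σ :: z) [] (fun σ' z' x' _ hx => by simp at hx) (by simp))
      · intro h; simp at h
    · rcases eq_or_ne σ τ with hστ | hστ
      · subst hστ
        rw [fwd_cons, wv_cons, BBt, fwd_smul]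
        have h5 : (5 : G) ≠ 0 := by decide
        simp only [Pi.smul_apply, smul_eq_mul]
        rw [mul_eq_zero]
        simp only [h5, false_or]
        rw [ih y]
        simp
      · constructor
        · intro h
          refine absurd h (mismatch (σ :: z) (τ :: y) ?_ (by simp))
          intro σ' z' x' hz hx
          rw [List.cons_eq_cons] at hz hx
          exact hστ (hz.1.symm ▸ hx.1.symm ▸ rfl)
        · intro h
          rw [List.cons_eq_cons] at h
          exact absurd h.1 hστ

open Complex GaussianInt

noncomputable def cinv : ℂ := ((Real.sqrt 5 : ℝ) : ℂ)⁻¹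

def Bc : Fin 2 → Matrix (Fin 2) (Fin 2) ℂ := fun σ => (Bg σ).map toComplex

noncomputable def Uc : Fin 2 → Matrix (Fin 2) (Fin 2) ℂ := fun σ => cinv • Bc σ

def θv (u : Fin 2 → G) : Fin 2 → ℂ := fun j => toComplex (u j)

lemma θ_mulVec (M : Matrix (Fin 2) (Fin 2) G) (v : Fin 2 → G) :
    θv (M.mulVec v) = (M.map toComplex).mulVec (θv v) := by
  funext j
  simp [θv, Matrix.mulVec, dotProduct, Fin.sum_univ_two, Matrix.map_apply]

lemma starG : ∀ σ, (Bg σ)ᴴ = Btg σ := by decide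

lemma starBc (σ : Fin 2) : star (Bc σ) = (Btg σ).map toComplex := by
  rw [Bc, ← starG σ]
  exact (Matrix.conjTranspose_map toComplex (fun g => (toComplex_star g).trans rfl)).symm

lemma five_map : ((5 : G) • (1 : Matrix (Fin 2) (Fin 2) G)).map toComplex
    = (5 : ℂ) • (1 : Matrix (Fin 2) (Fin 2) ℂ) := by
  ext i j
  fin_cases i <;> fin_cases j <;>
    simp [Matrix.map_apply, Matrix.one_apply, map_ofNat]

lemma BcstarBc (σ : Fin 2) : Bc σ * star (Bc σ) = (5 : ℂ) • 1 := by
  rw [starBc, Bc, ← Matrix.map_mul, BgBtg, five_map]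

lemma sqrt5_ne : (Real.sqrt 5 : ℝ) ≠ 0 := by
  positivity

lemma cinv_ne : cinv ≠ 0 := by
  simp [cinv, Complex.ofReal_ne_zero, sqrt5_ne]

lemma cinv_mul_self : cinv * cinv = (5 : ℂ)⁻¹ := by
  rw [cinv, ← mul_inv]
  norm_cast
  rw [Real.mul_self_sqrt (by norm_num)]
  norm_num

lemma Uc_unitary : ∀ σ, Uc σ ∈ Matrix.unitaryGroup (Fin 2) ℂ := by
  intro σ
  rw [Matrix.mem_unitaryGroup_iff]
  rw [Uc, star_smul, Matrix.smul_mul, Matrix.mul_smul, BcstarBc]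
  rw [smul_smul, smul_smul]
  have : star cinv = cinv := by
    simp [cinv, ← Complex.ofReal_inv, Complex.conj_ofReal]
  rw [this, cinv_mul_self]
  norm_num

def Btc : Fin 2 → Matrix (Fin 2) (Fin 2) ℂ :=
  ![!![1, -2; 2, 1], !![1, -(2 * Complex.I); -(2 * Complex.I), 1]]

lemma gi_toComplex : toComplex gi = Complex.I := by
  simp [gi, toComplex_def]

lemma mapBt : ∀ σ, (Btg σ).map toComplex = Btc σ := by
  intro σ
  fin_cases σ <;> ext i j <;> fin_cases i <;> fin_cases j <;>
    simp [Btg, Btc, Matrix.map_apply, map_ofNat, gi_toComplex]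

lemma step_norm (σ : Fin 2) (v : Fin 2 → ℂ) :
    Complex.normSq ((Btc σ).mulVec v 0) + Complex.normSq ((Btc σ).mulVec v 1) =
      5 * (Complex.normSq (v 0) + Complex.normSq (v 1)) := by
  have h : σ = 0 ∨ σ = 1 := by omega
  rcases h with h | h <;> subst h <;>
    simp [Btc, Matrix.mulVec, dotProduct, Fin.sum_univ_two,
      Complex.normSq_apply, Complex.add_re, Complex.add_im,
      Complex.mul_re, Complex.mul_im] <;>
    ring

lemma norm_wv : ∀ x : List (Fin 2),
    Complex.normSq (θv (wv x) 0) + Complex.normSq (θv (wv x) 1) = 5 ^ x.length := by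
  intro x
  induction x with
  | nil =>
    simp [θv, wv_nil]
  | cons σ x ih =>
    rw [wv_cons, θ_mulVec, mapBt, List.length_cons, pow_succ, step_norm, ih]
    ring

lemma fold_bridge : ∀ (z : List (Fin 2)) (a : ℂ) (u : Fin 2 → G),
    z.foldl (fun v σ => (Uc σ).mulVec v) (a • θv u)
      = (a * cinv ^ z.length) • θv (fwd z u) := by
  intro z
  induction z with
  | nil => intro a u; simp [fwd_nil]
  | cons σ z ih =>
    intro a u
    have h1 : (Uc σ).mulVec (a • θv u) = (a * cinv) • θv ((Bg σ).mulVec u) := by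
      rw [Matrix.mulVec_smul, Uc, Matrix.smul_mulVec, θ_mulVec, ← Bc]
      rw [smul_smul]
    show List.foldl _ ((Uc σ).mulVec (a • θv u)) z = _
    rw [h1, ih (a * cinv) ((Bg σ).mulVec u), fwd_cons, List.length_cons, pow_succ]
    congr 1
    ring

end Stmt10Aux

open Stmt10Aux

/-- for every word `x` over `{a, b}` (here `Fin 2`), the complement of
the singleton language `{x}` is recognized by a 2-state nondeterministic MCQFA: some
2-state MCQFA accepts a word `z` with probability `0` iff `z = x`. -/
theorem stmt10 (x : List (Fin 2)) :
    ∃ (U : Fin 2 → Matrix (Fin 2) (Fin 2) ℂ) (u₀ : Fin 2 → ℂ) (S : Finset (Fin 2)),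
      (∀ τ, U τ ∈ Matrix.unitaryGroup (Fin 2) ℂ) ∧
      (∑ j, ‖u₀ j‖ ^ 2 = 1) ∧
      ∀ z : List (Fin 2),
        (∑ j ∈ S, ‖(z.foldl (fun v c => (U c).mulVec v) u₀) j‖ ^ 2 = 0 ↔
          z = x) := by
  classical
  refine ⟨Uc, (cinv ^ x.length) • θv (wv x), {0}, Uc_unitary, ?_, ?_⟩
  · have habs : ‖cinv‖ = (Real.sqrt 5)⁻¹ := by
      rw [cinv, ← Complex.ofReal_inv, Complex.norm_real, Real.norm_eq_abs]
      exact abs_of_nonneg (by positivity)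
    rw [Fin.sum_univ_two]
    simp only [Pi.smul_apply, smul_eq_mul, norm_mul, norm_pow, mul_pow, habs,
      Complex.sq_norm]
    rw [← mul_add, norm_wv]
    have h5 : ((Real.sqrt 5)⁻¹ : ℝ) ^ 2 = (5 : ℝ)⁻¹ := by
      rw [inv_pow, Real.sq_sqrt (by norm_num : (0:ℝ) ≤ 5)]
    calc ((Real.sqrt 5)⁻¹ ^ x.length) ^ 2 * 5 ^ x.length
        = (((Real.sqrt 5)⁻¹ : ℝ) ^ 2) ^ x.length * 5 ^ x.length := by ring
      _ = ((5:ℝ)⁻¹) ^ x.length * 5 ^ x.length := by rw [h5]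
      _ = 1 := by rw [← mul_pow, inv_mul_cancel₀ (by norm_num : (5:ℝ) ≠ 0), one_pow]
  · intro z
    rw [Finset.sum_singleton, fold_bridge z (cinv ^ x.length) (wv x)]
    have hs : cinv ^ x.length * cinv ^ z.length ≠ 0 :=
      mul_ne_zero (pow_ne_zero _ cinv_ne) (pow_ne_zero _ cinv_ne)
    rw [Pi.smul_apply, smul_eq_mul,
      pow_eq_zero_iff (by norm_num : 2 ≠ 0), norm_eq_zero, mul_eq_zero]
    simp only [hs, false_or]
    rw [show (θv (fwd z (wv x)) 0 = 0) ↔ (fwd z (wv x) 0 = 0) from GaussianInt.toComplex_eq_zero]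
    exact mainG z x
end

section
/- Let d ≥ 0 and t > 0 be integers. Let M = [[1 − 1/t, −1/t], [1/t, 1 + 1/t]] ∈ M₂(ℝ) (an affine matrix: each column sums to 1) and let v₀ = (1 + d/t, −d/t) ∈ ℝ² (an affine vector). Then for every j ≥ 0, M^j v₀ = (1 + (d − j)/t, (j − d)/t); in particular M^d v₀ = (1, 0) and M^{d+t} v₀ = (0, 1). Consequently the 2-state AfA with initial vector v₀, matrix M for the single symbol a, identity end-marker matrix, and accepting coordinate 1 accepts a^d with probability 1 and accepts a^{d+t} with probability 0, separating the unary pair (a^d, a^{d+t}) exactly. -/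
open Matrix

/-- the 2-state AfA `S_{d,t}` (matrix `M` below, initial vector
`(1 + d/t, -d/t)`, identity end-marker, accepting coordinate 1) separates the
unary pair `(a^d, a^{d+t})` exactly. -/
theorem stmt11 (d t : ℕ) (ht : 0 < t) :
    let M : Matrix (Fin 2) (Fin 2) ℝ :=
      !![1 - 1 / (t : ℝ), -(1 / (t : ℝ)); 1 / (t : ℝ), 1 + 1 / (t : ℝ)]
    let v₀ : Fin 2 → ℝ := ![1 + (d : ℝ) / t, -((d : ℝ) / t)]
    (∀ j : ℕ, (M ^ j).mulVec v₀ = ![1 + ((d : ℝ) - j) / t, ((j : ℝ) - d) / t]) ∧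
    (M ^ d).mulVec v₀ = ![1, 0] ∧
    (M ^ (d + t)).mulVec v₀ = ![0, 1] ∧
    |(M ^ d).mulVec v₀ 0| / (|(M ^ d).mulVec v₀ 0| + |(M ^ d).mulVec v₀ 1|) = 1 ∧
    |(M ^ (d + t)).mulVec v₀ 0| /
      (|(M ^ (d + t)).mulVec v₀ 0| + |(M ^ (d + t)).mulVec v₀ 1|) = 0 := by
  intro M v₀
  have ht' : (t : ℝ) ≠ 0 := Nat.cast_ne_zero.mpr ht.ne'
  have key : ∀ j : ℕ, (M ^ j).mulVec v₀ = ![1 + ((d : ℝ) - j) / t, ((j : ℝ) - d) / t] := by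
    intro j
    induction j with
    | zero =>
      simp only [pow_zero, one_mulVec, Nat.cast_zero]
      funext i
      fin_cases i <;> simp [v₀] <;> ring
    | succ n ih =>
      rw [pow_succ', ← mulVec_mulVec, ih]
      funext i
      fin_cases i <;>
        simp [M, mulVec, dotProduct, Fin.sum_univ_two, Nat.cast_succ] <;>
        field_simp <;> ring
  have hd : (M ^ d).mulVec v₀ = ![1, 0] := by
    rw [key d]
    funext i; fin_cases i <;> simp
  have hdt : (M ^ (d + t)).mulVec v₀ = ![0, 1] := by
    rw [key (d + t)]
    funext i; fin_cases i <;> simp <;> push_cast <;> simp [neg_div, ht', ht.ne']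
  refine ⟨key, hd, hdt, ?_, ?_⟩ <;> simp only [hd, hdt] <;> norm_num
end

section
/- Let x and y be any two distinct binary words (over {0, 1}). Then there exist real 2×2 affine matrices A_0, A_1, A_$ (each column summing to 1) and an affine vector v₀ ∈ ℝ² such that the final vector on x, namely A_$ A_{x_n}⋯A_{x₁} v₀, equals (0, 1), and the final vector on y equals (1, 0). Consequently, taking coordinate 2 as the only accepting coordinate, this 2-state AfA accepts x with probability 1 and accepts y with probability 0: any pair of distinct words is separated by a 2-state AfA exactly. -/
open Matrix

noncomputable def affM (a b : ℝ) : Matrix (Fin 2) (Fin 2) ℝ :=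
  !![a + b, b; 1 - a - b, 1 - b]

lemma affM_col (a b : ℝ) (c : Fin 2) : ∑ r, affM a b r c = 1 := by
  fin_cases c <;> simp [affM, Fin.sum_univ_two]

lemma affM_mulVec (a b t : ℝ) :
    (affM a b).mulVec ![t, 1 - t] = ![a * t + b, 1 - (a * t + b)] := by
  funext i
  fin_cases i <;>
    simp [affM, Matrix.mulVec, dotProduct, Fin.sum_univ_two] <;> ring

noncomputable def gstep (t : ℝ) (σ : Fin 2) : ℝ := (t + (σ : ℝ) + 1) / 4

noncomputable def Eenc (z : List (Fin 2)) : ℝ := z.foldl gstep 0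

lemma Eenc_append (w : List (Fin 2)) (σ : Fin 2) :
    Eenc (w ++ [σ]) = (Eenc w + (σ : ℝ) + 1) / 4 := by
  simp [Eenc, List.foldl_append, gstep]

lemma fin2_le (σ : Fin 2) : (0 : ℝ) ≤ (σ : ℝ) ∧ ((σ : ℝ)) ≤ 1 := by
  fin_cases σ <;> norm_num

lemma Eenc_bounds (z : List (Fin 2)) : 0 ≤ Eenc z ∧ Eenc z < 1 := by
  induction z using List.reverseRecOn with
  | nil => simp [Eenc]
  | append_singleton w σ ih =>
    rw [Eenc_append]
    obtain ⟨h1, h2⟩ := fin2_le σ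
    constructor <;> nlinarith [ih.1, ih.2]

lemma Eenc_inj : ∀ x y : List (Fin 2), Eenc x = Eenc y → x = y := by
  intro x
  induction x using List.reverseRecOn with
  | nil =>
    intro y hy
    induction y using List.reverseRecOn with
    | nil => rfl
    | append_singleton w σ _ =>
      exfalso
      rw [Eenc_append] at hy
      have h0 : 0 ≤ Eenc w := (Eenc_bounds w).1
      have hσ := (fin2_le σ).1
      have h00 : Eenc ([] : List (Fin 2)) = 0 := by simp [Eenc]
      rw [h00] at hy
      nlinarith
  | append_singleton w a ih =>
    intro y hy
    induction y using List.reverseRecOn with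
    | nil =>
      exfalso
      rw [Eenc_append] at hy
      have h0 : 0 ≤ Eenc w := (Eenc_bounds w).1
      have hσ := (fin2_le a).1
      have h00 : Eenc ([] : List (Fin 2)) = 0 := by simp [Eenc]
      rw [h00] at hy
      nlinarith
    | append_singleton w' b _ =>
      rw [Eenc_append, Eenc_append] at hy
      have h1 := Eenc_bounds w
      have h2 := Eenc_bounds w'
      have key : Eenc w + (a:ℝ) = Eenc w' + (b:ℝ) := by linarith
      have hab : a = b := by
        fin_cases a <;> fin_cases b <;>
          first
          | rfl
          | (exfalso; push_cast at key; linarith [h1.1, h1.2, h2.1, h2.2])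
      subst hab
      have hww : Eenc w = Eenc w' := by linarith
      rw [ih w' hww]

lemma foldl_eval :
    ∀ (z : List (Fin 2)) (t : ℝ),
      z.foldl (fun v (c : Fin 2) => (affM (1/4) (((c:ℝ) + 1)/4)).mulVec v) ![t, 1 - t]
        = ![z.foldl gstep t, 1 - z.foldl gstep t] := by
  intro z
  induction z with
  | nil => intro t; simp
  | cons σ w ih =>
    intro t
    have h1 : (affM (1/4) (((σ:ℝ) + 1)/4)).mulVec ![t, 1 - t]
        = ![gstep t σ, 1 - gstep t σ] := by
      rw [affM_mulVec]
      have : (1/4 : ℝ) * t + ((σ:ℝ) + 1)/4 = gstep t σ := by unfold gstep; ring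
      rw [this]
    simp only [List.foldl_cons, h1, ih]

/-- any pair of distinct binary words (lists over `Fin 2`) is separated
exactly by a 2-state AfA: there are affine matrices `A₀, A₁, A$` and an affine initial
vector `v₀` such that the final vector on `x` is `(0,1)` and on `y` is `(1,0)`; with
accepting coordinate `1` this accepts `x` with probability 1 and `y` with probability 0. -/
theorem stmt13 (x y : List (Fin 2)) (hxy : x ≠ y) :
    ∃ (A : Fin 2 → Matrix (Fin 2) (Fin 2) ℝ) (Ad : Matrix (Fin 2) (Fin 2) ℝ)
      (v₀ : Fin 2 → ℝ),
      (∀ σ : Fin 2, ∀ c : Fin 2, ∑ r, A σ r c = 1) ∧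
      (∀ c : Fin 2, ∑ r, Ad r c = 1) ∧
      (∑ i, v₀ i = 1) ∧
      Ad.mulVec (x.foldl (fun v c => (A c).mulVec v) v₀) = ![0, 1] ∧
      Ad.mulVec (y.foldl (fun v c => (A c).mulVec v) v₀) = ![1, 0] ∧
      (|Ad.mulVec (x.foldl (fun v c => (A c).mulVec v) v₀) 1| /
        (∑ i, |Ad.mulVec (x.foldl (fun v c => (A c).mulVec v) v₀) i|) = 1) ∧
      (|Ad.mulVec (y.foldl (fun v c => (A c).mulVec v) v₀) 1| /
        (∑ i, |Ad.mulVec (y.foldl (fun v c => (A c).mulVec v) v₀) i|) = 0) := by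
  have hne : Eenc y - Eenc x ≠ 0 := by
    intro h
    exact hxy (Eenc_inj x y (by linarith [sub_eq_zero.mp h]))
  refine ⟨fun σ => affM (1/4) (((σ:ℝ) + 1)/4),
    affM ((Eenc y - Eenc x)⁻¹) (-Eenc x/(Eenc y - Eenc x)), ![0, 1],
    fun σ c => affM_col _ _ c, fun c => affM_col _ _ c, by simp [Fin.sum_univ_two],
    ?_, ?_, ?_, ?_⟩ <;>
  · have hfx : x.foldl (fun v (c : Fin 2) => (affM (1/4) (((c:ℝ) + 1)/4)).mulVec v) ![(0:ℝ), 1]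
        = ![Eenc x, 1 - Eenc x] := by
      have := foldl_eval x 0
      rw [show (1:ℝ) - 0 = 1 from by ring] at this
      exact this
    have hfy : y.foldl (fun v (c : Fin 2) => (affM (1/4) (((c:ℝ) + 1)/4)).mulVec v) ![(0:ℝ), 1]
        = ![Eenc y, 1 - Eenc y] := by
      have := foldl_eval y 0
      rw [show (1:ℝ) - 0 = 1 from by ring] at this
      exact this
    have hX : (affM ((Eenc y - Eenc x)⁻¹) (-Eenc x/(Eenc y - Eenc x))).mulVec
        ![Eenc x, 1 - Eenc x] = ![0, 1] := by
      rw [affM_mulVec]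
      have h : (Eenc y - Eenc x)⁻¹ * Eenc x + (-Eenc x/(Eenc y - Eenc x)) = 0 := by
        field_simp; ring
      rw [h]; norm_num
    have hY : (affM ((Eenc y - Eenc x)⁻¹) (-Eenc x/(Eenc y - Eenc x))).mulVec
        ![Eenc y, 1 - Eenc y] = ![1, 0] := by
      rw [affM_mulVec]
      have h : (Eenc y - Eenc x)⁻¹ * Eenc y + (-Eenc x/(Eenc y - Eenc x)) = 1 := by
        field_simp; ring
      rw [h]; norm_num
    simp only [hfx, hfy, hX, hY, Fin.sum_univ_two]
    try norm_num
end

section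
/- Let x be a binary word. Consider the 2-state AfA with A_0 = [[2, 0], [−1, 1]], A_1 = [[3, 1], [−2, 0]], initial vector v₀ = (1, 0), end-marker matrix A_$ = [[e(x) − 1, e(x)], [2 − e(x), 1 − e(x)]], and accepting coordinate 2. Then for every binary word z, the final vector is v_f^z = (e(x) − e(z), 1 − e(x) + e(z)); consequently the AfA accepts x with probability 1 and accepts every binary word z ≠ x with probability at most 2/3. -/
open Matrix

/-- `e(z)`: the value of the binary numeral `1z`, i.e. `e(ε) = 1`, `e(zσ) = 2·e(z) + σ`. -/
def binVal (z : List (Fin 2)) : ℕ :=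
  z.foldl (fun n σ => 2 * n + σ.val) 1

private lemma foldl_ge_one : ∀ (z : List (Fin 2)) (n : ℕ), 1 ≤ n →
    1 ≤ z.foldl (fun n σ => 2 * n + σ.val) n
  | [], n, h => h
  | σ :: z, n, h => foldl_ge_one z (2 * n + σ.val) (by omega)

private lemma binVal_pos (z : List (Fin 2)) : 1 ≤ binVal z := foldl_ge_one z 1 le_rfl

private lemma binVal_concat (z : List (Fin 2)) (σ : Fin 2) :
    binVal (z ++ [σ]) = 2 * binVal z + σ.val := by
  simp [binVal, List.foldl_append]

private lemma binVal_inj : ∀ {z x : List (Fin 2)}, binVal z = binVal x → z = x := by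
  intro z
  induction z using List.reverseRecOn with
  | nil =>
    intro x
    induction x using List.reverseRecOn with
    | nil => intro _; rfl
    | append_singleton x σ _ =>
      intro h
      have := binVal_pos x
      have hσ := σ.isLt
      have he : binVal ([] : List (Fin 2)) = 1 := rfl
      rw [binVal_concat] at h
      omega
  | append_singleton z σ ih =>
    intro x
    induction x using List.reverseRecOn with
    | nil =>
      intro h
      have := binVal_pos z
      have hσ := σ.isLt
      have he : binVal ([] : List (Fin 2)) = 1 := rfl
      rw [binVal_concat] at h
      omega
    | append_singleton x τ _ =>
      intro h
      rw [binVal_concat, binVal_concat] at h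
      have hσ := σ.isLt
      have hτ := τ.isLt
      have h1 : binVal z = binVal x := by omega
      have h2 : σ.val = τ.val := by omega
      rw [ih h1, Fin.val_injective h2]

private lemma foldl_vec :
    ∀ (z : List (Fin 2)) (n : ℕ),
      z.foldl (fun v c => ((![!![2, 0; -1, 1], !![3, 1; -2, 0]] : Fin 2 → Matrix (Fin 2) (Fin 2) ℝ) c).mulVec v)
        ![(n : ℝ), 1 - n]
      = ![((z.foldl (fun n σ => 2 * n + σ.val) n : ℕ) : ℝ),
          1 - ((z.foldl (fun n σ => 2 * n + σ.val) n : ℕ) : ℝ)]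
  | [], n => rfl
  | σ :: z, n => by
    rw [List.foldl_cons, List.foldl_cons]
    have step : ((![!![2, 0; -1, 1], !![3, 1; -2, 0]] : Fin 2 → Matrix (Fin 2) (Fin 2) ℝ) σ).mulVec
        ![(n : ℝ), 1 - n] = ![((2 * n + σ.val : ℕ) : ℝ), 1 - ((2 * n + σ.val : ℕ) : ℝ)] := by
      fin_cases σ <;>
        · funext i
          fin_cases i <;>
            simp [Matrix.mulVec, dotProduct, Fin.sum_univ_two] <;> push_cast <;> ring
    rw [step, foldl_vec z (2 * n + σ.val)]

/-- the 2-state AfA `B_x` (matrices `A₀, A₁`, initial vector `(1,0)`,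
end-marker matrix `[[e(x)-1, e(x)],[2-e(x), 1-e(x)]]`, accepting coordinate 2) yields
the final vector `(e(x) - e(z), 1 - e(x) + e(z))` on any input `z`; it accepts `x` with
probability 1 and every `z ≠ x` with probability at most `2/3`. -/
theorem stmt14 (x : List (Fin 2)) :
    let A : Fin 2 → Matrix (Fin 2) (Fin 2) ℝ :=
      ![!![2, 0; -1, 1], !![3, 1; -2, 0]]
    let Ad : Matrix (Fin 2) (Fin 2) ℝ :=
      !![(binVal x : ℝ) - 1, (binVal x : ℝ); 2 - (binVal x : ℝ), 1 - (binVal x : ℝ)]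
    let vf : List (Fin 2) → Fin 2 → ℝ :=
      fun z => Ad.mulVec (z.foldl (fun v c => (A c).mulVec v) ![1, 0])
    (∀ z : List (Fin 2),
      vf z = ![(binVal x : ℝ) - (binVal z : ℝ), 1 - (binVal x : ℝ) + (binVal z : ℝ)]) ∧
    (|vf x 1| / (|vf x 0| + |vf x 1|) = 1) ∧
    (∀ z : List (Fin 2), z ≠ x → |vf z 1| / (|vf z 0| + |vf z 1|) ≤ 2 / 3) := by
  intro A Ad vf
  have key : ∀ z : List (Fin 2),
      vf z = ![(binVal x : ℝ) - (binVal z : ℝ), 1 - (binVal x : ℝ) + (binVal z : ℝ)] := by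
    intro z
    have h0 : (![1, 0] : Fin 2 → ℝ) = ![((1 : ℕ) : ℝ), 1 - ((1 : ℕ) : ℝ)] := by
      funext i; fin_cases i <;> norm_num
    show Ad.mulVec (z.foldl (fun v c => (A c).mulVec v) ![1, 0]) = _
    rw [h0, foldl_vec z 1]
    funext i
    fin_cases i <;>
      simp [Ad, Matrix.mulVec, dotProduct, Fin.sum_univ_two, binVal] <;> ring
  refine ⟨key, ?_, ?_⟩
  · rw [key x]
    norm_num
  · intro z hz
    rw [key z]
    have hne : binVal z ≠ binVal x := fun h => hz (binVal_inj h)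
    set m := binVal x with hm
    set k := binVal z with hk
    simp only [Matrix.cons_val_zero, Matrix.cons_val_one, Matrix.head_cons]
    rcases lt_or_gt_of_ne hne with h | h
    · -- k < m
      have h1 : (k : ℝ) + 1 ≤ (m : ℝ) := by exact_mod_cast h
      rw [abs_of_nonpos (by linarith), abs_of_nonneg (by linarith)]
      rw [div_le_div_iff₀ (by linarith) (by norm_num)]
      linarith
    · -- m < k
      have h1 : (m : ℝ) + 1 ≤ (k : ℝ) := by exact_mod_cast h
      rw [abs_of_nonneg (by linarith), abs_of_nonpos (by linarith)]
      rw [div_le_div_iff₀ (by linarith) (by norm_num)]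
      linarith
end

section
/- Let Σ = {0, 1, …, k−1} be a finite alphabet with k ≥ 2 symbols and let x be a word over Σ. Then there exist real 2×2 affine matrices A_σ (σ ∈ Σ) and A_$ (each column summing to 1), an affine vector v₀ ∈ ℝ², and an accepting coordinate such that the resulting 2-state AfA accepts x with probability 1 and accepts every word z ≠ x over Σ with probability at most 2/3. (In particular, for σ ∈ Σ one may take A_σ = [[k + σ, σ], [1 − k − σ, 1 − σ]], under which the state vector after reading a word z equals (e_k(z), 1 − e_k(z)), where e_k(z) is the value of the k-ary numeral 1z.) -/
open Matrix

namespace Stmt15Aux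

variable (k : ℕ)

def step (a : ℕ) (c : Fin k) : ℕ := k * a + c

lemma foldl_step (z : List (Fin k)) :
    ∀ a, z.foldl (step k) a = a * k ^ z.length + z.foldl (step k) 0 := by
  induction z with
  | nil => intro a; simp
  | cons c z ih =>
    intro a
    simp only [List.foldl_cons, List.length_cons, step]
    rw [ih (k * a + c), ih (k * 0 + c)]
    ring

lemma val_lt (hk : 1 ≤ k) : ∀ z : List (Fin k), z.foldl (step k) 0 < k ^ z.length := by
  intro z
  induction z with
  | nil => simpa using Nat.one_pos
  | cons c z ih =>
    simp only [List.foldl_cons, List.length_cons, step, Nat.mul_zero, Nat.zero_add]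
    rw [foldl_step]
    calc (c : ℕ) * k ^ z.length + z.foldl (step k) 0
        < (c : ℕ) * k ^ z.length + k ^ z.length := by omega
      _ = ((c : ℕ) + 1) * k ^ z.length := by ring
      _ ≤ k * k ^ z.length := Nat.mul_le_mul_right _ (by exact c.isLt)
      _ = k ^ (z.length + 1) := by ring

lemma val_inj (hk : 1 ≤ k) : ∀ z w : List (Fin k), z.length = w.length →
    z.foldl (step k) 0 = w.foldl (step k) 0 → z = w := by
  intro z
  induction z with
  | nil => intro w hl _; cases w with
    | nil => rfl
    | cons d w => simp at hl
  | cons c z ih =>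
    intro w hl he
    cases w with
    | nil => simp at hl
    | cons d w =>
      simp only [List.length_cons, Nat.add_right_cancel_iff] at hl
      simp only [List.foldl_cons, step, Nat.mul_zero, Nat.zero_add] at he
      rw [foldl_step k z ((c:ℕ)), foldl_step k w ((d:ℕ)), hl] at he
      have hz := val_lt k hk z
      have hw := val_lt k hk w
      rw [hl] at hz
      have hcd : (c : ℕ) = d := by
        rcases lt_trichotomy (c : ℕ) (d : ℕ) with h | h | h
        · exfalso
          have : (c : ℕ) * k ^ w.length + k ^ w.length ≤ d * k ^ w.length := by
            have : ((c:ℕ) + 1) * k ^ w.length ≤ d * k ^ w.length :=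
              Nat.mul_le_mul_right _ h
            linarith [this]
          omega
        · exact h
        · exfalso
          have : (d : ℕ) * k ^ w.length + k ^ w.length ≤ c * k ^ w.length := by
            have : ((d:ℕ) + 1) * k ^ w.length ≤ c * k ^ w.length :=
              Nat.mul_le_mul_right _ h
            linarith [this]
          omega
      have hval : z.foldl (step k) 0 = w.foldl (step k) 0 := by
        rw [hcd] at he; omega
      have heq : z = w := ih w hl hval
      rw [heq]
      congr 1
      exact Fin.ext hcd

def ee (z : List (Fin k)) : ℕ := z.foldl (step k) 1

lemma ee_lt_of_length_lt (hk : 2 ≤ k) {z w : List (Fin k)} (h : z.length < w.length) :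
    ee k z < ee k w := by
  have h1 : 1 ≤ k := by omega
  have hz : ee k z < 2 * k ^ z.length := by
    unfold ee; rw [foldl_step]
    have := val_lt k h1 z
    omega
  have hw : k ^ w.length ≤ ee k w := by
    unfold ee; rw [foldl_step]; omega
  calc ee k z < 2 * k ^ z.length := hz
    _ ≤ k * k ^ z.length := Nat.mul_le_mul_right _ hk
    _ = k ^ (z.length + 1) := by ring
    _ ≤ k ^ w.length := Nat.pow_le_pow_right h1 (by omega)
    _ ≤ ee k w := hw

lemma ee_inj (hk : 2 ≤ k) {z w : List (Fin k)} (h : ee k z = ee k w) : z = w := by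
  have h1 : 1 ≤ k := by omega
  have hl : z.length = w.length := by
    rcases lt_trichotomy z.length w.length with hl | hl | hl
    · exact absurd h (Nat.ne_of_lt (ee_lt_of_length_lt k hk hl))
    · exact hl
    · exact absurd h.symm (Nat.ne_of_lt (ee_lt_of_length_lt k hk hl))
  have hv : z.foldl (step k) 0 = w.foldl (step k) 0 := by
    unfold ee at h
    rw [foldl_step k z 1, foldl_step k w 1, hl] at h
    omega
  exact val_inj k h1 z w hl hv

noncomputable def A (σ : Fin k) : Matrix (Fin 2) (Fin 2) ℝ :=
  ![![(k : ℝ) + (σ : ℕ), ((σ : ℕ) : ℝ)], ![1 - (k : ℝ) - (σ : ℕ), 1 - ((σ : ℕ) : ℝ)]]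

lemma evolve (z : List (Fin k)) :
    ∀ a : ℕ, z.foldl (fun v c => (A k c).mulVec v) ![(a : ℝ), 1 - (a : ℝ)] =
      ![((z.foldl (step k) a : ℕ) : ℝ), 1 - ((z.foldl (step k) a : ℕ) : ℝ)] := by
  induction z with
  | nil => intro a; rfl
  | cons c z ih =>
    intro a
    simp only [List.foldl_cons]
    have hstep : (A k c).mulVec ![(a : ℝ), 1 - (a : ℝ)] =
        ![((step k a c : ℕ) : ℝ), 1 - ((step k a c : ℕ) : ℝ)] := by
      funext i
      fin_cases i <;>
        simp [A, step, Matrix.mulVec, dotProduct, Fin.sum_univ_two] <;>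
        push_cast <;> ring
    rw [hstep, ih]

lemma ratio_bound (d : ℝ) (hd : 1 ≤ |d|) :
    |1 - 2 * d| / (|1 - 2 * d| + |2 * d|) ≤ 2 / 3 := by
  have h2 : |2 * d| = 2 * |d| := by rw [abs_mul]; norm_num
  have h1 : |1 - 2 * d| ≤ 1 + 2 * |d| := by
    calc |1 - 2 * d| ≤ |(1:ℝ)| + |2 * d| := abs_sub _ _
      _ = 1 + 2 * |d| := by rw [h2]; norm_num
  have hpos : 0 < |1 - 2 * d| + |2 * d| := by
    rw [h2]; have := abs_nonneg (1 - 2 * d); linarith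
  rw [div_le_iff₀ hpos, h2]
  nlinarith [abs_nonneg (1 - 2 * d)]


lemma hAd (E : ℝ) (n : ℕ) :
    Matrix.mulVec (![![2 * E - 1, 1 + 2 * E], ![2 * (1 - E), -(2 * E)]] : Matrix (Fin 2) (Fin 2) ℝ)
      ![(n : ℝ), 1 - (n : ℝ)] = ![1 + 2 * E - 2 * (n : ℝ), 2 * (n : ℝ) - 2 * E] := by
  funext i
  fin_cases i <;>
    simp [Matrix.mulVec, dotProduct, Fin.sum_univ_two] <;> ring

lemma hvec_main (z : List (Fin k)) :
    z.foldl (fun v c => (A k c).mulVec v) ![(1 : ℝ), 0] =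
      ![((ee k z : ℕ) : ℝ), 1 - ((ee k z : ℕ) : ℝ)] := by
  have hv0 : (![(1 : ℝ), 0] : Fin 2 → ℝ) = ![((1 : ℕ) : ℝ), 1 - ((1 : ℕ) : ℝ)] := by
    funext i; fin_cases i <;> norm_num
  rw [hv0, evolve k z 1]
  rfl

end Stmt15Aux

open Stmt15Aux

/-- over any alphabet `{0, 1, …, k-1}` (here `Fin k`, `k ≥ 2`), every
word `x` can be separated from all other words with one-sided bounded error `2/3`
by a 2-state AfA: `x` is accepted with probability 1 and every `z ≠ x` with
probability at most `2/3`. -/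
theorem stmt15 (k : ℕ) (hk : 2 ≤ k) (x : List (Fin k)) :
    ∃ (A : Fin k → Matrix (Fin 2) (Fin 2) ℝ) (Ad : Matrix (Fin 2) (Fin 2) ℝ)
      (v₀ : Fin 2 → ℝ) (j : Fin 2),
      (∀ σ : Fin k, ∀ c : Fin 2, ∑ r, A σ r c = 1) ∧
      (∀ c : Fin 2, ∑ r, Ad r c = 1) ∧
      (∑ i, v₀ i = 1) ∧
      (|Ad.mulVec (x.foldl (fun v c => (A c).mulVec v) v₀) j| /
        (∑ i, |Ad.mulVec (x.foldl (fun v c => (A c).mulVec v) v₀) i|) = 1) ∧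
      (∀ z : List (Fin k), z ≠ x →
        |Ad.mulVec (z.foldl (fun v c => (A c).mulVec v) v₀) j| /
          (∑ i, |Ad.mulVec (z.foldl (fun v c => (A c).mulVec v) v₀) i|) ≤ 2 / 3) := by
  set E : ℝ := (ee k x : ℝ) with hE
  refine ⟨Stmt15Aux.A k,
    ![![2 * E - 1, 1 + 2 * E], ![2 * (1 - E), -(2 * E)]],
    ![(1 : ℝ), 0], 0, ?_, ?_, ?_, ?_, ?_⟩
  · intro σ c
    fin_cases c <;> simp [Stmt15Aux.A, Fin.sum_univ_two] <;> ring
  · intro c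
    fin_cases c <;> simp [Fin.sum_univ_two] <;> ring
  · simp [Fin.sum_univ_two]
  case _ =>
    rw [hvec_main k x]
    rw [hAd E (ee k x)]
    rw [show (2 * E - 2 * (ee k x : ℝ)) = 0 by rw [hE]; ring]
    rw [show (1 + 2 * E - 2 * (ee k x : ℝ)) = 1 by rw [hE]; ring]
    simp [Fin.sum_univ_two]
  case _ =>
    intro z hz
    rw [hvec_main k z, hAd E (ee k z)]
    set a : ℝ := (ee k z : ℝ) with ha
    have hne : ee k z ≠ ee k x := fun h => hz (ee_inj k hk h)
    have hd : 1 ≤ |a - E| := by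
      have hzint : ((ee k z : ℤ) - (ee k x : ℤ)) ≠ 0 := by
        intro h; apply hne; omega
      have := Int.one_le_abs hzint
      have h2 : ((1 : ℤ) : ℝ) ≤ (|(ee k z : ℤ) - (ee k x : ℤ)| : ℤ) := by
        exact_mod_cast this
      rw [ha, hE]
      push_cast at h2 ⊢
      convert h2 using 2
    have e1 : (1 + 2 * E - 2 * a) = 1 - 2 * (a - E) := by ring
    have e2 : (2 * a - 2 * E) = 2 * (a - E) := by ring
    rw [e1, e2]
    simp only [Fin.sum_univ_two, Matrix.cons_val_zero, Matrix.cons_val_one, Matrix.head_cons]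
    exact ratio_bound (a - E) hd
end

section
/- Let x be a binary word and let k ≥ 1 be an integer. Then there exist real 3×3 affine matrices A_0, A_1, A_$ (each column summing to 1), an affine vector v₀ ∈ ℝ³, and an accepting coordinate such that the resulting 3-state AfA accepts x with probability 1 and accepts every binary word z ≠ x with probability at most 2/(2k + 1). (The construction arranges the final vector on input z to be (−k·i, (k+1)·i, 1 − i) where i = e(x) − e(z).) In particular, for every ε > 0 a 3-state AfA separates x from every other word with one-sided error smaller than ε. -/
open Matrix

noncomputable section

def eN (l : List (Fin 2)) : ℕ := l.foldl (fun m b => 2*m + b.val) 1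

lemma eN_append (l : List (Fin 2)) (b : Fin 2) :
    eN (l ++ [b]) = 2 * eN l + b.val := by
  simp [eN, List.foldl_append]

lemma eN_pos (l : List (Fin 2)) : 1 ≤ eN l := by
  induction l using List.reverseRecOn with
  | nil => simp [eN]
  | append_singleton l b ih => rw [eN_append]; omega

lemma eN_inj : ∀ a b : List (Fin 2), eN a = eN b → a = b := by
  intro a
  induction a using List.reverseRecOn with
  | nil =>
    intro b
    induction b using List.reverseRecOn with
    | nil => intro _; rfl
    | append_singleton m d _ =>
      intro h
      have := eN_pos m
      rw [eN_append] at h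
      have h0 : eN ([] : List (Fin 2)) = 1 := rfl
      omega
  | append_singleton l c ih =>
    intro b
    induction b using List.reverseRecOn with
    | nil =>
      intro h
      have := eN_pos l
      rw [eN_append] at h
      have h0 : eN ([] : List (Fin 2)) = 1 := rfl
      omega
    | append_singleton m d _ =>
      intro h
      rw [eN_append, eN_append] at h
      have hc : c.val < 2 := c.isLt
      have hd : d.val < 2 := d.isLt
      have h1 : c.val = d.val := by omega
      have h2 : eN l = eN m := by omega
      rw [ih m h2, Fin.ext h1]

def Amat (σ : Fin 2) : Matrix (Fin 3) (Fin 3) ℝ :=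
  !![2 + (σ.val : ℝ), (σ.val : ℝ), (σ.val : ℝ);
     0, 0, 0;
     -1 - (σ.val : ℝ), 1 - (σ.val : ℝ), 1 - (σ.val : ℝ)]

lemma Amat_mulVec (σ : Fin 2) (n : ℝ) :
    (Amat σ).mulVec ![n, 0, 1 - n] = ![2*n + (σ.val : ℝ), 0, 1 - (2*n + (σ.val : ℝ))] := by
  funext i
  fin_cases i <;>
    simp [Amat, Matrix.mulVec, dotProduct, Fin.sum_univ_three] <;> ring

lemma fold_eq (l : List (Fin 2)) : ∀ n : ℝ,
    l.foldl (fun v c => (Amat c).mulVec v) ![n, 0, 1 - n] =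
    ![l.foldl (fun m b => 2*m + (b.val : ℝ)) n, 0,
      1 - l.foldl (fun m b => 2*m + (b.val : ℝ)) n] := by
  induction l with
  | nil => intro n; simp
  | cons c t ih =>
    intro n
    simp only [List.foldl_cons, Amat_mulVec]
    exact ih _

lemma cast_fold (l : List (Fin 2)) : ∀ n : ℕ,
    ((l.foldl (fun m b => 2*m + b.val) n : ℕ) : ℝ) =
    l.foldl (fun m b => 2*m + (b.val : ℝ)) (n : ℝ) := by
  induction l with
  | nil => intro n; simp
  | cons c t ih =>
    intro n
    simp only [List.foldl_cons]
    rw [ih]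
    push_cast
    ring_nf

def Adm (E K : ℝ) : Matrix (Fin 3) (Fin 3) ℝ :=
  !![K - K*E, -(K*E), -(K*E);
     (K+1)*E - (K+1), (K+1)*E, (K+1)*E;
     2 - E, 1 - E, 1 - E]

lemma hfold (z : List (Fin 2)) :
    z.foldl (fun v c => (Amat c).mulVec v) ![1, 0, 0] = ![(eN z : ℝ), 0, 1 - (eN z : ℝ)] := by
  have h0 : (![1, 0, 0] : Fin 3 → ℝ) = ![1, 0, 1 - 1] := by norm_num
  rw [h0, fold_eq z 1, show ((eN z : ℕ) : ℝ) = z.foldl (fun m b => 2*m + (b.val : ℝ)) 1 by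
    rw [eN]; exact_mod_cast cast_fold z 1]

lemma hAd (E K e : ℝ) : (Adm E K).mulVec ![e, 0, 1 - e] =
    ![-(K * (E - e)), (K+1) * (E - e), 1 - (E - e)] := by
  funext i
  fin_cases i <;>
    simp [Adm, Matrix.mulVec, dotProduct, Fin.sum_univ_three] <;> ring

end

/-- for every binary word `x` and every integer `k ≥ 1`, a 3-state AfA
accepts `x` with probability 1 and every binary word `z ≠ x` with probability at most
`2/(2k+1)`; so 3-state AfAs separate `x` from all other words with arbitrarily small
one-sided error. -/
theorem stmt16 (x : List (Fin 2)) (k : ℕ) (hk : 1 ≤ k) :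
    ∃ (A : Fin 2 → Matrix (Fin 3) (Fin 3) ℝ) (Ad : Matrix (Fin 3) (Fin 3) ℝ)
      (v₀ : Fin 3 → ℝ) (j : Fin 3),
      (∀ σ : Fin 2, ∀ c : Fin 3, ∑ r, A σ r c = 1) ∧
      (∀ c : Fin 3, ∑ r, Ad r c = 1) ∧
      (∑ i, v₀ i = 1) ∧
      (|Ad.mulVec (x.foldl (fun v c => (A c).mulVec v) v₀) j| /
        (∑ i, |Ad.mulVec (x.foldl (fun v c => (A c).mulVec v) v₀) i|) = 1) ∧
      (∀ z : List (Fin 2), z ≠ x →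
        |Ad.mulVec (z.foldl (fun v c => (A c).mulVec v) v₀) j| /
          (∑ i, |Ad.mulVec (z.foldl (fun v c => (A c).mulVec v) v₀) i|) ≤
            2 / (2 * (k : ℝ) + 1)) := by
  set E : ℝ := (eN x : ℝ) with hE
  set K : ℝ := (k : ℝ) with hK
  have hK1 : (1 : ℝ) ≤ K := by rw [hK]; exact_mod_cast hk
  refine ⟨Amat, Adm E K, ![1, 0, 0], 2, ?_, ?_, ?_, ?_, ?_⟩
  · intro σ c
    fin_cases c <;> simp [Amat, Fin.sum_univ_three] <;> ring
  · intro c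
    fin_cases c <;> simp [Adm, Fin.sum_univ_three] <;> ring
  · simp [Fin.sum_univ_three]
  · rw [hfold x, hAd]
    simp [Fin.sum_univ_three, hE]
  · intro z hz
    rw [hfold z, hAd]
    set i : ℝ := E - (eN z : ℝ) with hi
    have hne : eN z ≠ eN x := fun h => hz (eN_inj z x h)
    have habs : (1 : ℝ) ≤ |i| := by
      have h1 : (1 : ℤ) ≤ |(eN x : ℤ) - (eN z : ℤ)| := by
        rcases lt_or_gt_of_ne hne with h | h
        · rw [abs_of_nonneg (by omega)]; omega
        · rw [abs_of_nonpos (by omega)]; omega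
      have h2 : ((|(eN x : ℤ) - (eN z : ℤ)| : ℤ) : ℝ) = |i| := by
        push_cast [Int.cast_abs, hi, hE]; ring_nf
      linarith [h2 ▸ (by exact_mod_cast h1 : (1:ℝ) ≤ ((|(eN x : ℤ) - (eN z : ℤ)| : ℤ) : ℝ))]
    have hKpos : (0 : ℝ) ≤ K := by linarith
    have e1 : |(-(K * i))| = K * |i| := by
      rw [abs_neg, abs_mul, abs_of_nonneg hKpos]
    have e2 : |(K + 1) * i| = (K + 1) * |i| := by
      rw [abs_mul, abs_of_nonneg (by linarith)]
    simp only [Fin.sum_univ_three]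
    simp only [Matrix.cons_val_zero, Matrix.cons_val_one, Matrix.head_cons,
      Matrix.cons_val_two, Matrix.tail_cons]
    rw [e1, e2]
    have hb0 : 0 ≤ |1 - i| := abs_nonneg _
    have hb1 : |1 - i| ≤ 1 + |i| := by
      calc |1 - i| ≤ |(1:ℝ)| + |i| := abs_sub _ _
      _ = 1 + |i| := by rw [abs_one]
    have hden : 0 < K * |i| + (K + 1) * |i| + |1 - i| := by nlinarith
    rw [div_le_div_iff₀ hden (by linarith)]
    nlinarith
end

section
/- Let Y be a finite nonempty set of binary words with |Y| = n, and let x be a binary word with x ∉ Y. Then there exist real affine matrices A_0, A_1, A_$ of size 2^n × 2^n (each column summing to 1), an affine vector v₀ ∈ ℝ^{2^n}, and an accepting coordinate such that the resulting 2^n-state AfA accepts x with probability 1 and accepts every y ∈ Y with probability 0; that is, x is separated from every member of Y by a 2^{|Y|}-state AfA exactly. -/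
open Matrix Finset


open Matrix Finset

namespace Stmt17Aux

def enc : List (Fin 2) → ℕ := fun w => w.foldl (fun t c => 3 * t + (c.val + 1)) 0

lemma enc_append (w : List (Fin 2)) (c : Fin 2) :
    enc (w ++ [c]) = 3 * enc w + (c.val + 1) := by
  simp [enc, List.foldl_append]

lemma enc_injective : Function.Injective enc := by
  intro a
  induction a using List.reverseRecOn with
  | nil =>
    intro b h
    induction b using List.reverseRecOn with
    | nil => rfl
    | append_singleton w c _ =>
      rw [enc_append] at h
      have : enc ([] : List (Fin 2)) = 0 := rfl
      omega
  | append_singleton w c ih =>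
    intro b h
    induction b using List.reverseRecOn with
    | nil =>
      rw [enc_append] at h
      have : enc ([] : List (Fin 2)) = 0 := rfl
      omega
    | append_singleton w' c' _ =>
      rw [enc_append, enc_append] at h
      have hc := c.isLt
      have hc' := c'.isLt
      have h1 : c.val = c'.val := by omega
      have h2 : enc w = enc w' := by omega
      rw [ih h2, Fin.ext h1]

variable {n : ℕ}

noncomputable def dd (g : Fin n → List (Fin 2)) (i : Fin n) (w : List (Fin 2)) : ℝ :=
  (enc w : ℝ) - (enc (g i) : ℝ)

noncomputable def MM (g : Fin n → List (Fin 2)) (w : List (Fin 2)) (S : Finset (Fin n)) : ℝ :=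
  ∏ i ∈ S, dd g i w

noncomputable def EE (n : ℕ) : Finset (Fin n) ≃ Fin (2 ^ n) :=
  Fintype.equivFinOfCardEq (by simp)

noncomputable def VV (g : Fin n → List (Fin 2)) (w : List (Fin 2)) : Fin (2 ^ n) → ℝ :=
  fun j => if (EE n).symm j = ∅ then 1 - ∑ S ∈ Finset.univ.erase ∅, MM g w S
    else MM g w ((EE n).symm j)

noncomputable def bb (g : Fin n → List (Fin 2)) (c : Fin 2) (i : Fin n) : ℝ :=
  (c.val + 1 : ℝ) + 2 * (enc (g i) : ℝ)

noncomputable def RR (g : Fin n → List (Fin 2)) (c : Fin 2) (S : Finset (Fin n))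
    (j : Fin (2 ^ n)) : ℝ :=
  (∏ i ∈ S, bb g c i) +
    (if (EE n).symm j ⊆ S ∧ (EE n).symm j ≠ ∅ then
      3 ^ ((EE n).symm j).card * (∏ i ∈ S \ (EE n).symm j, bb g c i) else 0)

noncomputable def AA (g : Fin n → List (Fin 2)) (c : Fin 2) :
    Matrix (Fin (2 ^ n)) (Fin (2 ^ n)) ℝ :=
  Matrix.of fun r j =>
    if (EE n).symm r = ∅ then 1 - ∑ S ∈ Finset.univ.erase ∅, RR g c S j
    else RR g c ((EE n).symm r) j

lemma sumE (f : Finset (Fin n) → ℝ) :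
    ∑ j, (if (EE n).symm j = ∅ then 1 - ∑ S ∈ Finset.univ.erase ∅, f S
      else f ((EE n).symm j)) = 1 := by
  rw [← Equiv.sum_comp (EE n) (fun j => if (EE n).symm j = ∅ then
    1 - ∑ S ∈ Finset.univ.erase ∅, f S else f ((EE n).symm j))]
  simp only [Equiv.symm_apply_apply]
  rw [← Finset.sum_erase_add _ _ (Finset.mem_univ (∅ : Finset (Fin n)))]
  rw [Finset.sum_congr rfl (fun S hS => if_neg (Finset.mem_erase.mp hS).1)]
  simp

lemma sum_VV (g : Fin n → List (Fin 2)) (w : List (Fin 2)) : ∑ j, VV g w j = 1 :=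
  sumE (MM g w)

lemma VV_apply (g : Fin n → List (Fin 2)) (w : List (Fin 2)) {S : Finset (Fin n)}
    (hS : S ≠ ∅) : VV g w (EE n S) = MM g w S := by
  simp [VV, hS]

lemma colsum_AA (g : Fin n → List (Fin 2)) (c : Fin 2) (j : Fin (2 ^ n)) :
    ∑ r, AA g c r j = 1 :=
  sumE (fun S => RR g c S j)

lemma sum_mulVec {m : ℕ} (A : Matrix (Fin m) (Fin m) ℝ) (v : Fin m → ℝ)
    (h : ∀ j, ∑ r, A r j = 1) : ∑ r, A.mulVec v r = ∑ j, v j := by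
  unfold Matrix.mulVec dotProduct
  rw [Finset.sum_comm]
  simp only [← Finset.sum_mul, h, one_mul]

lemma dd_append (g : Fin n → List (Fin 2)) (i : Fin n) (w : List (Fin 2)) (c : Fin 2) :
    dd g i (w ++ [c]) = 3 * dd g i w + bb g c i := by
  simp only [dd, bb, enc_append]
  push_cast
  ring


lemma prod_expand (d b : Fin n → ℝ) (S : Finset (Fin n)) :
    (∏ i ∈ S, (3 * d i + b i)) =
      (∏ i ∈ S, b i) + ∑ T ∈ Finset.univ,
        (if T ⊆ S ∧ T ≠ ∅ then 3 ^ T.card * (∏ i ∈ S \ T, b i) * (∏ i ∈ T, d i) else 0) := by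
  have hfil : Finset.univ.filter (fun T : Finset (Fin n) => T ⊆ S ∧ T ≠ ∅)
      = S.powerset.erase ∅ := by
    ext T
    simp [Finset.mem_powerset, Finset.mem_erase, and_comm]
  rw [Finset.prod_add, ← Finset.sum_filter, hfil,
    ← Finset.sum_erase_add _ _ (Finset.empty_mem_powerset S)]
  simp only [Finset.prod_empty, Finset.sdiff_empty, one_mul]
  rw [add_comm]
  congr 1
  apply Finset.sum_congr rfl
  intro T _
  rw [Finset.prod_mul_distrib, Finset.prod_const]
  ring
lemma MM_append (g : Fin n → List (Fin 2)) (w : List (Fin 2)) (c : Fin 2)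
    (S : Finset (Fin n)) :
    MM g (w ++ [c]) S = (∏ i ∈ S, bb g c i) + ∑ T ∈ Finset.univ,
      (if T ⊆ S ∧ T ≠ ∅ then 3 ^ T.card * (∏ i ∈ S \ T, bb g c i) * MM g w T else 0) := by
  unfold MM
  rw [Finset.prod_congr rfl (fun i _ => dd_append g i w c)]
  exact prod_expand _ _ S

lemma key_step (g : Fin n → List (Fin 2)) (c : Fin 2) (w : List (Fin 2))
    {S : Finset (Fin n)} (hS : S ≠ ∅) :
    (AA g c).mulVec (VV g w) (EE n S) = MM g (w ++ [c]) S := by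
  have hrow : ∀ j, AA g c (EE n S) j = RR g c S j := by
    intro j
    simp [AA, hS]
  simp only [Matrix.mulVec, dotProduct, hrow, RR]
  simp only [add_mul]
  rw [Finset.sum_add_distrib, ← Finset.mul_sum, sum_VV, mul_one]
  rw [MM_append]
  congr 1
  rw [← Equiv.sum_comp (EE n) (fun j =>
    (if (EE n).symm j ⊆ S ∧ (EE n).symm j ≠ ∅ then
      3 ^ ((EE n).symm j).card * (∏ i ∈ S \ (EE n).symm j, bb g c i) else 0) * VV g w j)]
  simp only [Equiv.symm_apply_apply]
  apply Finset.sum_congr rfl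
  intro T _
  by_cases hT : T ⊆ S ∧ T ≠ ∅
  · rw [if_pos hT, if_pos hT, VV_apply g w hT.2]
  · rw [if_neg hT, if_neg hT, zero_mul]

lemma step (g : Fin n → List (Fin 2)) (c : Fin 2) (w : List (Fin 2)) :
    (AA g c).mulVec (VV g w) = VV g (w ++ [c]) := by
  have hsum : ∑ r, (AA g c).mulVec (VV g w) r = 1 := by
    rw [sum_mulVec _ _ (colsum_AA g c), sum_VV]
  funext j
  by_cases hj : (EE n).symm j = ∅
  · have hj' : j = EE n ∅ := by rw [← hj]; simp
    have h2 : ∑ r, (AA g c).mulVec (VV g w) r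
        = ∑ S : Finset (Fin n), (AA g c).mulVec (VV g w) (EE n S) :=
      (Equiv.sum_comp (EE n) _).symm
    rw [← Finset.sum_erase_add _ _ (Finset.mem_univ (∅ : Finset (Fin n)))] at h2
    rw [Finset.sum_congr rfl (fun S hS =>
      key_step g c w (Finset.mem_erase.mp hS).1)] at h2
    rw [hsum] at h2
    have hV : VV g (w ++ [c]) j = 1 - ∑ S ∈ Finset.univ.erase ∅, MM g (w ++ [c]) S := by
      simp [VV, hj]
    rw [hV, hj']
    linarith [h2]
  · have hj' : j = EE n ((EE n).symm j) := by simp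
    rw [hj', key_step g c w hj]
    rw [← hj']
    simp [VV, hj]

lemma fold (g : Fin n → List (Fin 2)) (w : List (Fin 2)) :
    List.foldl (fun v c => (AA g c).mulVec v) (VV g []) w = VV g w := by
  induction w using List.reverseRecOn with
  | nil => rfl
  | append_singleton w c ih =>
    rw [List.foldl_append, List.foldl_cons, List.foldl_nil, ih, step]
noncomputable def AD (n : ℕ) (α : ℝ) : Matrix (Fin (2 ^ n)) (Fin (2 ^ n)) ℝ :=
  Matrix.of fun r j =>
    if r = EE n ∅ then (if j = EE n Finset.univ then α else 0)
    else if r = EE n Finset.univ then (if j = EE n Finset.univ then 1 - α else 1) else 0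

lemma colsum_AD (hne : EE n ∅ ≠ EE n Finset.univ) (α : ℝ) (j : Fin (2 ^ n)) :
    ∑ r, AD n α r j = 1 := by
  have h : ∀ r : Fin (2 ^ n), AD n α r j =
      (if r = EE n ∅ then (if j = EE n Finset.univ then α else 0) else 0)
      + (if r = EE n Finset.univ then (if j = EE n Finset.univ then 1 - α else 1) else 0) := by
    intro r
    unfold AD
    by_cases h1 : r = EE n ∅
    · have h2 : r ≠ EE n Finset.univ := by rw [h1]; exact hne
      rw [Matrix.of_apply, if_pos h1, if_pos h1, if_neg h2, add_zero]
    · rw [Matrix.of_apply, if_neg h1, if_neg h1, zero_add]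
  rw [Finset.sum_congr rfl (fun r _ => h r), Finset.sum_add_distrib,
    Finset.sum_ite_eq' Finset.univ (EE n ∅), Finset.sum_ite_eq' Finset.univ (EE n Finset.univ)]
  simp only [Finset.mem_univ, if_true]
  by_cases hj : j = EE n Finset.univ <;> simp [hj]

lemma AD_mulVec_top (α : ℝ) (v : Fin (2 ^ n) → ℝ) :
    (AD n α).mulVec v (EE n ∅) = α * v (EE n Finset.univ) := by
  have h : ∀ j, AD n α (EE n ∅) j = if j = EE n Finset.univ then α else 0 := by
    intro j; unfold AD; rw [Matrix.of_apply, if_pos rfl]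
  simp only [Matrix.mulVec, dotProduct, h, ite_mul, zero_mul]
  rw [Finset.sum_ite_eq' Finset.univ (EE n Finset.univ)]
  simp

lemma AD_mulVec_bot (hne : EE n ∅ ≠ EE n Finset.univ) (α : ℝ) (v : Fin (2 ^ n) → ℝ) :
    (AD n α).mulVec v (EE n Finset.univ) = (∑ j, v j) - α * v (EE n Finset.univ) := by
  have h : ∀ j, AD n α (EE n Finset.univ) j = if j = EE n Finset.univ then 1 - α else 1 := by
    intro j; unfold AD; rw [Matrix.of_apply, if_neg (Ne.symm hne), if_pos rfl]
  simp only [Matrix.mulVec, dotProduct, h]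
  have h2 : ∀ j : Fin (2 ^ n), (if j = EE n Finset.univ then 1 - α else 1) * v j
      = v j + (if j = EE n Finset.univ then -(α * v j) else 0) := by
    intro j; split_ifs <;> ring
  rw [Finset.sum_congr rfl (fun j _ => h2 j), Finset.sum_add_distrib,
    Finset.sum_ite_eq' Finset.univ (EE n Finset.univ)]
  simp
  ring

lemma AD_mulVec_other (α : ℝ) (v : Fin (2 ^ n) → ℝ) {r : Fin (2 ^ n)}
    (h1 : r ≠ EE n ∅) (h2 : r ≠ EE n Finset.univ) :
    (AD n α).mulVec v r = 0 := by
  simp [Matrix.mulVec, dotProduct, AD, h1, h2]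

end Stmt17Aux

open Stmt17Aux in
/-- a binary word `x` outside a finite nonempty set `Y` of binary words
(with `|Y| = n`) is separated from every member of `Y` exactly by a `2^n`-state AfA:
`x` is accepted with probability 1 and every `y ∈ Y` with probability 0. -/
theorem stmt17 (Y : Finset (List (Fin 2))) (hY : Y.Nonempty) (n : ℕ) (hn : Y.card = n)
    (x : List (Fin 2)) (hx : x ∉ Y) :
    ∃ (A : Fin 2 → Matrix (Fin (2 ^ n)) (Fin (2 ^ n)) ℝ)
      (Ad : Matrix (Fin (2 ^ n)) (Fin (2 ^ n)) ℝ)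
      (v₀ : Fin (2 ^ n) → ℝ) (j : Fin (2 ^ n)),
      (∀ σ : Fin 2, ∀ c, ∑ r, A σ r c = 1) ∧
      (∀ c, ∑ r, Ad r c = 1) ∧
      (∑ i, v₀ i = 1) ∧
      (|Ad.mulVec (x.foldl (fun v c => (A c).mulVec v) v₀) j| /
        (∑ i, |Ad.mulVec (x.foldl (fun v c => (A c).mulVec v) v₀) i|) = 1) ∧
      (∀ y ∈ Y,
        |Ad.mulVec (y.foldl (fun v c => (A c).mulVec v) v₀) j| /
          (∑ i, |Ad.mulVec (y.foldl (fun v c => (A c).mulVec v) v₀) i|) = 0) := by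
  classical
  have hnpos : 0 < n := hn ▸ Finset.card_pos.mpr hY
  haveI : Nonempty (Fin n) := Fin.pos_iff_nonempty.mp hnpos
  set e : {y // y ∈ Y} ≃ Fin n := Y.equivFin.trans (finCongr hn) with he
  set g : Fin n → List (Fin 2) := fun i => (e.symm i : List (Fin 2)) with hg
  have hgY : ∀ i, g i ∈ Y := fun i => (e.symm i).2
  have hsurj : ∀ y ∈ Y, ∃ i, g i = y := fun y hy => ⟨e ⟨y, hy⟩, by simp [hg]⟩
  have hune : (Finset.univ : Finset (Fin n)) ≠ ∅ := Finset.univ_nonempty.ne_empty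
  have hne : EE n ∅ ≠ EE n Finset.univ := fun h => hune ((EE n).injective h).symm
  have hdx : ∀ i, dd g i x ≠ 0 := by
    intro i h
    have h1 : (enc x : ℝ) = (enc (g i) : ℝ) := by
      simpa [dd, sub_eq_zero] using h
    have h2 : enc x = enc (g i) := by exact_mod_cast h1
    exact hx (by rw [enc_injective h2]; exact hgY i)
  have hMx : MM g x Finset.univ ≠ 0 := by
    unfold MM
    exact Finset.prod_ne_zero_iff.mpr fun i _ => hdx i
  refine ⟨AA g, AD n (MM g x Finset.univ)⁻¹, VV g [], EE n ∅,
    fun c j => colsum_AA g c j, colsum_AD hne _, sum_VV g [], ?_, ?_⟩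
  · rw [fold g x]
    have hx1 : (AD n (MM g x Finset.univ)⁻¹).mulVec (VV g x)
        = fun r => if r = EE n ∅ then 1 else 0 := by
      funext r
      by_cases h1 : r = EE n ∅
      · rw [h1, AD_mulVec_top, VV_apply g x hune, inv_mul_cancel₀ hMx, if_pos rfl]
      · by_cases h2 : r = EE n Finset.univ
        · rw [h2, AD_mulVec_bot hne, sum_VV, VV_apply g x hune, inv_mul_cancel₀ hMx,
            if_neg (Ne.symm hne)]
          ring
        · rw [AD_mulVec_other _ _ h1 h2, if_neg h1]
    rw [hx1]
    beta_reduce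
    rw [if_pos rfl]
    have hden : ∑ i : Fin (2 ^ n), |if i = EE n ∅ then (1 : ℝ) else 0| = 1 := by
      have : ∀ i : Fin (2 ^ n), |if i = EE n ∅ then (1 : ℝ) else 0|
          = if i = EE n ∅ then (1 : ℝ) else 0 := by
        intro i; split_ifs <;> simp
      rw [Finset.sum_congr rfl (fun i _ => this i),
        Finset.sum_ite_eq' Finset.univ (EE n ∅)]
      simp
    rw [hden]
    norm_num
  · intro y hy
    rw [fold g y]
    obtain ⟨i0, hi0⟩ := hsurj y hy
    have hMy : MM g y Finset.univ = 0 :=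
      Finset.prod_eq_zero (Finset.mem_univ i0) (by simp [dd, hi0])
    rw [AD_mulVec_top, VV_apply g y hune, hMy, mul_zero]
    simp
end

section
/- Let X and Y be disjoint finite sets of binary words with 1 < |X| = m, and let ε > 0. Then there exist real affine matrices A_0, A_1, A_$ of size 2^m × 2^m (each column summing to 1), an affine vector v₀ ∈ ℝ^{2^m}, and an accepting coordinate such that the resulting 2^m-state AfA accepts every word of X with probability 1 and accepts every binary word not in X (in particular every word of Y) with probability at most ε; that is, X and Y are separated by a 2^{|X|}-state AfA with arbitrarily small one-sided bounded error. -/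
open Matrix

open Finset Polynomial

noncomputable def stp (c : Fin 2) (a : ℝ) : ℝ := a / 4 + ((c : ℕ) + 1) / 4

noncomputable def bco (c : Fin 2) : ℝ := ((c : ℕ) + 1) / 4

noncomputable def rF : List (Fin 2) → ℝ
  | [] => 0
  | c :: t => ((c : ℕ) + 1) / 4 + rF t / 4

lemma rF_nonneg (s : List (Fin 2)) : 0 ≤ rF s := by
  induction s with
  | nil => simp [rF]
  | cons c t ih => simp only [rF]; positivity

lemma rF_le (s : List (Fin 2)) : rF s ≤ 2 / 3 := by
  induction s with
  | nil => norm_num [rF]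
  | cons c t ih =>
    have hc : ((c : ℕ) : ℝ) ≤ 1 := by
      have := c.is_lt; exact_mod_cast Nat.lt_succ_iff.mp this
    simp only [rF]; nlinarith

lemma rF_cons_ge (c : Fin 2) (t : List (Fin 2)) : 1/4 ≤ rF (c :: t) := by
  have h2 := rF_nonneg t
  have hc : (0:ℝ) ≤ ((c : ℕ) : ℝ) := Nat.cast_nonneg _
  simp only [rF]; nlinarith

lemma rF_gap : ∀ s t : List (Fin 2), s ≠ t →
    (1/3) * (1/4 : ℝ) ^ (min s.length t.length + 1) ≤ |rF s - rF t| := by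
  intro s
  induction s with
  | nil =>
    intro t ht
    match t, ht with
    | c :: t', _ =>
      rw [show rF ([] : List (Fin 2)) = 0 from rfl, zero_sub, abs_neg,
        abs_of_nonneg (rF_nonneg _), List.length_nil, Nat.zero_min, zero_add, pow_one]
      have := rF_cons_ge c t'
      linarith
  | cons a s' ih =>
    intro t ht
    match t with
    | [] =>
      rw [show rF ([] : List (Fin 2)) = 0 from rfl, sub_zero,
        abs_of_nonneg (rF_nonneg _), List.length_nil, Nat.min_zero, zero_add, pow_one]
      have := rF_cons_ge a s'
      linarith
    | b :: t' =>
      by_cases hab : a = b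
      · subst hab
        have hst : s' ≠ t' := by intro h; exact ht (by rw [h])
        have hih := ih t' hst
        have habs : |rF (a :: s') - rF (a :: t')| = |rF s' - rF t'| / 4 := by
          show |((a:ℕ)+1)/4 + rF s' / 4 - (((a:ℕ)+1)/4 + rF t' / 4)| = _
          rw [show ((a:ℕ)+1)/4 + rF s' / 4 - (((a:ℕ)+1)/4 + rF t' / 4)
              = (rF s' - rF t') / 4 by ring, abs_div]
          norm_num
        rw [habs]
        simp only [List.length_cons]
        rw [show min (s'.length + 1) (t'.length + 1) = min s'.length t'.length + 1 by omega,
          pow_succ]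
        linarith
      · have hv : |((a : ℕ) : ℝ) - ((b : ℕ) : ℝ)| = 1 := by
          fin_cases a <;> fin_cases b <;> simp_all <;> norm_num
        have h1 := rF_nonneg s'
        have h2 := rF_nonneg t'
        have h3 := rF_le s'
        have h4 := rF_le t'
        have key : (1:ℝ)/12 ≤ |rF (a :: s') - rF (b :: t')| := by
          have hdiff : rF (a::s') - rF (b::t')
              = (((a:ℕ):ℝ) - ((b:ℕ):ℝ))/4 + (rF s' - rF t')/4 := by
            show ((a:ℕ)+1)/4 + rF s' / 4 - (((b:ℕ)+1)/4 + rF t' / 4) = _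
            ring
          rw [hdiff]
          set x := (((a:ℕ):ℝ) - ((b:ℕ):ℝ))/4
          set y := (rF s' - rF t')/4
          have htri : |x| ≤ |x + y| + |y| := by
            have h := abs_add_le (x + y) (-y)
            simpa using h
          have e1 : |x| = 1/4 := by rw [abs_div, hv]; norm_num
          have e2 : |y| ≤ (2/3)/4 := by
            rw [abs_div]
            have : |rF s' - rF t'| ≤ 2/3 := abs_sub_le_iff.2 ⟨by linarith, by linarith⟩
            rw [show |(4:ℝ)| = 4 by norm_num]; linarith
          linarith
        refine le_trans ?_ key
        have hp : (1/4:ℝ) ^ (min (a::s').length (b::t').length + 1) ≤ (1/4) ^ 1 := by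
          apply pow_le_pow_of_le_one (by norm_num) (by norm_num)
          omega
        rw [pow_one] at hp; linarith

noncomputable def fval (z : List (Fin 2)) : ℝ := z.foldl (fun a c => stp c a) 0

lemma fval_eq_rF (z : List (Fin 2)) : fval z = rF z.reverse := by
  have h : ∀ s : List (Fin 2), rF s = s.foldr (fun (c : Fin 2) (r : ℝ) => (((c:ℕ):ℝ)+1)/4 + r/4) (0:ℝ) := by
    intro s; induction s with
    | nil => rfl
    | cons c t ih => simp [rF, ih]
  rw [h, List.foldr_reverse]
  unfold fval
  congr 1
  funext x y
  simp [stp]; ring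

lemma fval_gap {z x : List (Fin 2)} (h : z ≠ x) :
    (1/3) * (1/4 : ℝ) ^ (x.length + 1) ≤ |fval z - fval x| := by
  rw [fval_eq_rF, fval_eq_rF]
  have hne : z.reverse ≠ x.reverse := fun hc => h (by simpa using congrArg List.reverse hc)
  refine le_trans ?_ (rF_gap _ _ hne)
  apply mul_le_mul_of_nonneg_left _ (by norm_num)
  apply pow_le_pow_of_le_one (by norm_num) (by norm_num)
  simp only [List.length_reverse]
  omega

/-! ### The affine machine -/

noncomputable def vEnt (m : ℕ) (a : ℝ) (i : ℕ) : ℝ :=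
  if i ≤ m then a ^ i
  else if i = m + 1 then 1 - ∑ k ∈ range (m+1), a ^ k
  else 0

noncomputable def vecA (m : ℕ) (a : ℝ) : Fin (2^m) → ℝ := fun i => vEnt m a i.val

noncomputable def trEnt (m : ℕ) (c : Fin 2) (i j : ℕ) : ℝ :=
  if j ≤ m then
    (if i ≤ m then (Nat.choose i j : ℝ) * (1/4)^j * (bco c)^(i - j)
     else if i = m + 1 then
       1 - ∑ k ∈ range (m+1), (Nat.choose k j : ℝ) * (1/4)^j * (bco c)^(k - j)
     else 0)
  else (if i = j then 1 else 0)

noncomputable def trA (m : ℕ) (c : Fin 2) : Matrix (Fin (2^m)) (Fin (2^m)) ℝ :=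
  Matrix.of fun i j => trEnt m c i.val j.val

noncomputable def fEnt (m : ℕ) (w : ℕ → ℝ) (i j : ℕ) : ℝ :=
  if i = 0 then (if j ≤ m then w j else 0)
  else if i = 1 then -(if j ≤ m then w j else 0)
  else if i = 2 then 1 else 0

noncomputable def fmat (m : ℕ) (w : ℕ → ℝ) : Matrix (Fin (2^m)) (Fin (2^m)) ℝ :=
  Matrix.of fun i j => fEnt m w i.val j.val

/-- truncate a `Fin n` sum of a ℕ-indexed function supported below `K`. -/
lemma sum_fin_trunc (n K : ℕ) (hK : K ≤ n) (g : ℕ → ℝ) (h0 : ∀ i, K ≤ i → g i = 0) :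
    ∑ i : Fin n, g i.val = ∑ i ∈ range K, g i := by
  rw [Fin.sum_univ_eq_sum_range]
  exact (Finset.sum_subset (Finset.range_subset_range.2 hK)
    (fun x _ hx => h0 x (by simpa using hx))).symm

lemma binom_row (m k : ℕ) (hk : k ≤ m) (c : Fin 2) (a : ℝ) :
    ∑ j ∈ range (m+1), (Nat.choose k j : ℝ) * (1/4)^j * (bco c)^(k-j) * a^j
      = (a/4 + bco c)^k := by
  rw [add_pow]
  rw [← Finset.sum_subset (Finset.range_subset_range.2 (by omega : k + 1 ≤ m + 1))
    (fun x _ hx => by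
      have : k < x := by simpa using hx
      simp [Nat.choose_eq_zero_of_lt this])]
  apply Finset.sum_congr rfl
  intro j hj
  rw [show a/4 = a * (1/4) by ring, mul_pow]
  ring

lemma trA_colsum (m : ℕ) (hm : m + 2 ≤ 2^m) (c : Fin 2) (j : Fin (2^m)) :
    ∑ i, trA m c i j = 1 := by
  have base : ∑ i, trA m c i j = ∑ i ∈ range (2^m), trEnt m c i j.val :=
    Fin.sum_univ_eq_sum_range (fun i => trEnt m c i j.val) (2^m)
  by_cases hj : j.val ≤ m
  · rw [base, ← Finset.sum_subset (Finset.range_subset_range.2 hm)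
      (fun x _ hx => by
        have hx2 : m + 2 ≤ x := by simpa using hx
        simp only [trEnt, if_pos hj]
        rw [if_neg (by omega), if_neg (by omega)]),
      Finset.sum_range_succ]
    have h1 : ∀ i ∈ range (m+1), trEnt m c i j.val
        = (Nat.choose i j.val : ℝ) * (1/4)^j.val * (bco c)^(i - j.val) := by
      intro i hi
      simp only [Finset.mem_range] at hi
      simp only [trEnt, if_pos hj, if_pos (by omega : i ≤ m)]
    rw [Finset.sum_congr rfl h1]
    simp only [trEnt, if_pos hj]
    rw [if_neg (by omega)]
    simp only [if_true]
    ring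
  · rw [show ∑ i, trA m c i j = ∑ i : Fin (2^m), trEnt m c i.val j.val from rfl]
    have h : ∀ i : Fin (2^m), trEnt m c i.val j.val = if i = j then 1 else 0 := by
      intro i
      simp only [trEnt, if_neg hj, Fin.val_eq_val]
    rw [Finset.sum_congr rfl (fun i _ => h i)]
    simp

lemma fmat_colsum (m : ℕ) (hm : 3 ≤ 2^m) (w : ℕ → ℝ) (j : Fin (2^m)) :
    ∑ i, fmat m w i j = 1 := by
  have base : ∑ i, fmat m w i j = ∑ i ∈ range (2^m), fEnt m w i j.val :=
    Fin.sum_univ_eq_sum_range (fun i => fEnt m w i j.val) (2^m)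
  rw [base, ← Finset.sum_subset (Finset.range_subset_range.2 hm)
    (fun x _ hx => by
      have hx2 : 3 ≤ x := by simpa using hx
      simp only [fEnt]
      rw [if_neg (by omega), if_neg (by omega), if_neg (by omega)])]
  simp [fEnt, Finset.sum_range_succ]

lemma sum_vecA (m : ℕ) (hm : m + 2 ≤ 2^m) (a : ℝ) : ∑ i, vecA m a i = 1 := by
  have base : ∑ i, vecA m a i = ∑ i ∈ range (2^m), vEnt m a i :=
    Fin.sum_univ_eq_sum_range (fun i => vEnt m a i) (2^m)
  rw [base, ← Finset.sum_subset (Finset.range_subset_range.2 hm) (fun x _ hx => by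
      have hx2 : m + 2 ≤ x := by simpa using hx
      simp only [vEnt]; rw [if_neg (by omega), if_neg (by omega)]),
    Finset.sum_range_succ]
  have h1 : ∀ j ∈ range (m+1), vEnt m a j = a ^ j := by
    intro j hj
    simp only [Finset.mem_range] at hj
    simp only [vEnt, if_pos (by omega : j ≤ m)]
  rw [Finset.sum_congr rfl h1]
  simp only [vEnt]
  rw [if_neg (by omega)]
  simp only [if_true]
  ring

lemma mulVec_trA (m : ℕ) (hm : m + 2 ≤ 2^m) (c : Fin 2) (a : ℝ) :
    (trA m c).mulVec (vecA m a) = vecA m (stp c a) := by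
  funext i
  have base : (trA m c).mulVec (vecA m a) i
      = ∑ j ∈ range (2^m), trEnt m c i.val j * vEnt m a j :=
    Fin.sum_univ_eq_sum_range (fun j => trEnt m c i.val j * vEnt m a j) (2^m)
  rw [base, ← Finset.sum_subset (Finset.range_subset_range.2 hm) (fun x _ hx => by
      have hx2 : m + 2 ≤ x := by simpa using hx
      have hz : vEnt m a x = 0 := by
        simp only [vEnt]; rw [if_neg (by omega), if_neg (by omega)]
      rw [hz, mul_zero]),
    Finset.sum_range_succ]
  have hv : ∀ j, j ≤ m → vEnt m a j = a ^ j := by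
    intro j hj; simp only [vEnt, if_pos hj]
  have hstp : stp c a = a/4 + bco c := rfl
  by_cases hi : i.val ≤ m
  · have h1 : ∀ j ∈ range (m+1), trEnt m c i.val j * vEnt m a j
        = (Nat.choose i.val j : ℝ) * (1/4)^j * (bco c)^(i.val - j) * a^j := by
      intro j hj
      simp only [Finset.mem_range] at hj
      rw [hv j (by omega)]
      simp only [trEnt, if_pos (by omega : j ≤ m), if_pos hi]
    rw [Finset.sum_congr rfl h1, binom_row m i.val hi c a]
    have h2 : trEnt m c i.val (m+1) = 0 := by
      simp only [trEnt]
      rw [if_neg (by omega), if_neg (by omega)]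
    rw [h2, zero_mul, add_zero]
    show _ = vEnt m (stp c a) i.val
    simp only [vEnt, if_pos hi, hstp]
  · by_cases hi2 : i.val = m + 1
    · have h1 : ∀ j ∈ range (m+1), trEnt m c i.val j * vEnt m a j
          = a^j - (∑ k ∈ range (m+1),
              (Nat.choose k j : ℝ) * (1/4)^j * (bco c)^(k-j) * a^j) := by
        intro j hj
        simp only [Finset.mem_range] at hj
        rw [hv j (by omega)]
        simp only [trEnt, if_pos (by omega : j ≤ m), hi2]
        rw [if_neg (by omega : ¬ (m + 1 ≤ m))]
        simp only [if_true]
        rw [sub_mul, one_mul, Finset.sum_mul]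
      rw [Finset.sum_congr rfl h1, Finset.sum_sub_distrib, Finset.sum_comm]
      have h2 : ∀ k ∈ range (m+1), (∑ j ∈ range (m+1),
          (Nat.choose k j : ℝ) * (1/4)^j * (bco c)^(k-j) * a^j) = (a/4 + bco c)^k := by
        intro k hk
        simp only [Finset.mem_range] at hk
        exact binom_row m k (by omega) c a
      rw [Finset.sum_congr rfl h2]
      have h3 : trEnt m c i.val (m+1) = 1 := by
        simp only [trEnt]
        rw [if_neg (by omega), if_pos hi2]
      have h4 : vEnt m a (m+1) = 1 - ∑ k ∈ range (m+1), a ^ k := by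
        simp only [vEnt]
        rw [if_neg (by omega)]
        simp only [if_true]
      rw [h3, h4, one_mul]
      show _ = vEnt m (stp c a) i.val
      simp only [vEnt, hi2]
      rw [if_neg (by omega)]
      simp only [if_true, hstp]
      ring
    · have h1 : ∀ j ∈ range (m+1), trEnt m c i.val j * vEnt m a j = 0 := by
        intro j hj
        simp only [Finset.mem_range] at hj
        simp only [trEnt, if_pos (by omega : j ≤ m), if_neg hi, if_neg hi2, zero_mul]
      rw [Finset.sum_congr rfl h1]
      have h2 : trEnt m c i.val (m+1) = 0 := by
        simp only [trEnt]
        rw [if_neg (by omega), if_neg hi2]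
      rw [h2, zero_mul, add_zero, Finset.sum_const_zero]
      show _ = vEnt m (stp c a) i.val
      simp only [vEnt]
      rw [if_neg hi, if_neg hi2]

lemma run_trA (m : ℕ) (hm : m + 2 ≤ 2^m) (z : List (Fin 2)) (a : ℝ) :
    z.foldl (fun v c => (trA m c).mulVec v) (vecA m a)
      = vecA m (z.foldl (fun a c => stp c a) a) := by
  induction z generalizing a with
  | nil => rfl
  | cons c t ih =>
    simp only [List.foldl_cons]
    rw [mulVec_trA m hm c a, ih]

lemma mulVec_fmat (m : ℕ) (hm : m + 2 ≤ 2^m) (w : ℕ → ℝ) (a : ℝ) (i : Fin (2^m)) :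
    (fmat m w).mulVec (vecA m a) i =
      if i.val = 0 then (∑ k ∈ range (m+1), w k * a^k)
      else if i.val = 1 then -(∑ k ∈ range (m+1), w k * a^k)
      else if i.val = 2 then 1 else 0 := by
  have base : (fmat m w).mulVec (vecA m a) i
      = ∑ j ∈ range (2^m), fEnt m w i.val j * vEnt m a j :=
    Fin.sum_univ_eq_sum_range (fun j => fEnt m w i.val j * vEnt m a j) (2^m)
  rw [base, ← Finset.sum_subset (Finset.range_subset_range.2 hm) (fun x _ hx => by
      have hx2 : m + 2 ≤ x := by simpa using hx
      have hz : vEnt m a x = 0 := by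
        simp only [vEnt]; rw [if_neg (by omega), if_neg (by omega)]
      rw [hz, mul_zero]),
    Finset.sum_range_succ]
  have hv : ∀ j, j ≤ m → vEnt m a j = a ^ j := by
    intro j hj; simp only [vEnt, if_pos hj]
  by_cases h0 : i.val = 0
  · rw [if_pos h0]
    have h1 : ∀ j ∈ range (m+1), fEnt m w i.val j * vEnt m a j = w j * a^j := by
      intro j hj
      simp only [Finset.mem_range] at hj
      rw [hv j (by omega)]
      simp only [fEnt, h0]
      norm_num [if_pos (by omega : j ≤ m)]
    have h2 : fEnt m w i.val (m+1) = 0 := by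
      simp only [fEnt, h0]
      norm_num
    rw [Finset.sum_congr rfl h1, h2, zero_mul, add_zero]
  · rw [if_neg h0]
    by_cases h1c : i.val = 1
    · rw [if_pos h1c]
      have h1 : ∀ j ∈ range (m+1), fEnt m w i.val j * vEnt m a j = -(w j * a^j) := by
        intro j hj
        simp only [Finset.mem_range] at hj
        rw [hv j (by omega)]
        simp only [fEnt, h1c]
        norm_num [if_pos (by omega : j ≤ m)]
      have h2 : fEnt m w i.val (m+1) = 0 := by
        simp only [fEnt, h1c]
        norm_num
      rw [Finset.sum_congr rfl h1, h2, zero_mul, add_zero, Finset.sum_neg_distrib]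
    · rw [if_neg h1c]
      by_cases h2c : i.val = 2
      · rw [if_pos h2c]
        have h1 : ∀ j ∈ range (m+1), fEnt m w i.val j * vEnt m a j = a^j := by
          intro j hj
          simp only [Finset.mem_range] at hj
          rw [hv j (by omega)]
          simp only [fEnt, h2c]
          norm_num
        have h2 : fEnt m w i.val (m+1) * vEnt m a (m+1)
            = 1 - ∑ k ∈ range (m+1), a ^ k := by
          simp only [fEnt, h2c, vEnt]
          rw [if_neg (by omega : ¬ (m + 1 ≤ m))]
          norm_num
        rw [Finset.sum_congr rfl h1, h2]
        ring
      · rw [if_neg h2c]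
        have h1 : ∀ j ∈ range (m+2), fEnt m w i.val j * vEnt m a j = 0 := by
          intro j hj
          simp only [fEnt, if_neg h0, if_neg h1c, if_neg h2c, zero_mul]
        rw [← Finset.sum_range_succ]
        rw [Finset.sum_congr rfl h1, Finset.sum_const_zero]

lemma abs_sum_fmat (m : ℕ) (hm : m + 2 ≤ 2^m) (h3 : 3 ≤ 2^m) (w : ℕ → ℝ) (a : ℝ) :
    ∑ i, |(fmat m w).mulVec (vecA m a) i|
      = 2 * |∑ k ∈ range (m+1), w k * a^k| + 1 := by
  set S := ∑ k ∈ range (m+1), w k * a^k with hS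
  have key : ∀ i : Fin (2^m), |(fmat m w).mulVec (vecA m a) i|
      = (fun n : ℕ => if n = 0 then |S| else if n = 1 then |S| else if n = 2 then 1 else 0) i.val := by
    intro i
    rw [mulVec_fmat m hm w a i]
    by_cases h0 : i.val = 0
    · simp [h0, hS]
    by_cases h1 : i.val = 1
    · simp [h0, h1, hS]
    by_cases h2 : i.val = 2
    · simp [h0, h1, h2]
    · simp [h0, h1, h2]
  rw [Finset.sum_congr rfl (fun i _ => key i),
    Fin.sum_univ_eq_sum_range
      (fun n : ℕ => if n = 0 then |S| else if n = 1 then |S| else if n = 2 then 1 else 0) (2^m),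
    ← Finset.sum_subset (Finset.range_subset_range.2 h3)
      (fun x _ hx => by
        have hx2 : 3 ≤ x := by simpa using hx
        rw [if_neg (by omega), if_neg (by omega), if_neg (by omega)])]
  norm_num [Finset.sum_range_succ]
  ring

lemma two_le_pow (m : ℕ) (h : 2 ≤ m) : m + 2 ≤ 2^m := by
  induction m with
  | zero => omega
  | succ n ih =>
    rcases Nat.lt_or_ge n 2 with hn | hn
    · interval_cases n
      · omega
      · norm_num
    · have := ih hn
      rw [pow_succ]
      omega

/-- two disjoint finite sets `X, Y` of binary words with `|X| = m > 1`
are separated by a `2^m`-state AfA with arbitrarily small one-sided error: each word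
of `X` is accepted with probability 1 and every binary word outside `X` (in particular
every word of `Y`) with probability at most `ε`. -/
theorem stmt18 (X Y : Finset (List (Fin 2))) (hdisj : Disjoint X Y)
    (m : ℕ) (hm : X.card = m) (hm1 : 1 < m) (ε : ℝ) (hε : 0 < ε) :
    ∃ (A : Fin 2 → Matrix (Fin (2 ^ m)) (Fin (2 ^ m)) ℝ)
      (Ad : Matrix (Fin (2 ^ m)) (Fin (2 ^ m)) ℝ)
      (v₀ : Fin (2 ^ m) → ℝ) (j : Fin (2 ^ m)),
      (∀ σ : Fin 2, ∀ c, ∑ r, A σ r c = 1) ∧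
      (∀ c, ∑ r, Ad r c = 1) ∧
      (∑ i, v₀ i = 1) ∧
      (∀ x ∈ X,
        |Ad.mulVec (x.foldl (fun v c => (A c).mulVec v) v₀) j| /
          (∑ i, |Ad.mulVec (x.foldl (fun v c => (A c).mulVec v) v₀) i|) = 1) ∧
      (∀ z : List (Fin 2), z ∉ X →
        |Ad.mulVec (z.foldl (fun v c => (A c).mulVec v) v₀) j| /
          (∑ i, |Ad.mulVec (z.foldl (fun v c => (A c).mulVec v) v₀) i|) ≤ ε) := by
  have hmm : m + 2 ≤ 2^m := two_le_pow m (by omega)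
  -- the polynomial vanishing on the encodings of X
  set p : Polynomial ℝ := ∏ x ∈ X, (Polynomial.X - Polynomial.C (fval x)) with hp
  have hdeg : p.natDegree = m := by
    rw [hp, Polynomial.natDegree_prod _ _ (fun x _ => Polynomial.X_sub_C_ne_zero _)]
    simp [Polynomial.natDegree_X_sub_C, hm]
  have heval : ∀ a : ℝ, p.eval a = ∏ x ∈ X, (a - fval x) := by
    intro a; rw [hp]; simp [Polynomial.eval_prod]
  -- the gap
  set D : ℝ := ∏ x ∈ X, ((1/3) * (1/4:ℝ)^(x.length+1)) with hD
  have hDpos : 0 < D := Finset.prod_pos (fun x _ => by positivity)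
  set N : ℝ := 1/(ε * D) with hN
  have hNpos : 0 < N := by rw [hN]; positivity
  set w : ℕ → ℝ := fun k => N * p.coeff k with hw
  -- the sum S is N * eval
  have hSum : ∀ a : ℝ, ∑ k ∈ range (m+1), w k * a^k = N * p.eval a := by
    intro a
    rw [Polynomial.eval_eq_sum_range' (by omega : p.natDegree < m + 1) a, Finset.mul_sum]
    exact Finset.sum_congr rfl (fun k _ => by rw [hw]; ring)
  refine ⟨trA m, fmat m w, vecA m 0, ⟨2, by omega⟩, ?_, ?_, ?_, ?_, ?_⟩
  · exact fun σ c => trA_colsum m hmm σ c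
  · exact fun c => fmat_colsum m (by omega) w c
  · exact sum_vecA m hmm 0
  · intro x hx
    rw [run_trA m hmm x 0]
    have hfv : x.foldl (fun a c => stp c a) 0 = fval x := rfl
    rw [hfv]
    have hq : p.eval (fval x) = 0 := by
      rw [heval]
      exact Finset.prod_eq_zero hx (by ring)
    have hnum : (fmat m w).mulVec (vecA m (fval x)) ⟨2, by omega⟩ = 1 := by
      rw [mulVec_fmat m hmm w (fval x) ⟨2, by omega⟩]
      norm_num
    rw [hnum, abs_sum_fmat m hmm (by omega) w (fval x), hSum, hq]
    norm_num
  · intro z hz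
    rw [run_trA m hmm z 0]
    have hfv : z.foldl (fun a c => stp c a) 0 = fval z := rfl
    rw [hfv]
    have hqD : D ≤ |p.eval (fval z)| := by
      rw [heval, Finset.abs_prod, hD]
      apply Finset.prod_le_prod (fun x _ => by positivity)
      intro x hxX
      exact fval_gap (fun hzx => hz (hzx ▸ hxX))
    have hnum : (fmat m w).mulVec (vecA m (fval z)) ⟨2, by omega⟩ = 1 := by
      rw [mulVec_fmat m hmm w (fval z) ⟨2, by omega⟩]
      norm_num
    rw [hnum, abs_sum_fmat m hmm (by omega) w (fval z), hSum]
    have habs : |N * p.eval (fval z)| = N * |p.eval (fval z)| := by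
      rw [abs_mul, abs_of_pos hNpos]
    rw [habs]
    have hND : N * D = 1/ε := by
      rw [hN]; field_simp
    have hlow : 1/ε ≤ N * |p.eval (fval z)| := by
      rw [← hND]
      exact mul_le_mul_of_nonneg_left hqD (le_of_lt hNpos)
    have hdenpos : 0 < 2 * (N * |p.eval (fval z)|) + 1 := by positivity
    rw [abs_one, div_le_iff₀ hdenpos]
    have : 1 ≤ ε * (2 * (1/ε) + 1) := by
      field_simp
      linarith
    nlinarith [mul_le_mul_of_nonneg_left hlow (le_of_lt hε)]
end

section
/- Let X be a finite nonempty set of words over {a, b} with |X| = m. Then there exist unitary matrices U_a, U_b ∈ U(2^m, ℂ), a unit vector u₀ ∈ ℂ^{2^m}, and a set S of accepting coordinates such that for every word z over {a, b}: the acceptance probability of z is 0 if z ∈ X, and is strictly positive if z ∉ X. Consequently, for any finite set Y of words disjoint from X with |X| ≤ |Y|, the languages X and Y are separated by a nondeterministic MCQFA with 2^{|X|} states. -/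
open Matrix

namespace Stmt19

abbrev GI := GaussianInt

instance : Fact (Nat.Prime 5) := ⟨by norm_num⟩

def Mg : Fin 2 → Matrix (Fin 2) (Fin 2) GI
  | 0 => !![⟨1,2⟩, ⟨0,0⟩; ⟨0,0⟩, ⟨1,-2⟩]
  | 1 => !![⟨1,0⟩, ⟨2,0⟩; ⟨-2,0⟩, ⟨1,0⟩]

def Ng : Fin 2 → Matrix (Fin 2) (Fin 2) GI
  | 0 => !![⟨1,-2⟩, ⟨0,0⟩; ⟨0,0⟩, ⟨1,2⟩]
  | 1 => !![⟨1,0⟩, ⟨-2,0⟩; ⟨2,0⟩, ⟨1,0⟩]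

lemma Ng_mul_Mg (σ : Fin 2) : Ng σ * Mg σ = (5 : GI) • 1 := by
  fin_cases σ <;> decide

def wv' : List (Fin 2) → Fin 2 → GI
  | [] => ![⟨1,0⟩, ⟨1,0⟩]
  | σ :: t => (Mg σ).mulVec (wv' t)

def φg : GI →+* ZMod 5 := Zsqrtd.lift ⟨2, by decide⟩
def ψg : GI →+* ZMod 5 := Zsqrtd.lift ⟨3, by decide⟩

lemma φg_apply (x : GI) : φg x = (x.re : ZMod 5) + (x.im : ZMod 5) * 2 := rfl
lemma ψg_apply (x : GI) : ψg x = (x.re : ZMod 5) + (x.im : ZMod 5) * 3 := rfl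

lemma ψg_eq_φg_star (x : GI) : ψg x = φg (star x) := by
  obtain ⟨a, b⟩ := x
  simp [φg_apply, ψg_apply, Zsqrtd.star_mk]
  rw [show (3 : ZMod 5) = -2 by decide]
  ring


@[simp] lemma φgA : φg ⟨1,2⟩ = 0 := by decide
@[simp] lemma φgB : φg ⟨1,-2⟩ = 2 := by decide
@[simp] lemma φgC : φg ⟨2,0⟩ = 2 := by decide
@[simp] lemma φgD : φg ⟨-2,0⟩ = 3 := by decide
@[simp] lemma φgE : φg ⟨1,0⟩ = 1 := by decide
@[simp] lemma φgF : φg ⟨0,0⟩ = 0 := by decide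
@[simp] lemma ψgA : ψg ⟨1,2⟩ = 2 := by decide
@[simp] lemma ψgB : ψg ⟨1,-2⟩ = 0 := by decide
@[simp] lemma ψgC : ψg ⟨2,0⟩ = 2 := by decide
@[simp] lemma ψgD : ψg ⟨-2,0⟩ = 3 := by decide
@[simp] lemma ψgE : ψg ⟨1,0⟩ = 1 := by decide
@[simp] lemma ψgF : ψg ⟨0,0⟩ = 0 := by decide

def Uv : Option (Fin 2) → Fin 2 → ZMod 5
  | none => ![1,1]
  | some 0 => ![0,1]
  | some 1 => ![1,3]

def Uv' : Option (Fin 2) → Fin 2 → ZMod 5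
  | none => ![1,1]
  | some 0 => ![1,0]
  | some 1 => ![1,3]

lemma map_mulVec2 (f : GI →+* ZMod 5) (M : Matrix (Fin 2) (Fin 2) GI) (v : Fin 2 → GI) (j : Fin 2) :
    f (M.mulVec v j) = f (M j 0) * f (v 0) + f (M j 1) * f (v 1) := by
  simp [Matrix.mulVec, dotProduct, Fin.sum_univ_two, _root_.map_add, _root_.map_mul]

lemma h5z : (5 : ZMod 5) = 0 := by decide

lemma keyf (f : GI →+* ZMod 5) (σ : Fin 2) {t : List (Fin 2)} {u : Fin 2 → ZMod 5}
    (hw : ∀ j, f (wv' t j) = u j) (j : Fin 2) :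
    f (wv' (σ :: t) j) = f (Mg σ j 0) * u 0 + f (Mg σ j 1) * u 1 := by
  rw [show wv' (σ :: t) = (Mg σ).mulVec (wv' t) from rfl, map_mulVec2, hw 0, hw 1]

lemma K1φ : ∀ z : List (Fin 2), ∃ c : ZMod 5, c ≠ 0 ∧ ∀ j, φg (wv' z j) = c * Uv z.head? j
  | [] => ⟨1, by decide, by intro j; fin_cases j <;> simp [wv', Uv]⟩
  | σ :: t => by
      obtain ⟨c, hc, hw⟩ := K1φ t
      have hmul : ∀ d : ZMod 5, d ≠ 0 → d * c ≠ 0 := fun d hd => mul_ne_zero hd hc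
      rcases ht : t.head? with _ | τ
      · have hw' : ∀ j, φg (wv' t j) = (c * Uv none ·) j := fun j => by rw [hw j, ht]
        have hσ : σ = 0 ∨ σ = 1 := by fin_cases σ <;> simp
        rcases hσ with rfl | rfl
        · refine ⟨2 * c, hmul 2 (by decide), fun j => ?_⟩
          rw [keyf φg 0 hw']
          fin_cases j <;> simp [Mg, Uv] <;> (first | ring1 | (linear_combination c * h5z) | (linear_combination (-c) * h5z))
        · refine ⟨3 * c, hmul 3 (by decide), fun j => ?_⟩
          rw [keyf φg 1 hw']
          fin_cases j <;> simp [Mg, Uv] <;> (first | ring1 | (linear_combination c * h5z) | (linear_combination (-c) * h5z))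
      · have hw' : ∀ j, φg (wv' t j) = (c * Uv (some τ) ·) j := fun j => by rw [hw j, ht]
        have hσ : σ = 0 ∨ σ = 1 := by fin_cases σ <;> simp
        have hτ : τ = 0 ∨ τ = 1 := by fin_cases τ <;> simp
        rcases hσ with rfl | rfl <;> rcases hτ with rfl | rfl
        · refine ⟨2 * c, hmul 2 (by decide), fun j => ?_⟩
          rw [keyf φg 0 hw']
          fin_cases j <;> simp [Mg, Uv] <;> (first | ring1 | (linear_combination c * h5z) | (linear_combination (-c) * h5z))
        · refine ⟨c, hc, fun j => ?_⟩
          rw [keyf φg 0 hw']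
          fin_cases j <;> simp [Mg, Uv] <;> (first | ring1 | (linear_combination c * h5z) | (linear_combination (-c) * h5z))
        · refine ⟨2 * c, hmul 2 (by decide), fun j => ?_⟩
          rw [keyf φg 1 hw']
          fin_cases j <;> simp [Mg, Uv] <;> (first | ring1 | (linear_combination c * h5z) | (linear_combination (-c) * h5z))
        · refine ⟨2 * c, hmul 2 (by decide), fun j => ?_⟩
          rw [keyf φg 1 hw']
          fin_cases j <;> simp [Mg, Uv] <;> (first | ring1 | (linear_combination c * h5z) | (linear_combination (-c) * h5z))

lemma K1ψ : ∀ z : List (Fin 2), ∃ c : ZMod 5, c ≠ 0 ∧ ∀ j, ψg (wv' z j) = c * Uv' z.head? j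
  | [] => ⟨1, by decide, by intro j; fin_cases j <;> simp [wv', Uv']⟩
  | σ :: t => by
      obtain ⟨c, hc, hw⟩ := K1ψ t
      have hmul : ∀ d : ZMod 5, d ≠ 0 → d * c ≠ 0 := fun d hd => mul_ne_zero hd hc
      rcases ht : t.head? with _ | τ
      · have hw' : ∀ j, ψg (wv' t j) = (c * Uv' none ·) j := fun j => by rw [hw j, ht]
        have hσ : σ = 0 ∨ σ = 1 := by fin_cases σ <;> simp
        rcases hσ with rfl | rfl
        · refine ⟨2 * c, hmul 2 (by decide), fun j => ?_⟩
          rw [keyf ψg 0 hw']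
          fin_cases j <;> simp [Mg, Uv'] <;> (first | ring1 | (linear_combination c * h5z) | (linear_combination (-c) * h5z))
        · refine ⟨3 * c, hmul 3 (by decide), fun j => ?_⟩
          rw [keyf ψg 1 hw']
          fin_cases j <;> simp [Mg, Uv'] <;> (first | ring1 | (linear_combination c * h5z) | (linear_combination (-c) * h5z))
      · have hw' : ∀ j, ψg (wv' t j) = (c * Uv' (some τ) ·) j := fun j => by rw [hw j, ht]
        have hσ : σ = 0 ∨ σ = 1 := by fin_cases σ <;> simp
        have hτ : τ = 0 ∨ τ = 1 := by fin_cases τ <;> simp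
        rcases hσ with rfl | rfl <;> rcases hτ with rfl | rfl
        · refine ⟨2 * c, hmul 2 (by decide), fun j => ?_⟩
          rw [keyf ψg 0 hw']
          fin_cases j <;> simp [Mg, Uv'] <;> (first | ring1 | (linear_combination c * h5z) | (linear_combination (-c) * h5z))
        · refine ⟨2 * c, hmul 2 (by decide), fun j => ?_⟩
          rw [keyf ψg 0 hw']
          fin_cases j <;> simp [Mg, Uv'] <;> (first | ring1 | (linear_combination c * h5z) | (linear_combination (-c) * h5z))
        · refine ⟨c, hc, fun j => ?_⟩
          rw [keyf ψg 1 hw']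
          fin_cases j <;> simp [Mg, Uv'] <;> (first | ring1 | (linear_combination c * h5z) | (linear_combination (-c) * h5z))
        · refine ⟨2 * c, hmul 2 (by decide), fun j => ?_⟩
          rw [keyf ψg 1 hw']
          fin_cases j <;> simp [Mg, Uv'] <;> (first | ring1 | (linear_combination c * h5z) | (linear_combination (-c) * h5z))


lemma Uv1_ne : ∀ o : Option (Fin 2), Uv o 1 ≠ 0 := by
  rintro (_ | τ)
  · decide
  · fin_cases τ <;> decide

lemma Uv'0_ne : ∀ o : Option (Fin 2), Uv' o 0 ≠ 0 := by
  rintro (_ | τ)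
  · decide
  · fin_cases τ <;> decide

lemma exφ (w : List (Fin 2)) : φg (wv' w 1) ≠ 0 := by
  obtain ⟨c, hc, hw⟩ := K1φ w
  rw [hw 1]
  exact mul_ne_zero hc (Uv1_ne _)

lemma exψ (w : List (Fin 2)) : ψg (wv' w 0) ≠ 0 := by
  obtain ⟨c, hc, hw⟩ := K1ψ w
  rw [hw 0]
  exact mul_ne_zero hc (Uv'0_ne _)

lemma wv1_ne (w : List (Fin 2)) : wv' w 1 ≠ 0 := by
  intro h
  exact exφ w (by rw [h, map_zero])

lemma coprime_hom {α β : GI} (hco : IsCoprime α β) (f : GI →+* ZMod 5)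
    (h1 : f α = 0) (h2 : f β = 0) : False := by
  obtain ⟨u, v, huv⟩ := hco
  have := congrArg f huv
  rw [_root_.map_add, _root_.map_mul, _root_.map_mul, _root_.map_one, h1, h2, mul_zero, mul_zero, add_zero] at this
  exact (by decide : (0 : ZMod 5) ≠ 1) this

lemma homs_ne {z x : List (Fin 2)} {α β : GI} (hco : IsCoprime α β)
    (h : ∀ j, α * wv' z j = β * wv' x j) :
    φg α ≠ 0 ∧ φg β ≠ 0 ∧ ψg α ≠ 0 ∧ ψg β ≠ 0 := by
  have hφ := congrArg φg (h 1)
  rw [_root_.map_mul, _root_.map_mul] at hφ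
  have hψ := congrArg ψg (h 0)
  rw [_root_.map_mul, _root_.map_mul] at hψ
  refine ⟨?_, ?_, ?_, ?_⟩ <;> intro h0
  · rw [h0, zero_mul] at hφ
    rcases mul_eq_zero.1 hφ.symm with h2 | h2
    · exact coprime_hom hco φg h0 h2
    · exact exφ x h2
  · rw [h0, zero_mul] at hφ
    rcases mul_eq_zero.1 hφ with h2 | h2
    · exact coprime_hom hco φg h2 h0
    · exact exφ z h2
  · rw [h0, zero_mul] at hψ
    rcases mul_eq_zero.1 hψ.symm with h2 | h2
    · exact coprime_hom hco ψg h0 h2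
    · exact exψ x h2
  · rw [h0, zero_mul] at hψ
    rcases mul_eq_zero.1 hψ with h2 | h2
    · exact coprime_hom hco ψg h2 h0
    · exact exψ z h2

lemma nv_cons (σ : Fin 2) (t : List (Fin 2)) :
    (wv' (σ :: t) 0).norm + (wv' (σ :: t) 1).norm
      = 5 * ((wv' t 0).norm + (wv' t 1).norm) := by
  show ((Mg σ).mulVec (wv' t) 0).norm + ((Mg σ).mulVec (wv' t) 1).norm = _
  have hσ : σ = 0 ∨ σ = 1 := by fin_cases σ <;> simp
  rcases hσ with rfl | rfl <;>
  · simp [Matrix.mulVec, dotProduct, Fin.sum_univ_two, Mg]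
    generalize wv' t 0 = a
    generalize wv' t 1 = b
    obtain ⟨a1, a2⟩ := a
    obtain ⟨b1, b2⟩ := b
    simp [Zsqrtd.norm_def, Zsqrtd.re_mul, Zsqrtd.im_mul, Zsqrtd.re_add, Zsqrtd.im_add]
    ring

lemma nv_eq : ∀ z : List (Fin 2),
    (wv' z 0).norm + (wv' z 1).norm = 2 * 5 ^ z.length
  | [] => by simp [wv']; decide
  | σ :: t => by
      rw [nv_cons, nv_eq t, List.length_cons]
      ring

lemma peel (σ : Fin 2) (γ : GI) (w : List (Fin 2)) :
    (Ng σ).mulVec (fun i => γ * wv' (σ :: w) i) = fun k => 5 * (γ * wv' w k) := by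
  have h1 : (fun i => γ * wv' (σ :: w) i) = γ • ((Mg σ).mulVec (wv' w)) := rfl
  rw [h1, Matrix.mulVec_smul, Matrix.mulVec_mulVec, Ng_mul_Mg,
    Matrix.smul_mulVec, Matrix.one_mulVec]
  funext k
  simp [Pi.smul_apply, smul_eq_mul]
  ring

lemma main : ∀ (z x : List (Fin 2)) (α β : GI), IsCoprime α β →
    (∀ j, α * wv' z j = β * wv' x j) → z = x
  | [], [], _, _, _, _ => rfl
  | [], τ :: x', α, β, hco, h => by
      exfalso
      have hnorm : α.norm * (2 * 5 ^ (List.length ([] : List (Fin 2))))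
          = β.norm * (2 * 5 ^ (τ :: x').length) := by
        rw [← nv_eq, ← nv_eq]
        have h0 := congrArg Zsqrtd.norm (h 0)
        have h1 := congrArg Zsqrtd.norm (h 1)
        rw [Zsqrtd.norm_mul, Zsqrtd.norm_mul] at h0 h1
        linear_combination h0 + h1
      have hdvd : (5 : ℤ) ∣ α.norm := by
        refine ⟨β.norm * 5 ^ x'.length, ?_⟩
        simp only [List.length_nil, List.length_cons, pow_zero, pow_succ] at hnorm ⊢
        linarith [hnorm]
      have h5 : φg α * ψg α = 0 := by
        rw [ψg_eq_φg_star, ← _root_.map_mul, ← Zsqrtd.norm_eq_mul_conj, map_intCast]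
        exact (ZMod.intCast_zmod_eq_zero_iff_dvd _ 5).2 hdvd
      rcases mul_eq_zero.1 h5 with h0 | h0
      · exact (homs_ne hco h).1 h0
      · exact (homs_ne hco h).2.2.1 h0
  | σ :: z', [], α, β, hco, h => by
      exfalso
      have hnorm : α.norm * (2 * 5 ^ (σ :: z').length)
          = β.norm * (2 * 5 ^ (List.length ([] : List (Fin 2)))) := by
        rw [← nv_eq, ← nv_eq]
        have h0 := congrArg Zsqrtd.norm (h 0)
        have h1 := congrArg Zsqrtd.norm (h 1)
        rw [Zsqrtd.norm_mul, Zsqrtd.norm_mul] at h0 h1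
        linear_combination h0 + h1
      have hdvd : (5 : ℤ) ∣ β.norm := by
        refine ⟨α.norm * 5 ^ z'.length, ?_⟩
        simp only [List.length_nil, List.length_cons, pow_zero, pow_succ] at hnorm ⊢
        linarith [hnorm]
      have h5 : φg β * ψg β = 0 := by
        rw [ψg_eq_φg_star, ← _root_.map_mul, ← Zsqrtd.norm_eq_mul_conj, map_intCast]
        exact (ZMod.intCast_zmod_eq_zero_iff_dvd _ 5).2 hdvd
      rcases mul_eq_zero.1 h5 with h0 | h0
      · exact (homs_ne hco h).2.1 h0
      · exact (homs_ne hco h).2.2.2 h0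
  | σ :: z', τ :: x', α, β, hco, h => by
      obtain ⟨hφα, hφβ, hψα, hψβ⟩ := homs_ne hco h
      obtain ⟨cz, hcz, hwz⟩ := K1φ (σ :: z')
      obtain ⟨cx, hcx, hwx⟩ := K1φ (τ :: x')
      simp only [List.head?_cons] at hwz hwx
      have h0 := congrArg φg (h 0)
      rw [_root_.map_mul, _root_.map_mul, hwz 0, hwx 0] at h0
      have hστ : σ = τ := by
        have hσ : σ = 0 ∨ σ = 1 := by fin_cases σ <;> simp
        have hτ : τ = 0 ∨ τ = 1 := by fin_cases τ <;> simp
        rcases hσ with rfl | rfl <;> rcases hτ with rfl | rfl <;> [rfl; skip; skip; rfl]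
        · exfalso
          rw [show Uv (some 0) 0 = 0 from rfl, show Uv (some 1) 0 = 1 from rfl] at h0
          rw [mul_zero, mul_zero] at h0
          exact mul_ne_zero hφβ (mul_ne_zero hcx one_ne_zero) h0.symm
        · exfalso
          rw [show Uv (some 0) 0 = 0 from rfl, show Uv (some 1) 0 = 1 from rfl] at h0
          rw [mul_zero, mul_zero] at h0
          exact mul_ne_zero hφα (mul_ne_zero hcz one_ne_zero) h0
      subst hστ
      have hfun : (fun i => α * wv' (σ :: z') i) = (fun i => β * wv' (σ :: x') i) :=
        funext h
      have h' : ∀ j, α * wv' z' j = β * wv' x' j := by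
        intro j
        apply mul_left_cancel₀ (show (5 : GI) ≠ 0 by decide)
        have := congrFun (congrArg (Ng σ).mulVec hfun) j
        rwa [peel, peel] at this
      rw [main z' x' α β hco h']

lemma det_key {z x : List (Fin 2)}
    (h : wv' x 0 * wv' z 1 - wv' x 1 * wv' z 0 = 0) : z = x := by
  have hαne : wv' x 1 ≠ 0 := wv1_ne x
  have hβne : wv' z 1 ≠ 0 := wv1_ne z
  have hrel : ∀ j, wv' x 1 * wv' z j = wv' z 1 * wv' x j := by
    intro j
    have hj : j = 0 ∨ j = 1 := by fin_cases j <;> simp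
    rcases hj with rfl | rfl
    · linear_combination -h
    · ring
  set g := EuclideanDomain.gcd (wv' x 1) (wv' z 1) with hg
  have hgne : g ≠ 0 := fun h0 =>
    hαne (eq_zero_of_zero_dvd (h0 ▸ EuclideanDomain.gcd_dvd_left (wv' x 1) (wv' z 1)))
  obtain ⟨α', hα'⟩ := EuclideanDomain.gcd_dvd_left (wv' x 1) (wv' z 1)
  obtain ⟨β', hβ'⟩ := EuclideanDomain.gcd_dvd_right (wv' x 1) (wv' z 1)
  rw [← hg] at hα' hβ'
  set A := EuclideanDomain.gcdA (wv' x 1) (wv' z 1) with hA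
  set B := EuclideanDomain.gcdB (wv' x 1) (wv' z 1) with hB
  have hb : g = wv' x 1 * A + wv' z 1 * B := EuclideanDomain.gcd_eq_gcd_ab _ _
  have hco : IsCoprime α' β' := by
    refine ⟨A, B, ?_⟩
    apply mul_left_cancel₀ hgne
    linear_combination (-1 : GI) * hb - A * hα' - B * hβ'
  have hrel' : ∀ j, α' * wv' z j = β' * wv' x j := by
    intro j
    apply mul_left_cancel₀ hgne
    have hthis := hrel j
    rw [hα', hβ'] at hthis
    linear_combination hthis
  exact main z x α' β' hco hrel'


noncomputable section
open Complex

def Mc (τ : Fin 2) : Matrix (Fin 2) (Fin 2) ℂ := (Mg τ).map GaussianInt.toComplex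

def c5 : ℂ := ((Real.sqrt 5)⁻¹ : ℝ)
def c2c : ℂ := ((Real.sqrt 2)⁻¹ : ℝ)

def vx (x : List (Fin 2)) (j : Fin 2) : ℂ := GaussianInt.toComplex (wv' x.reverse j)

def nr (x : List (Fin 2)) : ℝ := Real.sqrt (normSq (vx x 0) + normSq (vx x 1))

def Va (x : List (Fin 2)) : ℂ := -(vx x 1) / (nr x : ℂ)
def Vb (x : List (Fin 2)) : ℂ := vx x 0 / (nr x : ℂ)

def Vm (x : List (Fin 2)) : Matrix (Fin 2) (Fin 2) ℂ :=
  !![Va x, Vb x; -(starRingEnd ℂ) (Vb x), (starRingEnd ℂ) (Va x)]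

def Gm (x : List (Fin 2)) (τ : Fin 2) : Matrix (Fin 2) (Fin 2) ℂ :=
  c5 • (Vm x * Mc τ * (Vm x)ᴴ)

def u1 : Fin 2 → ℂ := fun j => GaussianInt.toComplex (wv' [] j)

def y0 (x : List (Fin 2)) : Fin 2 → ℂ := (Vm x).mulVec (c2c • u1)

def detg (x z : List (Fin 2)) : GI :=
  wv' x.reverse 0 * wv' z.reverse 1 - wv' x.reverse 1 * wv' z.reverse 0

lemma vx1_ne (x : List (Fin 2)) : vx x 1 ≠ 0 := by
  simp only [vx, ne_eq, GaussianInt.toComplex_eq_zero]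
  exact wv1_ne _

lemma nr_pos (x : List (Fin 2)) : 0 < nr x := by
  apply Real.sqrt_pos.2
  have h1 : 0 < normSq (vx x 1) := normSq_pos.2 (vx1_ne x)
  have h0 : 0 ≤ normSq (vx x 0) := normSq_nonneg _
  linarith

lemma nr_sq (x : List (Fin 2)) : nr x * nr x = normSq (vx x 0) + normSq (vx x 1) := by
  apply Real.mul_self_sqrt
  have h1 : 0 < normSq (vx x 1) := normSq_pos.2 (vx1_ne x)
  have h0 : 0 ≤ normSq (vx x 0) := normSq_nonneg _
  linarith

lemma habs (x : List (Fin 2)) : normSq (Va x) + normSq (Vb x) = 1 := by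
  have hnr := nr_pos x
  have hsq := nr_sq x
  rw [Va, Vb]
  rw [map_div₀, map_div₀, normSq_neg, normSq_ofReal]
  rw [← add_div]
  rw [div_eq_one_iff_eq (by nlinarith)]
  linarith

lemma unitary2 (a b : ℂ) (h : normSq a + normSq b = 1) :
    (!![a, b; -(starRingEnd ℂ) b, (starRingEnd ℂ) a])ᴴ * !![a, b; -(starRingEnd ℂ) b, (starRingEnd ℂ) a] = 1
    ∧ !![a, b; -(starRingEnd ℂ) b, (starRingEnd ℂ) a] * (!![a, b; -(starRingEnd ℂ) b, (starRingEnd ℂ) a])ᴴ = 1 := by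
  have h' : (normSq a : ℂ) + (normSq b : ℂ) = 1 := by exact_mod_cast congrArg (fun r : ℝ => (r : ℂ)) h
  have ha := Complex.mul_conj a
  have hb := Complex.mul_conj b
  constructor <;>
  · ext i j
    fin_cases i <;> fin_cases j <;>
      simp [Matrix.mul_apply, Fin.sum_univ_two, Matrix.conjTranspose_apply, Matrix.one_apply] <;>
      (first | ring1 | (linear_combination ha + hb + h') | (linear_combination ha + hb - h'))

lemma Vm_unitary (x : List (Fin 2)) :
    (Vm x)ᴴ * Vm x = 1 ∧ Vm x * (Vm x)ᴴ = 1 := unitary2 _ _ (habs x)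

lemma Mc_herm (τ : Fin 2) : (Mc τ)ᴴ * Mc τ = (5 : ℂ) • 1 := by
  have hτ : τ = 0 ∨ τ = 1 := by fin_cases τ <;> simp
  rcases hτ with rfl | rfl <;>
  · ext i j
    fin_cases i <;> fin_cases j <;>
      simp [Mc, Mg, Matrix.mul_apply, Fin.sum_univ_two, Matrix.conjTranspose_apply,
        Matrix.one_apply, GaussianInt.toComplex_def', Complex.ext_iff] <;>
      norm_num

lemma c5_sq : c5 * c5 * 5 = 1 := by
  rw [c5, ← Complex.ofReal_mul]
  norm_cast
  rw [← mul_inv]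
  rw [Real.mul_self_sqrt (by norm_num)]
  norm_num

lemma Gm_unitary (x : List (Fin 2)) (τ : Fin 2) :
    Gm x τ ∈ Matrix.unitaryGroup (Fin 2) ℂ := by
  rw [Matrix.mem_unitaryGroup_iff']
  show ((Gm x τ)ᴴ : Matrix (Fin 2) (Fin 2) ℂ) * Gm x τ = 1
  rw [Gm, Matrix.conjTranspose_smul]
  rw [show star c5 = c5 from by rw [Complex.star_def, c5, Complex.conj_ofReal]]
  rw [Matrix.smul_mul, Matrix.mul_smul, smul_smul]
  have hB : (Vm x * Mc τ * (Vm x)ᴴ)ᴴ * (Vm x * Mc τ * (Vm x)ᴴ) = (5 : ℂ) • 1 := by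
    rw [Matrix.conjTranspose_mul, Matrix.conjTranspose_mul, Matrix.conjTranspose_conjTranspose]
    simp only [Matrix.mul_assoc]
    rw [← Matrix.mul_assoc ((Vm x)ᴴ) (Vm x), (Vm_unitary x).1, Matrix.one_mul,
      ← Matrix.mul_assoc ((Mc τ)ᴴ) (Mc τ), Mc_herm, Matrix.smul_mul, Matrix.one_mul,
      Matrix.mul_smul, (Vm_unitary x).2]
  rw [hB, smul_smul, c5_sq, one_smul]


lemma foldl_smul (F : Fin 2 → Matrix (Fin 2) (Fin 2) ℂ) (a : ℂ) :
    ∀ (z : List (Fin 2)) (v : Fin 2 → ℂ),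
      z.foldl (fun w c => (F c).mulVec w) (a • v)
        = a • z.foldl (fun w c => (F c).mulVec w) v
  | [], v => rfl
  | σ :: t, v => by
      simp only [List.foldl_cons]
      rw [Matrix.mulVec_smul, foldl_smul F a t]

lemma foldl_G (x : List (Fin 2)) :
    ∀ (z : List (Fin 2)) (v : Fin 2 → ℂ),
      z.foldl (fun w c => (Gm x c).mulVec w) ((Vm x).mulVec v)
        = (c5 ^ z.length) • (Vm x).mulVec (z.foldl (fun w c => (Mc c).mulVec w) v)
  | [], v => by simp
  | σ :: t, v => by
      simp only [List.foldl_cons]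
      have step : (Gm x σ).mulVec ((Vm x).mulVec v) = c5 • (Vm x).mulVec ((Mc σ).mulVec v) := by
        rw [Gm, Matrix.smul_mulVec, Matrix.mulVec_mulVec, Matrix.mul_assoc,
          Matrix.mul_assoc, (Vm_unitary x).1, Matrix.mul_one, ← Matrix.mulVec_mulVec]
      rw [step, foldl_smul, foldl_G x t, smul_smul, List.length_cons, pow_succ]
      ring_nf

lemma foldl_Mc :
    ∀ (z : List (Fin 2)) (v : Fin 2 → GI),
      z.foldl (fun w c => (Mc c).mulVec w) (fun j => GaussianInt.toComplex (v j))
        = fun j => GaussianInt.toComplex ((z.foldl (fun w c => (Mg c).mulVec w) v) j)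
  | [], v => rfl
  | σ :: t, v => by
      simp only [List.foldl_cons]
      have step : (Mc σ).mulVec (fun j => GaussianInt.toComplex (v j))
          = fun j => GaussianInt.toComplex (((Mg σ).mulVec v) j) := by
        funext j
        simp [Mc, Matrix.mulVec, dotProduct, Fin.sum_univ_two, Matrix.map_apply,
          _root_.map_add, _root_.map_mul]
      rw [step, foldl_Mc t]

lemma foldl_Mg :
    ∀ z : List (Fin 2),
      z.foldl (fun w c => (Mg c).mulVec w) (wv' []) = wv' z.reverse := by
  intro z
  induction z using List.reverseRecOn with
  | nil => rfl
  | append_singleton t σ ih =>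
      rw [List.foldl_append, List.foldl_cons, List.foldl_nil, List.reverse_append]
      simp only [List.reverse_cons, List.reverse_nil, List.nil_append, List.singleton_append]
      rw [ih]
      rfl

lemma gadget_final (x z : List (Fin 2)) :
    (z.foldl (fun v c => (Gm x c).mulVec v) (y0 x)) 0
      = c5 ^ z.length * c2c * (GaussianInt.toComplex (detg x z) / (nr x : ℂ)) := by
  rw [y0]
  rw [show (Vm x).mulVec (c2c • u1) = c2c • (Vm x).mulVec u1 from Matrix.mulVec_smul _ _ _]
  rw [foldl_smul, foldl_G]
  have hu1 : u1 = fun j => GaussianInt.toComplex (wv' [] j) := rfl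
  rw [hu1, foldl_Mc, foldl_Mg]
  simp only [Pi.smul_apply, smul_eq_mul]
  have hmv : ((Vm x).mulVec (fun j => GaussianInt.toComplex (wv' z.reverse j))) 0
      = (vx x 0 * GaussianInt.toComplex (wv' z.reverse 1)
        - vx x 1 * GaussianInt.toComplex (wv' z.reverse 0)) / (nr x : ℂ) := by
    simp only [Matrix.mulVec, dotProduct, Fin.sum_univ_two, Vm,
      Matrix.cons_val', Matrix.cons_val_zero, Matrix.empty_val',
      Matrix.cons_val_fin_one, Matrix.cons_val_one, Matrix.head_cons, Va, Vb, Matrix.of_apply]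
    field_simp
    ring
  rw [hmv]
  rw [detg, _root_.map_sub, _root_.map_mul, _root_.map_mul]
  show c2c * (c5 ^ z.length * _) = _
  rw [vx, vx]
  ring

lemma detg_eq_zero_iff (x z : List (Fin 2)) : detg x z = 0 ↔ z = x := by
  constructor
  · intro h
    have := det_key (z := z.reverse) (x := x.reverse) h
    exact List.reverse_injective this
  · rintro rfl
    rw [detg]; ring

lemma gadget_final_eq_zero_iff (x z : List (Fin 2)) :
    (z.foldl (fun v c => (Gm x c).mulVec v) (y0 x)) 0 = 0 ↔ z = x := by
  rw [gadget_final]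
  have h5 : (c5 : ℂ) ≠ 0 := by
    rw [c5]
    simp only [ne_eq, Complex.ofReal_eq_zero, inv_eq_zero]
    positivity
  have h2 : (c2c : ℂ) ≠ 0 := by
    rw [c2c]
    simp only [ne_eq, Complex.ofReal_eq_zero, inv_eq_zero]
    positivity
  have hnr : ((nr x : ℝ) : ℂ) ≠ 0 := by
    simp only [ne_eq, Complex.ofReal_eq_zero]
    exact (nr_pos x).ne'
  rw [mul_eq_zero, mul_eq_zero, div_eq_zero_iff]
  simp only [pow_eq_zero_iff', GaussianInt.toComplex_eq_zero]
  constructor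
  · rintro ((⟨h, -⟩ | h) | (h | h))
    · exact absurd h h5
    · exact absurd h h2
    · exact (detg_eq_zero_iff x z).1 h
    · exact absurd h hnr
  · intro h
    right; left
    exact (detg_eq_zero_iff x z).2 h

lemma sum_abs_sq_mulVec {V : Matrix (Fin 2) (Fin 2) ℂ} (hV : Vᴴ * V = 1) (u : Fin 2 → ℂ) :
    ∑ j, ‖(V.mulVec u) j‖ ^ 2 = ∑ j, ‖u j‖ ^ 2 := by
  have key : ∀ w : Fin 2 → ℂ, (∑ j, (‖w j‖ ^ 2 : ℂ)) = star w ⬝ᵥ w := by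
    intro w
    simp only [dotProduct, Pi.star_apply]
    congr 1
    funext j
    rw [show star (w j) = (starRingEnd ℂ) (w j) from rfl,
      ← Complex.normSq_eq_conj_mul_self, ← Complex.sq_norm]
    norm_cast
  have h1 : (∑ j, (‖(V.mulVec u) j‖ ^ 2 : ℂ)) = ∑ j, (‖u j‖ ^ 2 : ℂ) := by
    rw [key, key, Matrix.star_mulVec, dotProduct_mulVec, Matrix.vecMul_vecMul, hV,
      Matrix.vecMul_one]
  exact_mod_cast h1

lemma y0_norm (x : List (Fin 2)) : ∑ j, ‖(y0 x) j‖ ^ 2 = 1 := by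
  rw [y0, sum_abs_sq_mulVec (Vm_unitary x).1]
  have : ∀ j : Fin 2, (c2c • u1) j = c2c := by
    intro j
    have hj : j = 0 ∨ j = 1 := by fin_cases j <;> simp
    rcases hj with rfl | rfl <;> simp [u1, wv', GaussianInt.toComplex_def']
  rw [Fin.sum_univ_two, this 0, this 1]
  rw [c2c]
  rw [Complex.norm_real, Real.norm_eq_abs]
  rw [_root_.abs_of_nonneg (by positivity)]
  have h2 : (Real.sqrt 2)⁻¹ ^ 2 = 2⁻¹ := by
    rw [sq, ← mul_inv, Real.mul_self_sqrt (by norm_num)]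
  rw [h2]
  norm_num

def eqv (m : ℕ) : (Fin m → Fin 2) ≃ Fin (2 ^ m) := finFunctionFinEquiv

def bigU {m : ℕ} (xs : Fin m → List (Fin 2)) (τ : Fin 2) :
    Matrix (Fin (2 ^ m)) (Fin (2 ^ m)) ℂ :=
  fun p q => ∏ k, Gm (xs k) τ ((eqv m).symm p k) ((eqv m).symm q k)

def bigu0 {m : ℕ} (xs : Fin m → List (Fin 2)) : Fin (2 ^ m) → ℂ :=
  fun p => ∏ k, y0 (xs k) ((eqv m).symm p k)

lemma swap_sum_prod {R : Type*} [CommSemiring R] {m : ℕ} (F : Fin m → Fin 2 → R) :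
    ∑ h : Fin m → Fin 2, ∏ k, F k (h k) = ∏ k, ∑ j, F k j := by
  rw [Finset.prod_univ_sum]
  rw [Fintype.piFinset_univ]

lemma mulVec_prod {m : ℕ} (A : Fin m → Matrix (Fin 2) (Fin 2) ℂ) (v : Fin m → Fin 2 → ℂ)
    (p : Fin (2 ^ m)) :
    (Matrix.mulVec (fun p q => ∏ k, A k ((eqv m).symm p k) ((eqv m).symm q k))
        (fun q => ∏ k, v k ((eqv m).symm q k))) p
      = ∏ k, ((A k).mulVec (v k)) ((eqv m).symm p k) := by
  show (∑ q, (∏ k, A k ((eqv m).symm p k) ((eqv m).symm q k)) * ∏ k, v k ((eqv m).symm q k))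
      = ∏ k, ((A k).mulVec (v k)) ((eqv m).symm p k)
  rw [← Equiv.sum_comp (eqv m)
    (fun q => (∏ k, A k ((eqv m).symm p k) ((eqv m).symm q k)) * ∏ k, v k ((eqv m).symm q k))]
  simp only [Equiv.symm_apply_apply]
  have h1 : ∀ h : Fin m → Fin 2,
      (∏ k, A k ((eqv m).symm p k) (h k)) * ∏ k, v k (h k)
        = ∏ k, (A k ((eqv m).symm p k) (h k) * v k (h k)) :=
    fun h => (Finset.prod_mul_distrib).symm
  rw [Finset.sum_congr rfl fun h _ => h1 h]
  rw [swap_sum_prod (fun k j => A k ((eqv m).symm p k) j * v k j)]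
  congr 1

lemma prod_one_entry {m : ℕ} (f g : Fin m → Fin 2) :
    (∏ k, (1 : Matrix (Fin 2) (Fin 2) ℂ) (f k) (g k)) = if f = g then 1 else 0 := by
  by_cases hfg : f = g
  · subst hfg
    simp [Matrix.one_apply]
  · rw [if_neg hfg]
    obtain ⟨k, hk⟩ := Function.ne_iff.1 hfg
    exact Finset.prod_eq_zero (Finset.mem_univ k) (Matrix.one_apply_ne hk)

lemma bigU_unitary {m : ℕ} (xs : Fin m → List (Fin 2)) (τ : Fin 2) :
    bigU xs τ ∈ Matrix.unitaryGroup (Fin (2 ^ m)) ℂ := by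
  rw [Matrix.mem_unitaryGroup_iff']
  ext p q
  rw [Matrix.mul_apply]
  have hG : ∀ k, star (Gm (xs k) τ) * Gm (xs k) τ = 1 := fun k =>
    (Matrix.mem_unitaryGroup_iff').1 (Gm_unitary (xs k) τ)
  have h1 : ∀ r, star (bigU xs τ) p r * bigU xs τ r q
      = ∏ k, (star (Gm (xs k) τ ((eqv m).symm r k) ((eqv m).symm p k))
          * Gm (xs k) τ ((eqv m).symm r k) ((eqv m).symm q k)) := by
    intro r
    rw [Matrix.star_apply]
    show star (∏ k, Gm (xs k) τ ((eqv m).symm r k) ((eqv m).symm p k)) * _ = _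
    rw [star_prod,
      show bigU xs τ r q = ∏ k, Gm (xs k) τ ((eqv m).symm r k) ((eqv m).symm q k) from rfl,
      ← Finset.prod_mul_distrib]
  rw [Finset.sum_congr rfl fun r _ => h1 r]
  rw [← Equiv.sum_comp (eqv m) (fun r => ∏ k,
    (star (Gm (xs k) τ ((eqv m).symm r k) ((eqv m).symm p k))
      * Gm (xs k) τ ((eqv m).symm r k) ((eqv m).symm q k)))]
  simp only [Equiv.symm_apply_apply]
  rw [swap_sum_prod (fun k j => star (Gm (xs k) τ j ((eqv m).symm p k))
    * Gm (xs k) τ j ((eqv m).symm q k))]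
  have h2 : ∀ k, (∑ j, star (Gm (xs k) τ j ((eqv m).symm p k))
      * Gm (xs k) τ j ((eqv m).symm q k))
        = (1 : Matrix (Fin 2) (Fin 2) ℂ) ((eqv m).symm p k) ((eqv m).symm q k) := by
    intro k
    rw [← hG k, Matrix.mul_apply]
    simp [Matrix.star_apply]
  rw [Finset.prod_congr rfl fun k _ => h2 k, prod_one_entry]
  have : ((eqv m).symm p = (eqv m).symm q) ↔ p = q := (eqv m).symm.injective.eq_iff
  by_cases hpq : p = q
  · subst hpq
    simp [Matrix.one_apply]
  · rw [if_neg (fun hc => hpq (this.1 hc)), Matrix.one_apply_ne hpq]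

lemma big_foldl {m : ℕ} (xs : Fin m → List (Fin 2)) :
    ∀ (z : List (Fin 2)) (v : Fin m → Fin 2 → ℂ),
      z.foldl (fun w c => (bigU xs c).mulVec w) (fun p => ∏ k, v k ((eqv m).symm p k))
        = fun p => ∏ k, (z.foldl (fun w c => (Gm (xs k) c).mulVec w) (v k)) ((eqv m).symm p k)
  | [], _ => rfl
  | σ :: t, v => by
      simp only [List.foldl_cons]
      have step : (bigU xs σ).mulVec (fun p => ∏ k, v k ((eqv m).symm p k))
          = fun p => ∏ k, ((Gm (xs k) σ).mulVec (v k)) ((eqv m).symm p k) := by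
        funext p
        exact mulVec_prod (fun k => Gm (xs k) σ) v p
      rw [step, big_foldl xs t]

lemma bigu0_norm {m : ℕ} (xs : Fin m → List (Fin 2)) :
    ∑ p, ‖bigu0 xs p‖ ^ 2 = 1 := by
  rw [← Equiv.sum_comp (eqv m) (fun p => ‖bigu0 xs p‖ ^ 2)]
  have h1 : ∀ h : Fin m → Fin 2, ‖bigu0 xs (eqv m h)‖ ^ 2
      = ∏ k, ‖y0 (xs k) (h k)‖ ^ 2 := by
    intro h
    rw [show bigu0 xs (eqv m h) = ∏ k, y0 (xs k) ((eqv m).symm (eqv m h) k) from rfl]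
    simp only [Equiv.symm_apply_apply]
    rw [norm_prod, Finset.prod_pow]
  rw [Finset.sum_congr rfl fun h _ => h1 h]
  rw [swap_sum_prod (fun k j => ‖y0 (xs k) j‖ ^ 2)]
  rw [Finset.prod_congr rfl fun k _ => y0_norm (xs k)]
  simp

end

end Stmt19

/-- for a finite nonempty set `X` of words over `{a, b}` (here `Fin 2`)
with `|X| = m`, there is a `2^m`-state nondeterministic MCQFA accepting exactly the
words outside `X` with nonzero probability; hence `X` is separated from any disjoint
finite set `Y` with `|X| ≤ |Y|` by a nondeterministic MCQFA with `2^{|X|}` states. -/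
theorem stmt19 (X : Finset (List (Fin 2))) (hX : X.Nonempty) (m : ℕ) (hm : X.card = m) :
    ∃ (U : Fin 2 → Matrix (Fin (2 ^ m)) (Fin (2 ^ m)) ℂ)
      (u₀ : Fin (2 ^ m) → ℂ) (S : Finset (Fin (2 ^ m))),
      (∀ τ : Fin 2, U τ ∈ Matrix.unitaryGroup (Fin (2 ^ m)) ℂ) ∧
      (∑ j, ‖u₀ j‖ ^ 2 = 1) ∧
      (∀ z : List (Fin 2),
        (z ∈ X →
          ∑ j ∈ S, ‖(z.foldl (fun v c => (U c).mulVec v) u₀) j‖ ^ 2 = 0) ∧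
        (z ∉ X →
          0 < ∑ j ∈ S, ‖(z.foldl (fun v c => (U c).mulVec v) u₀) j‖ ^ 2)) ∧
      (∀ Y : Finset (List (Fin 2)), Disjoint X Y → X.card ≤ Y.card →
        ∀ y ∈ Y,
          0 < ∑ j ∈ S, ‖(y.foldl (fun v c => (U c).mulVec v) u₀) j‖ ^ 2) := by
  classical
  have hcard : Fintype.card ↥X = m := by rw [Fintype.card_coe, hm]
  let κ : ↥X ≃ Fin m := Fintype.equivFinOfCardEq hcard
  let xs : Fin m → List (Fin 2) := fun k => (κ.symm k : List (Fin 2))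
  have hmem : ∀ z : List (Fin 2), z ∈ X ↔ ∃ k, xs k = z := by
    intro z
    constructor
    · intro hz
      exact ⟨κ ⟨z, hz⟩, by simp [xs]⟩
    · rintro ⟨k, rfl⟩
      exact (κ.symm k).2
  have hfinal : ∀ z : List (Fin 2),
      (z.foldl (fun v c => (Stmt19.bigU xs c).mulVec v) (Stmt19.bigu0 xs)) (Stmt19.eqv m fun _ => 0)
        = ∏ k, (z.foldl (fun v c => (Stmt19.Gm (xs k) c).mulVec v) (Stmt19.y0 (xs k))) 0 := by
    intro z
    rw [show Stmt19.bigu0 xs = (fun p => ∏ k, Stmt19.y0 (xs k) ((Stmt19.eqv m).symm p k)) from rfl,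
      Stmt19.big_foldl xs z (fun k => Stmt19.y0 (xs k))]
    simp only [Equiv.symm_apply_apply]
  have hkey : ∀ z : List (Fin 2),
      (z ∈ X → ∑ j ∈ ({Stmt19.eqv m fun _ => 0} : Finset (Fin (2 ^ m))),
          ‖(z.foldl (fun v c => (Stmt19.bigU xs c).mulVec v) (Stmt19.bigu0 xs)) j‖ ^ 2 = 0) ∧
      (z ∉ X → 0 < ∑ j ∈ ({Stmt19.eqv m fun _ => 0} : Finset (Fin (2 ^ m))),
          ‖(z.foldl (fun v c => (Stmt19.bigU xs c).mulVec v) (Stmt19.bigu0 xs)) j‖ ^ 2) := by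
    intro z
    rw [Finset.sum_singleton, hfinal z]
    constructor
    · intro hz
      obtain ⟨k0, hk0⟩ := (hmem z).1 hz
      rw [Finset.prod_eq_zero (Finset.mem_univ k0)
        ((Stmt19.gadget_final_eq_zero_iff (xs k0) z).2 hk0.symm)]
      simp
    · intro hz
      have hne : (∏ k, (z.foldl (fun v c => (Stmt19.Gm (xs k) c).mulVec v) (Stmt19.y0 (xs k))) 0) ≠ 0 := by
        rw [Finset.prod_ne_zero_iff]
        intro k _ h0
        exact hz ((hmem z).2 ⟨k, ((Stmt19.gadget_final_eq_zero_iff (xs k) z).1 h0).symm⟩)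
      exact pow_pos (norm_pos_iff.2 hne) 2
  refine ⟨Stmt19.bigU xs, Stmt19.bigu0 xs, {Stmt19.eqv m fun _ => 0},
    fun τ => Stmt19.bigU_unitary xs τ, Stmt19.bigu0_norm xs, hkey, ?_⟩
  intro Y hdisj _ y hy
  exact (hkey y).2 (Finset.disjoint_right.1 hdisj hy)
end
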